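/- arXiv:1710.03796 — 3 statements merged into one kernel-verified Lean document; each statement's English description precedes it below -/
import Mathlib

section
/- Let {𝔘_α}_{α∈I} be a countable numerable open cover of X with subordinate partition of unity {λ_α}. Define X_𝔘 as the quotient of the disjoint union over strictly increasing sequences α = (i₀ < ... < i_k) in I of 𝔘_{i₀...i_k} × Δ^k by the face identifications (x; t₀,...,0,...,t_k) ∼ (x; t₀,...,t̂_j,...,t_k). Then the map λ : X → X_𝔘 sending x ∈ 𝔘_{i₀} ∩ ... ∩ 𝔘_{i_k} (where i₀ < ... < i_k are the indices with λ_{i_j}(x) > 0) to (x; λ_{i₀}(x),...,λ_{i_k}(x)) is a homotopy equivalence, with homotopy inverse the canonical projection p : X_𝔘 → X; moreover p ∘ λ = id_X and λ ∘ p is homotopic to id_{X_𝔘} via a linear (straight-line in barycentric coordinates) homotopy. -/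
set_option linter.unusedSectionVars false
set_option maxHeartbeats 1000000


open Set

variable {X : Type} [TopologicalSpace X]

/-- The disjoint union `⊔_{i₀ < ... < i_k} (𝔘_{i₀} ∩ ... ∩ 𝔘_{i_k}) × Δ^k` over all
strictly increasing finite sequences of indices. -/
def BlowupTotal (U : ℕ → Set X) : Type :=
  Σ (k : ℕ) (α : {a : Fin (k + 1) → ℕ // StrictMono a}),
    (⋂ j, U (α.1 j) : Set X) × (stdSimplex ℝ (Fin (k + 1)))

instance (U : ℕ → Set X) : TopologicalSpace (BlowupTotal U) :=
  inferInstanceAs (TopologicalSpace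
    (Σ (k : ℕ) (α : {a : Fin (k + 1) → ℕ // StrictMono a}),
      (⋂ j, U (α.1 j) : Set X) × (stdSimplex ℝ (Fin (k + 1)))))

/-- The face identifications `(x; t₀,...,0,...,t_k) ∼ (x; t₀,...,t̂_j,...,t_k)`. -/
def blowupRel (U : ℕ → Set X) : BlowupTotal U → BlowupTotal U → Prop :=
  fun a b => ∃ (k : ℕ) (α : Fin (k + 2) → ℕ) (hα : StrictMono α) (j : Fin (k + 2))
    (x : X) (hx : x ∈ ⋂ i, U (α i)) (t : stdSimplex ℝ (Fin (k + 1)))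
    (t' : stdSimplex ℝ (Fin (k + 2))),
    (∀ i, (t' : Fin (k + 2) → ℝ) i =
        ∑ m, if j.succAbove m = i then (t : Fin (k + 1) → ℝ) m else 0) ∧
    a = ⟨k + 1, ⟨α, hα⟩, ⟨x, hx⟩, t'⟩ ∧
    b = ⟨k, ⟨α ∘ j.succAbove, hα.comp (Fin.strictMono_succAbove j)⟩,
      ⟨x, by simp only [Set.mem_iInter] at hx ⊢; exact fun i => hx _⟩, t⟩

/-- The Mayer–Vietoris blow-up `X_𝔘` of the cover `𝔘`. -/
def Blowup (U : ℕ → Set X) : Type := Quot (blowupRel U)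

instance (U : ℕ → Set X) : TopologicalSpace (Blowup U) :=
  inferInstanceAs (TopologicalSpace (Quot (blowupRel U)))

/-- The canonical projection `p : X_𝔘 → X`. -/
def blowupProj (U : ℕ → Set X) : Blowup U → X :=
  Quot.lift (fun a => (a.2.2.1 : X)) (by
    rintro a b ⟨k, α, hα, j, x, hx, t, t', ht, rfl, rfl⟩; rfl)

theorem blowupProj_continuous (U : ℕ → Set X) : Continuous (blowupProj U) := by
  refine continuous_quot_lift _ (continuous_sigma fun k => continuous_sigma fun α => ?_)
  exact continuous_subtype_val.comp continuous_fst

/-- The canonical projection as a continuous map. -/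
def blowupProjC (U : ℕ → Set X) : C(Blowup U, X) :=
  ⟨blowupProj U, blowupProj_continuous U⟩

theorem quotmk_congr (U : ℕ → Set X) {k k' : ℕ} (h : k = k')
    {α : Fin (k+1) → ℕ} {hα : StrictMono α} {α' : Fin (k'+1) → ℕ} {hα' : StrictMono α'}
    {x : X} {hx : x ∈ ⋂ j, U (α j)} {hx' : x ∈ ⋂ j, U (α' j)}
    {t : stdSimplex ℝ (Fin (k+1))} {t' : stdSimplex ℝ (Fin (k'+1))}
    (hαα : ∀ (m : ℕ) (hm : m < k+1) (hm' : m < k'+1), α ⟨m, hm⟩ = α' ⟨m, hm'⟩)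
    (htt : ∀ (m : ℕ) (hm : m < k+1) (hm' : m < k'+1),
      (t : Fin (k+1) → ℝ) ⟨m, hm⟩ = (t' : Fin (k'+1) → ℝ) ⟨m, hm'⟩) :
    (Quot.mk (blowupRel U) ⟨k, ⟨α, hα⟩, ⟨x, hx⟩, t⟩ : Blowup U)
      = Quot.mk (blowupRel U) ⟨k', ⟨α', hα'⟩, ⟨x, hx'⟩, t'⟩ := by
  subst h
  obtain rfl : α = α' := funext fun m => hαα m.1 m.2 m.2
  obtain rfl : t = t' := Subtype.ext (funext fun m => htt m.1 m.2 m.2)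
  rfl

theorem sum_emb (S : Finset ℕ) {k : ℕ} (hk : S.card = k+1) (w : ℕ → ℝ) :
    ∑ j : Fin (k+1), w (S.orderEmbOfFin hk j) = ∑ i ∈ S, w i := by
  rw [← Finset.sum_coe_sort S w]
  exact Fintype.sum_equiv (S.orderIsoOfFin hk).toEquiv _ _
    (fun j => by simp [Finset.coe_orderIsoOfFin_apply])

noncomputable def mkP (U : ℕ → Set X) (k : ℕ) (S : Finset ℕ) (hk : S.card = k + 1) (x : X)
    (hx : ∀ i ∈ S, x ∈ U i) (w : ℕ → ℝ) (hw0 : ∀ i, 0 ≤ w i)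
    (hw1 : ∑ i ∈ S, w i = 1) : Blowup U :=
  Quot.mk _ ⟨k, ⟨fun j => S.orderEmbOfFin hk j, (S.orderEmbOfFin hk).strictMono⟩,
    ⟨x, mem_iInter.2 fun j => hx _ (S.orderEmbOfFin_mem hk j)⟩,
    ⟨fun j => w (S.orderEmbOfFin hk j), fun j => hw0 _, by rw [sum_emb S hk w]; exact hw1⟩⟩

theorem mkP_indep (U : ℕ → Set X) {k k' : ℕ} (S : Finset ℕ) (hk : S.card = k + 1)
    (hk' : S.card = k' + 1) (x : X) (hx : ∀ i ∈ S, x ∈ U i) (hx' : ∀ i ∈ S, x ∈ U i)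
    (w : ℕ → ℝ) (hw0 hw0' : ∀ i, 0 ≤ w i) (hw1 hw1' : ∑ i ∈ S, w i = 1) :
    mkP U k S hk x hx w hw0 hw1 = mkP U k' S hk' x hx' w hw0' hw1' := by
  obtain rfl : k = k' := by omega
  rfl

theorem mkP_congr_w (U : ℕ → Set X) {k : ℕ} (S : Finset ℕ) (hk : S.card = k + 1) (x : X)
    (hx : ∀ i ∈ S, x ∈ U i) (w w' : ℕ → ℝ) (hww : w = w') (hw0 : ∀ i, 0 ≤ w i)
    (hw0' : ∀ i, 0 ≤ w' i) (hw1 : ∑ i ∈ S, w i = 1) (hw1' : ∑ i ∈ S, w' i = 1) :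
    mkP U k S hk x hx w hw0 hw1 = mkP U k S hk x hx w' hw0' hw1' := by
  subst hww; rfl

theorem mkP_erase (U : ℕ → Set X) (k : ℕ) (S : Finset ℕ) (hk : S.card = (k+1) + 1) (x : X)
    (hx : ∀ i ∈ S, x ∈ U i) (w : ℕ → ℝ) (hw0 : ∀ i, 0 ≤ w i) (hw1 : ∑ i ∈ S, w i = 1)
    (i₀ : ℕ) (hi₀ : i₀ ∈ S) (hwi₀ : w i₀ = 0)
    (hkE : (S.erase i₀).card = k + 1)
    (hx' : ∀ i ∈ S.erase i₀, x ∈ U i) (hw1' : ∑ i ∈ S.erase i₀, w i = 1) :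
    mkP U (k+1) S hk x hx w hw0 hw1 = mkP U k (S.erase i₀) hkE x hx' w hw0 hw1' := by
  set β : Fin (k+2) → ℕ := fun j => S.orderEmbOfFin hk j with hβdef
  have hβmono : StrictMono β := (S.orderEmbOfFin hk).strictMono
  set j : Fin (k+2) := (S.orderIsoOfFin hk).symm ⟨i₀, hi₀⟩ with hjdef
  have hβj : β j = i₀ := by
    simp only [hβdef, hjdef, ← Finset.coe_orderIsoOfFin_apply, OrderIso.apply_symm_apply]
  have hmemE : ∀ m : Fin (k+1), β (j.succAbove m) ∈ S.erase i₀ := by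
    intro m
    refine Finset.mem_erase.2 ⟨?_, S.orderEmbOfFin_mem hk _⟩
    rw [← hβj]
    exact fun h => Fin.succAbove_ne j m (hβmono.injective h)
  have hγ : (fun m => β (j.succAbove m)) = ⇑((S.erase i₀).orderEmbOfFin hkE) :=
    Finset.orderEmbOfFin_unique hkE hmemE (hβmono.comp (Fin.strictMono_succAbove j))
  -- the small simplex point
  have ht0 : ∀ m : Fin (k+1), 0 ≤ w (β (j.succAbove m)) := fun m => hw0 _
  have ht1 : ∑ m : Fin (k+1), w (β (j.succAbove m)) = 1 := by
    have := sum_emb (S.erase i₀) hkE w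
    rw [← hγ] at this
    rw [this]; exact hw1'
  set t : stdSimplex ℝ (Fin (k+1)) := ⟨fun m => w (β (j.succAbove m)), ht0, ht1⟩ with htdef
  have hxm : x ∈ ⋂ i, U (β i) := mem_iInter.2 fun i => hx _ (S.orderEmbOfFin_mem hk i)
  set t' : stdSimplex ℝ (Fin (k+2)) :=
    ⟨fun v => w (S.orderEmbOfFin hk v), fun v => hw0 _, by rw [sum_emb S hk w]; exact hw1⟩
    with ht'def
  have ht : ∀ i, (t' : Fin (k+2) → ℝ) i =
      ∑ m, if j.succAbove m = i then (t : Fin (k+1) → ℝ) m else 0 := by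
    intro v
    by_cases hv : v = j
    · subst hv
      have : ∀ m : Fin (k+1), (if j.succAbove m = j then (t : Fin (k+1) → ℝ) m else 0) = 0 :=
        fun m => if_neg (Fin.succAbove_ne j m)
      rw [Finset.sum_congr rfl (fun m _ => this m), Finset.sum_const_zero]
      show w (β j) = 0
      rw [hβj]; exact hwi₀
    · obtain ⟨m₀, hm₀⟩ := Fin.exists_succAbove_eq hv
      subst hm₀
      have : ∀ m : Fin (k+1),
          (if j.succAbove m = j.succAbove m₀ then (t : Fin (k+1) → ℝ) m else 0)
          = if m = m₀ then (t : Fin (k+1) → ℝ) m else 0 := fun m => by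
        simp [Fin.succAbove_right_injective.eq_iff]
      rw [Finset.sum_congr rfl (fun m _ => this m), Finset.sum_ite_eq']
      simp [htdef]
      rfl
  have step : mkP U (k+1) S hk x hx w hw0 hw1
      = Quot.mk (blowupRel U) ⟨k, ⟨β ∘ j.succAbove, hβmono.comp (Fin.strictMono_succAbove j)⟩,
          ⟨x, by simp only [Set.mem_iInter] at hxm ⊢; exact fun i => hxm _⟩, t⟩ :=
    Quot.sound ⟨k, β, hβmono, j, x, hxm, t, t', ht, rfl, rfl⟩
  rw [step]
  show _ = mkP U k (S.erase i₀) hkE x hx' w hw0 hw1'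
  refine quotmk_congr U rfl ?_ ?_
  · intro m hm hm'
    exact congrFun hγ ⟨m, hm⟩
  · intro m hm hm'
    show w (β (j.succAbove ⟨m, hm⟩)) = w ((S.erase i₀).orderEmbOfFin hkE ⟨m, hm'⟩)
    rw [← hγ]

theorem mkP_mono (U : ℕ → Set X) (n : ℕ) : ∀ (k k' : ℕ) (S S' : Finset ℕ)
    (hss : S' ⊆ S) (hn : S.card = S'.card + n) (hk : S.card = k+1) (hk' : S'.card = k'+1)
    (x : X) (hx : ∀ i ∈ S, x ∈ U i) (hx' : ∀ i ∈ S', x ∈ U i) (w : ℕ → ℝ)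
    (hw0 : ∀ i, 0 ≤ w i) (hw1 : ∑ i ∈ S, w i = 1) (hw1' : ∑ i ∈ S', w i = 1)
    (hz : ∀ i ∈ S, i ∉ S' → w i = 0),
    mkP U k S hk x hx w hw0 hw1 = mkP U k' S' hk' x hx' w hw0 hw1' := by
  induction n with
  | zero =>
    intro k k' S S' hss hn hk hk' x hx hx' w hw0 hw1 hw1' hz
    obtain rfl : S' = S := Finset.eq_of_subset_of_card_le hss (by omega)
    exact mkP_indep U _ hk hk' x hx hx' w hw0 hw0 hw1 hw1'
  | succ n ih =>
    intro k k' S S' hss hn hk hk' x hx hx' w hw0 hw1 hw1' hz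
    obtain ⟨i₀, hi₀S, hi₀S'⟩ : ∃ i₀ ∈ S, i₀ ∉ S' := by
      by_contra h
      push_neg at h
      have := Finset.card_le_card (fun i hi => h i hi)
      omega
    have hwi₀ : w i₀ = 0 := hz i₀ hi₀S hi₀S'
    have hkE : (S.erase i₀).card = (k-1) + 1 := by
      rw [Finset.card_erase_of_mem hi₀S]; omega
    have hk2 : S.card = ((k-1)+1) + 1 := by omega
    have hxE : ∀ i ∈ S.erase i₀, x ∈ U i := fun i hi => hx i (Finset.mem_of_mem_erase hi)
    have hw1E : ∑ i ∈ S.erase i₀, w i = 1 := by rw [Finset.sum_erase _ hwi₀]; exact hw1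
    rw [mkP_indep U S hk hk2 x hx hx w hw0 hw0 hw1 hw1,
      mkP_erase U (k-1) S hk2 x hx w hw0 hw1 i₀ hi₀S hwi₀ hkE hxE hw1E]
    exact ih (k-1) k' (S.erase i₀) S' (Finset.subset_erase.2 ⟨hss, hi₀S'⟩)
      (by rw [Finset.card_erase_of_mem hi₀S]; omega) hkE hk' x hxE hx' w hw0 hw1E hw1'
      (fun i hi hni => hz i (Finset.mem_of_mem_erase hi) hni)

/- ===== partition of unity support ===== -/

noncomputable def suppF (pou : PartitionOfUnity ℕ X) (x : X) : Finset ℕ :=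
  (pou.locallyFinite.point_finite x).toFinset

theorem mem_suppF {pou : PartitionOfUnity ℕ X} {x : X} {i : ℕ} :
    i ∈ suppF pou x ↔ pou i x ≠ 0 := by
  simp [suppF, Function.mem_support]

theorem sum_suppF (pou : PartitionOfUnity ℕ X) (x : X) :
    ∑ i ∈ suppF pou x, pou i x = 1 := by
  rw [← finsum_eq_sum_of_support_subset _ (fun i hi => mem_suppF.2 hi)]
  exact pou.sum_eq_one (mem_univ x)

theorem suppF_nonempty (pou : PartitionOfUnity ℕ X) (x : X) : (suppF pou x).Nonempty := by
  rw [Finset.nonempty_iff_ne_empty]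
  intro h
  have := sum_suppF pou x
  rw [h, Finset.sum_empty] at this
  norm_num at this

theorem mem_U_of_suppF {U : ℕ → Set X} {pou : PartitionOfUnity ℕ X}
    (hsub : pou.IsSubordinate U) {x : X} {i : ℕ} (h : i ∈ suppF pou x) : x ∈ U i :=
  hsub i (subset_closure (mem_suppF.1 h))

theorem suppF_card_pos (pou : PartitionOfUnity ℕ X) (x : X) :
    (suppF pou x).card = ((suppF pou x).card - 1) + 1 := by
  have := (suppF_nonempty pou x).card_pos
  omega

noncomputable def lamFun (U : ℕ → Set X) (pou : PartitionOfUnity ℕ X)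
    (hsub : pou.IsSubordinate U) (x : X) : Blowup U :=
  mkP U ((suppF pou x).card - 1) (suppF pou x) (suppF_card_pos pou x) x
    (fun _ hi => mem_U_of_suppF hsub hi) (fun i => pou i x) (fun i => pou.nonneg i x)
    (sum_suppF pou x)

theorem exists_good_nhds (U : ℕ → Set X) (hU : ∀ i, IsOpen (U i))
    (pou : PartitionOfUnity ℕ X) (hsub : pou.IsSubordinate U) (x₀ : X) :
    ∃ (W : Set X) (S₀ : Finset ℕ), IsOpen W ∧ x₀ ∈ W ∧ S₀.Nonempty ∧
      (∀ y ∈ W, ∀ i ∈ S₀, y ∈ U i) ∧ (∀ y ∈ W, suppF pou y ⊆ S₀) := by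
  classical
  obtain ⟨V, hV, hfin⟩ := pou.locallyFinite x₀
  set T : Finset ℕ := hfin.toFinset with hTdef
  set S₀ : Finset ℕ := T.filter (fun i => x₀ ∈ U i) with hS₀def
  set W : Set X := interior V ∩ (⋂ i ∈ S₀, U i) ∩
    (⋂ i ∈ T.filter (fun i => x₀ ∉ U i), (tsupport (pou i))ᶜ) with hWdef
  have hsuppT : ∀ y ∈ interior V, suppF pou y ⊆ T := by
    intro y hy i hi
    rw [hTdef, Set.Finite.mem_toFinset]
    exact ⟨y, mem_suppF.1 hi, interior_subset hy⟩
  have hWopen : IsOpen W := by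
    refine ((isOpen_interior.inter ?_).inter ?_)
    · exact Set.Finite.isOpen_biInter (Finset.finite_toSet _) (fun i _ => hU i)
    · exact Set.Finite.isOpen_biInter (Finset.finite_toSet _)
        (fun i _ => (isClosed_tsupport _).isOpen_compl)
  have hx₀W : x₀ ∈ W := by
    refine ⟨⟨mem_interior_iff_mem_nhds.2 hV, ?_⟩, ?_⟩
    · exact mem_iInter₂.2 fun i hi => (Finset.mem_filter.1 hi).2
    · refine mem_iInter₂.2 fun i hi => ?_
      intro hmem
      exact (Finset.mem_filter.1 hi).2 (hsub i hmem)
  have hWsupp : ∀ y ∈ W, suppF pou y ⊆ S₀ := by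
    intro y hy i hi
    have hiT : i ∈ T := hsuppT y hy.1.1 hi
    rw [hS₀def, Finset.mem_filter]
    refine ⟨hiT, ?_⟩
    by_contra hnot
    have := mem_iInter₂.1 hy.2 i (Finset.mem_filter.2 ⟨hiT, hnot⟩)
    exact this (subset_closure (mem_suppF.1 hi))
  refine ⟨W, S₀, hWopen, hx₀W, ?_, ?_, hWsupp⟩
  · exact (suppF_nonempty pou x₀).mono (hWsupp x₀ hx₀W)
  · exact fun y hy i hi => mem_iInter₂.1 hy.1.2 i hi

theorem continuous_mkP {Y : Type*} [TopologicalSpace Y] (U : ℕ → Set X) (k : ℕ) (S : Finset ℕ)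
    (hk : S.card = k+1) (f : Y → X) (hf : Continuous f) (hx : ∀ y, ∀ i ∈ S, f y ∈ U i)
    (w : Y → ℕ → ℝ) (hw : ∀ i, Continuous fun y => w y i) (hw0 : ∀ y i, 0 ≤ w y i)
    (hw1 : ∀ y, ∑ i ∈ S, w y i = 1) :
    Continuous fun y => mkP U k S hk (f y) (hx y) (w y) (hw0 y) (hw1 y) := by
  unfold mkP
  have h1 : Continuous (fun p : ((⋂ j, U ((S.orderEmbOfFin hk) j) : Set X) ×
      (stdSimplex ℝ (Fin (k+1)))) =>
      (⟨k, ⟨fun j => S.orderEmbOfFin hk j, (S.orderEmbOfFin hk).strictMono⟩, p⟩ :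
        BlowupTotal U)) := continuous_sigmaMk.comp continuous_sigmaMk
  exact (continuous_quot_mk.comp h1).comp
    ((hf.subtype_mk _).prodMk
      ((continuous_pi fun j => hw (S.orderEmbOfFin hk j)).subtype_mk _))

theorem sum_eq_one_of_suppF_subset (pou : PartitionOfUnity ℕ X) {x : X} {S₀ : Finset ℕ}
    (h : suppF pou x ⊆ S₀) : ∑ i ∈ S₀, pou i x = 1 := by
  rw [← Finset.sum_subset h (fun i _ hni => by
    by_contra hc; exact hni (mem_suppF.2 hc))]
  exact sum_suppF pou x

theorem lamFun_eq_mkP (U : ℕ → Set X) (pou : PartitionOfUnity ℕ X)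
    (hsub : pou.IsSubordinate U) {S₀ : Finset ℕ} (hk : S₀.card = (S₀.card - 1) + 1) {x : X}
    (hmem : ∀ i ∈ S₀, x ∈ U i) (hsupp : suppF pou x ⊆ S₀) (hw1 : ∑ i ∈ S₀, pou i x = 1) :
    mkP U (S₀.card - 1) S₀ hk x hmem (fun i => pou i x) (fun i => pou.nonneg i x) hw1
      = lamFun U pou hsub x :=
  mkP_mono U (S₀.card - (suppF pou x).card) _ _ S₀ (suppF pou x) hsupp
    (by have := Finset.card_le_card hsupp; omega) hk (suppF_card_pos pou x) x hmem
    (fun _ hi => mem_U_of_suppF hsub hi) _ (fun i => pou.nonneg i x) hw1 (sum_suppF pou x)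
    (fun i _ hni => by by_contra hc; exact hni (mem_suppF.2 hc))

theorem lamFun_continuous (U : ℕ → Set X) (hU : ∀ i, IsOpen (U i))
    (pou : PartitionOfUnity ℕ X) (hsub : pou.IsSubordinate U) :
    Continuous (lamFun U pou hsub) := by
  rw [continuous_iff_continuousAt]
  intro x₀
  obtain ⟨W, S₀, hWo, hx₀W, hS₀ne, hWU, hWsupp⟩ := exists_good_nhds U hU pou hsub x₀
  have hk : S₀.card = (S₀.card - 1) + 1 := by have := hS₀ne.card_pos; omega
  refine ContinuousOn.continuousAt ?_ (hWo.mem_nhds hx₀W)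
  rw [continuousOn_iff_continuous_restrict]
  have heq : W.restrict (lamFun U pou hsub) = fun y : ↥W =>
      mkP U (S₀.card - 1) S₀ hk (↑y) (fun i hi => hWU ↑y y.2 i hi) (fun i => pou i ↑y)
        (fun i => pou.nonneg i ↑y) (sum_eq_one_of_suppF_subset pou (hWsupp ↑y y.2)) := by
    funext y
    exact (lamFun_eq_mkP U pou hsub hk _ (hWsupp ↑y y.2) _).symm
  change Continuous (W.restrict (lamFun U pou hsub))
  rw [heq]
  exact continuous_mkP U _ S₀ hk _ continuous_subtype_val _ _
    (fun i => (pou i).continuous.comp continuous_subtype_val) _ _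

/- ===== homotopy weights ===== -/

noncomputable def wH {k : ℕ} (pou : PartitionOfUnity ℕ X) (α : Fin (k+1) → ℕ)
    (t : Fin (k+1) → ℝ) (x : X) (s : ℝ) (i : ℕ) : ℝ :=
  s * (∑ m, if α m = i then t m else 0) + (1 - s) * pou i x

theorem tpart_nonneg {k : ℕ} (α : Fin (k+1) → ℕ) (t : Fin (k+1) → ℝ)
    (ht0 : ∀ m, 0 ≤ t m) (i : ℕ) : 0 ≤ ∑ m, if α m = i then t m else 0 :=
  Finset.sum_nonneg fun m _ => by by_cases h : α m = i <;> simp [h, ht0 m]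

theorem tpart_sum {k : ℕ} (α : Fin (k+1) → ℕ) (t : Fin (k+1) → ℝ)
    (ht1 : ∑ m, t m = 1) {T : Finset ℕ} (hT : Finset.image α Finset.univ ⊆ T) :
    ∑ i ∈ T, (∑ m, if α m = i then t m else 0) = 1 := by
  rw [Finset.sum_comm]
  have h : ∀ m : Fin (k+1), (∑ i ∈ T, if α m = i then t m else 0) = t m := fun m => by
    rw [Finset.sum_ite_eq]
    exact if_pos (hT (Finset.mem_image_of_mem α (Finset.mem_univ m)))
  rw [Finset.sum_congr rfl fun m _ => h m]
  exact ht1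

theorem wH_nonneg {k : ℕ} (pou : PartitionOfUnity ℕ X) (α : Fin (k+1) → ℕ)
    (t : Fin (k+1) → ℝ) (ht0 : ∀ m, 0 ≤ t m) (x : X) {s : ℝ} (hs0 : 0 ≤ s) (hs1 : s ≤ 1)
    (i : ℕ) : 0 ≤ wH pou α t x s i :=
  add_nonneg (mul_nonneg hs0 (tpart_nonneg α t ht0 i))
    (mul_nonneg (by linarith) (pou.nonneg i x))

theorem wH_sum {k : ℕ} (pou : PartitionOfUnity ℕ X) (α : Fin (k+1) → ℕ)
    (t : Fin (k+1) → ℝ) (ht1 : ∑ m, t m = 1) (x : X) (s : ℝ) {T : Finset ℕ}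
    (hTα : Finset.image α Finset.univ ⊆ T) (hTs : suppF pou x ⊆ T) :
    ∑ i ∈ T, wH pou α t x s i = 1 := by
  unfold wH
  rw [Finset.sum_add_distrib, ← Finset.mul_sum, ← Finset.mul_sum,
    tpart_sum α t ht1 hTα, sum_eq_one_of_suppF_subset pou hTs]
  ring

noncomputable def SH {k : ℕ} (pou : PartitionOfUnity ℕ X) (α : Fin (k+1) → ℕ) (x : X) :
    Finset ℕ :=
  Finset.image α Finset.univ ∪ suppF pou x

theorem SH_card {k : ℕ} (pou : PartitionOfUnity ℕ X) (α : Fin (k+1) → ℕ) (x : X) :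
    (SH pou α x).card = ((SH pou α x).card - 1) + 1 := by
  have : α 0 ∈ SH pou α x :=
    Finset.mem_union_left _ (Finset.mem_image_of_mem α (Finset.mem_univ 0))
  have := Finset.card_pos.2 ⟨α 0, this⟩
  omega

theorem mem_U_of_SH {U : ℕ → Set X} {pou : PartitionOfUnity ℕ X}
    (hsub : pou.IsSubordinate U) {k : ℕ} {α : Fin (k+1) → ℕ} {x : X}
    (hx : ∀ m, x ∈ U (α m)) : ∀ i ∈ SH pou α x, x ∈ U i := by
  intro i hi
  rcases Finset.mem_union.1 hi with h | h
  · obtain ⟨m, _, rfl⟩ := Finset.mem_image.1 h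
    exact hx m
  · exact mem_U_of_suppF hsub h

noncomputable def hPt (U : ℕ → Set X) (pou : PartitionOfUnity ℕ X)
    (hsub : pou.IsSubordinate U) (k : ℕ) (α : Fin (k+1) → ℕ) (x : X)
    (hx : ∀ m, x ∈ U (α m)) (t : Fin (k+1) → ℝ) (ht0 : ∀ m, 0 ≤ t m)
    (ht1 : ∑ m, t m = 1) (s : ℝ) (hs0 : 0 ≤ s) (hs1 : s ≤ 1) : Blowup U :=
  mkP U ((SH pou α x).card - 1) (SH pou α x) (SH_card pou α x) x (mem_U_of_SH hsub hx)
    (wH pou α t x s) (wH_nonneg pou α t ht0 x hs0 hs1)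
    (wH_sum pou α t ht1 x s Finset.subset_union_left Finset.subset_union_right)

theorem hPt_zero (U : ℕ → Set X) (pou : PartitionOfUnity ℕ X)
    (hsub : pou.IsSubordinate U) (k : ℕ) (α : Fin (k+1) → ℕ) (x : X)
    (hx : ∀ m, x ∈ U (α m)) (t : Fin (k+1) → ℝ) (ht0 : ∀ m, 0 ≤ t m)
    (ht1 : ∑ m, t m = 1) :
    hPt U pou hsub k α x hx t ht0 ht1 0 le_rfl zero_le_one = lamFun U pou hsub x := by
  unfold hPt
  refine Eq.trans (mkP_congr_w U (SH pou α x) (SH_card pou α x) x (mem_U_of_SH hsub hx) _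
    (fun i => pou i x) (funext fun i => by unfold wH; ring) _ (fun i => pou.nonneg i x) _
    (sum_eq_one_of_suppF_subset pou Finset.subset_union_right)) ?_
  exact lamFun_eq_mkP U pou hsub (SH_card pou α x) _ Finset.subset_union_right _

theorem card_image_univ {k : ℕ} (α : Fin (k+1) → ℕ) (hα : Function.Injective α) :
    (Finset.image α Finset.univ).card = k+1 := by
  rw [Finset.card_image_of_injective _ hα, Finset.card_univ, Fintype.card_fin]

theorem mkP_image (U : ℕ → Set X) {k : ℕ} (α : Fin (k+1) → ℕ) (hα : StrictMono α) (x : X)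
    (hx : ∀ m, x ∈ U (α m)) (t : Fin (k+1) → ℝ) (ht0 : ∀ m, 0 ≤ t m) (ht1 : ∑ m, t m = 1)
    (hcard : (Finset.image α Finset.univ).card = k + 1)
    (hmem : ∀ i ∈ Finset.image α Finset.univ, x ∈ U i)
    (hw0 : ∀ i, 0 ≤ ∑ m, if α m = i then t m else 0)
    (hw1 : ∑ i ∈ Finset.image α Finset.univ, (∑ m, if α m = i then t m else 0) = 1) :
    mkP U k (Finset.image α Finset.univ) hcard x hmem
        (fun i => ∑ m, if α m = i then t m else 0) hw0 hw1
      = Quot.mk (blowupRel U) ⟨k, ⟨α, hα⟩, ⟨x, mem_iInter.2 hx⟩, ⟨t, ht0, ht1⟩⟩ := by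
  have hemb : α = ⇑((Finset.image α Finset.univ).orderEmbOfFin hcard) :=
    Finset.orderEmbOfFin_unique hcard (fun m => Finset.mem_image_of_mem α (Finset.mem_univ m)) hα
  unfold mkP
  refine quotmk_congr U rfl ?_ ?_
  · intro m hm hm'
    exact (congrFun hemb ⟨m, hm⟩).symm
  · intro m hm hm'
    show (∑ m', if α m' = (Finset.image α Finset.univ).orderEmbOfFin hcard ⟨m, hm⟩
        then t m' else 0) = t ⟨m, hm'⟩
    rw [show ((Finset.image α Finset.univ).orderEmbOfFin hcard) ⟨m, hm⟩ = α ⟨m, hm⟩ from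
      (congrFun hemb _).symm]
    have h : ∀ m', (if α m' = α ⟨m, hm⟩ then t m' else 0)
        = if m' = ⟨m, hm⟩ then t m' else 0 := fun m' => by
      simp [hα.injective.eq_iff]
    rw [Finset.sum_congr rfl fun m' _ => h m', Finset.sum_ite_eq' Finset.univ]
    simp

theorem hPt_one (U : ℕ → Set X) (pou : PartitionOfUnity ℕ X)
    (hsub : pou.IsSubordinate U) (k : ℕ) (α : Fin (k+1) → ℕ) (hα : StrictMono α) (x : X)
    (hx : ∀ m, x ∈ U (α m)) (t : Fin (k+1) → ℝ) (ht0 : ∀ m, 0 ≤ t m)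
    (ht1 : ∑ m, t m = 1) :
    hPt U pou hsub k α x hx t ht0 ht1 1 zero_le_one le_rfl
      = Quot.mk (blowupRel U) ⟨k, ⟨α, hα⟩, ⟨x, mem_iInter.2 hx⟩, ⟨t, ht0, ht1⟩⟩ := by
  have hcard : (Finset.image α Finset.univ).card = k + 1 := card_image_univ α hα.injective
  have hcard' : (Finset.image α Finset.univ).card
      = ((Finset.image α Finset.univ).card - 1) + 1 := by omega
  have hmem : ∀ i ∈ Finset.image α Finset.univ, x ∈ U i := by
    intro i hi; obtain ⟨m, _, rfl⟩ := Finset.mem_image.1 hi; exact hx m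
  have hw1 : ∑ i ∈ Finset.image α Finset.univ, (∑ m, if α m = i then t m else 0) = 1 :=
    tpart_sum α t ht1 (subset_refl _)
  unfold hPt
  have hsum1 : ∑ i ∈ SH pou α x, (∑ m, if α m = i then t m else 0) = 1 :=
    tpart_sum α t ht1 Finset.subset_union_left
  have h1 : (Finset.image α Finset.univ).card ≤ (SH pou α x).card :=
    Finset.card_le_card Finset.subset_union_left
  refine Eq.trans (mkP_congr_w U (SH pou α x) (SH_card pou α x) x (mem_U_of_SH hsub hx) _
    (fun i => ∑ m, if α m = i then t m else 0) (funext fun i => by unfold wH; ring) _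
    (fun i => tpart_nonneg α t ht0 i) _ hsum1) ?_
  refine Eq.trans (mkP_mono U ((SH pou α x).card - (k+1))
    _ k (SH pou α x) (Finset.image α Finset.univ) Finset.subset_union_left
    (by omega) (SH_card pou α x) hcard x (mem_U_of_SH hsub hx) hmem _
    (fun i => tpart_nonneg α t ht0 i) hsum1 hw1 ?_) ?_
  · intro i hi hni
    exact Finset.sum_eq_zero fun m _ => if_neg fun h =>
      hni (Finset.mem_image.2 ⟨m, Finset.mem_univ m, h⟩)
  · exact mkP_image U α hα x hx t ht0 ht1 hcard hmem _ hw1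

theorem hPt_rel (U : ℕ → Set X) (pou : PartitionOfUnity ℕ X) (hsub : pou.IsSubordinate U)
    {k : ℕ} (α : Fin (k+2) → ℕ) (hα : StrictMono α) (j : Fin (k+2)) (x : X)
    (hx : ∀ m, x ∈ U (α m)) (t : Fin (k+1) → ℝ) (t' : Fin (k+2) → ℝ)
    (ht'0 : ∀ m, 0 ≤ t' m) (ht'1 : ∑ m, t' m = 1)
    (ht0 : ∀ m, 0 ≤ t m) (ht1 : ∑ m, t m = 1)
    (ht : ∀ i, t' i = ∑ m, if j.succAbove m = i then t m else 0)
    (s : ℝ) (hs0 : 0 ≤ s) (hs1 : s ≤ 1) :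
    hPt U pou hsub (k+1) α x hx t' ht'0 ht'1 s hs0 hs1
      = hPt U pou hsub k (α ∘ j.succAbove) x (fun m => hx _) t ht0 ht1 s hs0 hs1 := by
  have h1 : t' j = 0 := by
    rw [ht j]
    exact Finset.sum_eq_zero fun m _ => if_neg (Fin.succAbove_ne j m)
  have h2 : ∀ m, t' (j.succAbove m) = t m := fun m => by
    rw [ht (j.succAbove m)]
    have h : ∀ m', (if j.succAbove m' = j.succAbove m then t m' else 0)
        = if m' = m then t m' else 0 := fun m' => by
      simp [Fin.succAbove_right_injective.eq_iff]
    rw [Finset.sum_congr rfl fun m' _ => h m', Finset.sum_ite_eq' Finset.univ]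
    simp
  have hTT : ∀ i, (∑ v, if α v = i then t' v else 0)
      = ∑ m, if (α ∘ j.succAbove) m = i then t m else 0 := by
    intro i
    rw [Fin.sum_univ_succAbove (fun v => if α v = i then t' v else 0) j]
    simp only [Function.comp]
    rw [h1]
    rw [ite_self, zero_add]
    exact Finset.sum_congr rfl fun m _ => by rw [h2 m]
  have hww : wH pou α t' x s = wH pou (α ∘ j.succAbove) t x s :=
    funext fun i => by unfold wH; rw [hTT i]
  have hssub : SH pou (α ∘ j.succAbove) x ⊆ SH pou α x := by
    refine Finset.union_subset_union ?_ (subset_refl _)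
    intro i hi
    obtain ⟨m, _, rfl⟩ := Finset.mem_image.1 hi
    exact Finset.mem_image_of_mem α (Finset.mem_univ _)
  have hz : ∀ i ∈ SH pou α x, i ∉ SH pou (α ∘ j.succAbove) x
      → wH pou (α ∘ j.succAbove) t x s i = 0 := by
    intro i hi hni
    have hps : pou i x = 0 := by
      by_contra hc
      exact hni (Finset.mem_union_right _ (mem_suppF.2 hc))
    have hTz : (∑ m, if (α ∘ j.succAbove) m = i then t m else 0) = 0 :=
      Finset.sum_eq_zero fun m _ => if_neg fun h =>
        hni (Finset.mem_union_left _ (Finset.mem_image.2 ⟨m, Finset.mem_univ m, h⟩))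
    unfold wH
    rw [hTz, hps]
    ring
  have hcardle : (SH pou (α ∘ j.succAbove) x).card ≤ (SH pou α x).card :=
    Finset.card_le_card hssub
  unfold hPt
  refine Eq.trans (mkP_congr_w U (SH pou α x) (SH_card pou α x) x (mem_U_of_SH hsub hx) _
    (wH pou (α ∘ j.succAbove) t x s) hww _
    (wH_nonneg pou (α ∘ j.succAbove) t ht0 x hs0 hs1)
    _ (by rw [← hww]
          exact wH_sum pou α t' ht'1 x s Finset.subset_union_left
            Finset.subset_union_right)) ?_
  exact mkP_mono U ((SH pou α x).card - (SH pou (α ∘ j.succAbove) x).card) _ _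
    (SH pou α x) (SH pou (α ∘ j.succAbove) x) hssub (by omega) (SH_card pou α x)
    (SH_card pou (α ∘ j.succAbove) x) x (mem_U_of_SH hsub hx)
    (mem_U_of_SH hsub (fun m => hx _)) _ (wH_nonneg pou (α ∘ j.succAbove) t ht0 x hs0 hs1)
    _ (wH_sum pou (α ∘ j.succAbove) t ht1 x s Finset.subset_union_left
      Finset.subset_union_right) hz

noncomputable def hCurve (U : ℕ → Set X) (pou : PartitionOfUnity ℕ X)
    (hsub : pou.IsSubordinate U) (k : ℕ) (α : Fin (k+1) → ℕ) (x : X)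
    (hx : ∀ m, x ∈ U (α m)) (t : Fin (k+1) → ℝ) (ht0 : ∀ m, 0 ≤ t m)
    (ht1 : ∑ m, t m = 1) : C(unitInterval, Blowup U) :=
  ⟨fun s => hPt U pou hsub k α x hx t ht0 ht1 s.1 s.2.1 s.2.2, by
    unfold hPt
    exact continuous_mkP U _ _ _ (fun _ => x) continuous_const _ _
      (fun i => by
        unfold wH
        exact (continuous_subtype_val.mul continuous_const).add
          ((continuous_const.sub continuous_subtype_val).mul continuous_const)) _ _⟩

noncomputable def hTot (U : ℕ → Set X) (pou : PartitionOfUnity ℕ X)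
    (hsub : pou.IsSubordinate U) : BlowupTotal U → C(unitInterval, Blowup U) :=
  fun a => hCurve U pou hsub a.1 a.2.1.1 a.2.2.1.1 (fun m => mem_iInter.1 a.2.2.1.2 m)
    a.2.2.2.1 a.2.2.2.2.1 a.2.2.2.2.2

theorem hTot_continuous (U : ℕ → Set X) (hU : ∀ i, IsOpen (U i))
    (pou : PartitionOfUnity ℕ X) (hsub : pou.IsSubordinate U) :
    Continuous (hTot U pou hsub) := by
  apply continuous_sigma
  intro k
  apply continuous_sigma
  intro αp
  rw [continuous_iff_continuousAt]
  rintro ⟨x₀, t₀⟩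
  obtain ⟨W, S₀, hWo, hx₀W, hS₀ne, hWU, hWsupp⟩ := exists_good_nhds U hU pou hsub x₀.1
  set E : Set ((⋂ j, U (αp.1 j) : Set X) × (stdSimplex ℝ (Fin (k+1)))) :=
    {q | (q.1 : X) ∈ W} with hEdef
  have hEo : IsOpen E := hWo.preimage (continuous_subtype_val.comp continuous_fst)
  refine ContinuousOn.continuousAt ?_ (hEo.mem_nhds hx₀W)
  rw [continuousOn_iff_continuous_restrict]
  set Sfix : Finset ℕ := Finset.image αp.1 Finset.univ ∪ S₀ with hSdef
  have hkfix : Sfix.card = (Sfix.card - 1) + 1 := by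
    have : αp.1 0 ∈ Sfix :=
      Finset.mem_union_left _ (Finset.mem_image_of_mem αp.1 (Finset.mem_univ 0))
    have := Finset.card_pos.2 ⟨αp.1 0, this⟩
    omega
  have hmemfix : ∀ q : ↥E, ∀ i ∈ Sfix, (↑q.1.1 : X) ∈ U i := by
    intro q i hi
    rcases Finset.mem_union.1 hi with h | h
    · obtain ⟨m, _, rfl⟩ := Finset.mem_image.1 h
      exact mem_iInter.1 q.1.1.2 m
    · exact hWU _ q.2 i h
  have hsuppfix : ∀ q : ↥E, suppF pou (↑q.1.1 : X) ⊆ Sfix :=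
    fun q => (hWsupp _ q.2).trans Finset.subset_union_right
  set Ψ : C(↥E × unitInterval, Blowup U) :=
    ⟨fun p => mkP U (Sfix.card - 1) Sfix hkfix (↑p.1.1.1)
      (hmemfix p.1) (wH pou αp.1 (p.1.1.2 : Fin (k+1) → ℝ) (↑p.1.1.1) p.2.1)
      (wH_nonneg pou αp.1 _ p.1.1.2.2.1 _ p.2.2.1 p.2.2.2)
      (wH_sum pou αp.1 _ p.1.1.2.2.2 _ _ Finset.subset_union_left (hsuppfix p.1)), by
      have hxc : Continuous fun p : ↥E × unitInterval => (↑p.1.1.1 : X) :=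
        continuous_subtype_val.comp (continuous_fst.comp
          (continuous_subtype_val.comp continuous_fst))
      have hsc : Continuous fun p : ↥E × unitInterval => (p.2.1 : ℝ) :=
        continuous_subtype_val.comp continuous_snd
      have htc : ∀ m : Fin (k+1),
          Continuous fun p : ↥E × unitInterval => (p.1.1.2 : Fin (k+1) → ℝ) m :=
        fun m => (continuous_apply m).comp (continuous_subtype_val.comp
          (continuous_snd.comp (continuous_subtype_val.comp continuous_fst)))
      exact continuous_mkP U _ _ _ _ hxc _ _
        (fun i => by
          unfold wH
          refine ((hsc.mul (continuous_finset_sum _ fun m _ => ?_)).add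
            ((continuous_const.sub hsc).mul ((pou i).continuous.comp hxc)))
          by_cases h : αp.1 m = i
          · simpa [h] using htc m
          · simp [h]
            exact continuous_const) _ _⟩ with hΨdef
  have heq : E.restrict (fun q => hTot U pou hsub ⟨k, αp, q⟩) = fun q => Ψ.curry q := by
    funext q
    refine ContinuousMap.ext fun s => ?_
    show hPt U pou hsub k αp.1 (↑q.1.1) (fun m => mem_iInter.1 q.1.1.2 m)
        (q.1.2 : Fin (k+1) → ℝ) q.1.2.2.1 q.1.2.2.2 s.1 s.2.1 s.2.2 = _
    unfold hPt
    refine (mkP_mono U (Sfix.card - (SH pou αp.1 (↑q.1.1)).card) _ _ Sfix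
      (SH pou αp.1 (↑q.1.1))
      (Finset.union_subset_union (subset_refl _) (hWsupp _ q.2))
      ?_ hkfix (SH_card pou αp.1 (↑q.1.1)) (↑q.1.1) (hmemfix q)
      (mem_U_of_SH hsub (fun m => mem_iInter.1 q.1.1.2 m))
      (wH pou αp.1 (q.1.2 : Fin (k+1) → ℝ) (↑q.1.1) s.1)
      (wH_nonneg pou αp.1 _ q.1.2.2.1 _ s.2.1 s.2.2)
      (wH_sum pou αp.1 _ q.1.2.2.2 _ _ Finset.subset_union_left (hsuppfix q))
      (wH_sum pou αp.1 _ q.1.2.2.2 _ _ Finset.subset_union_left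
        Finset.subset_union_right) ?_).symm
    · have hle : (SH pou αp.1 (↑q.1.1)).card ≤ Sfix.card :=
        Finset.card_le_card (Finset.union_subset_union
          (subset_refl (Finset.image αp.1 Finset.univ)) (hWsupp _ q.2))
      omega
    · intro i hi hni
      have hps : pou i (↑q.1.1) = 0 := by
        by_contra hc
        exact hni (Finset.mem_union_right _ (mem_suppF.2 hc))
      have hTz : (∑ m, if αp.1 m = i then (q.1.2 : Fin (k+1) → ℝ) m else 0) = 0 :=
        Finset.sum_eq_zero fun m _ => if_neg fun h =>
          hni (Finset.mem_union_left _ (Finset.mem_image.2 ⟨m, Finset.mem_univ m, h⟩))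
      unfold wH
      rw [hTz, hps]
      ring
  change Continuous (E.restrict fun q => hTot U pou hsub ⟨k, αp, q⟩)
  rw [heq]
  exact Ψ.curry.continuous

theorem hTot_desc (U : ℕ → Set X) (pou : PartitionOfUnity ℕ X) (hsub : pou.IsSubordinate U)
    (a b : BlowupTotal U) (hab : blowupRel U a b) :
    hTot U pou hsub a = hTot U pou hsub b := by
  obtain ⟨k, α, hα, j, x, hx, t, t', ht, rfl, rfl⟩ := hab
  refine ContinuousMap.ext fun s => ?_
  exact hPt_rel U pou hsub α hα j x (fun m => mem_iInter.1 hx m) t.1 t'.1 t'.2.1 t'.2.2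
    t.2.1 t.2.2 (fun i => ht i) s.1 s.2.1 s.2.2

noncomputable def Hhat (U : ℕ → Set X) (pou : PartitionOfUnity ℕ X)
    (hsub : pou.IsSubordinate U) : Blowup U → C(unitInterval, Blowup U) :=
  Quot.lift (hTot U pou hsub) (hTot_desc U pou hsub)

theorem Hhat_continuous (U : ℕ → Set X) (hU : ∀ i, IsOpen (U i))
    (pou : PartitionOfUnity ℕ X) (hsub : pou.IsSubordinate U) :
    Continuous (Hhat U pou hsub) :=
  continuous_quot_lift _ (hTot_continuous U hU pou hsub)


/-- for a countable numerable open cover `𝔘` with subordinate partition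
of unity `{λ_α}`, the map `λ : X → X_𝔘`, `x ↦ (x; λ_{i₀}(x), ..., λ_{i_k}(x))` (where
`i₀ < ... < i_k` are the indices with `λ_i(x) > 0`), is a homotopy equivalence with
homotopy inverse the canonical projection `p : X_𝔘 → X`; moreover `p ∘ λ = id` and
`λ ∘ p` is homotopic to the identity of `X_𝔘`. -/
theorem blowup_homotopyEquiv (U : ℕ → Set X) (hU : ∀ i, IsOpen (U i))
    (hcov : ⋃ i, U i = univ) (pou : PartitionOfUnity ℕ X)
    (hsub : pou.IsSubordinate U) :
    ∃ lam : C(X, Blowup U),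
      (∀ x : X, ∃ (k : ℕ) (α : Fin (k + 1) → ℕ) (hα : StrictMono α)
        (hx : x ∈ ⋂ j, U (α j)) (pt : stdSimplex ℝ (Fin (k + 1))),
        (∀ j, (pt : Fin (k + 1) → ℝ) j = pou (α j) x) ∧
        (∀ j, 0 < pou (α j) x) ∧
        (∀ i, (∀ j, α j ≠ i) → pou i x = 0) ∧
        lam x = Quot.mk _ ⟨k, ⟨α, hα⟩, ⟨x, hx⟩, pt⟩) ∧
      (∀ x, blowupProjC U (lam x) = x) ∧
      Nonempty (ContinuousMap.Homotopy (lam.comp (blowupProjC U))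
        (ContinuousMap.id (Blowup U))) := by
  refine ⟨⟨lamFun U pou hsub, lamFun_continuous U hU pou hsub⟩, ?_, fun x => rfl, ?_⟩
  · intro x
    refine ⟨(suppF pou x).card - 1,
      fun j => (suppF pou x).orderEmbOfFin (suppF_card_pos pou x) j,
      ((suppF pou x).orderEmbOfFin (suppF_card_pos pou x)).strictMono,
      mem_iInter.2 (fun j => mem_U_of_suppF hsub
        (Finset.orderEmbOfFin_mem _ (suppF_card_pos pou x) j)),
      ⟨fun j => pou ((suppF pou x).orderEmbOfFin (suppF_card_pos pou x) j) x,
        fun j => pou.nonneg _ x,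
        (sum_emb (suppF pou x) (suppF_card_pos pou x) (fun i => pou i x)).trans (sum_suppF pou x)⟩,
      fun j => rfl, ?_, ?_, rfl⟩
    · intro j
      refine (pou.nonneg _ x).lt_of_ne (Ne.symm (mem_suppF.1 ?_))
      exact Finset.orderEmbOfFin_mem _ (suppF_card_pos pou x) j
    · intro i hij
      by_contra hc
      have hmem : i ∈ suppF pou x := mem_suppF.2 hc
      have : (i : ℕ) ∈ Set.range ⇑((suppF pou x).orderEmbOfFin (suppF_card_pos pou x)) := by
        rw [Finset.range_orderEmbOfFin]
        exact hmem
      obtain ⟨j, hj⟩ := this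
      exact hij j hj
  · refine ⟨⟨⟨fun p => Hhat U pou hsub p.2 p.1, ?_⟩, ?_, ?_⟩⟩
    · exact (ContinuousMap.uncurry
        ⟨Hhat U pou hsub, Hhat_continuous U hU pou hsub⟩).continuous.comp continuous_swap
    · intro q
      induction q using Quot.ind with
      | _ a =>
        obtain ⟨k, ⟨α, hα⟩, ⟨x, hx⟩, t⟩ := a
        exact hPt_zero U pou hsub k α x (fun m => mem_iInter.1 hx m) t.1 t.2.1 t.2.2
    · intro q
      induction q using Quot.ind with
      | _ a =>
        obtain ⟨k, ⟨α, hα⟩, ⟨x, hx⟩, t⟩ := a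
        exact hPt_one U pou hsub k α hα x (fun m => mem_iInter.1 hx m) t.1 t.2.1 t.2.2
end

section
/- The assignment τ_{n,k} : X_n × Sd_k(Δ^n) → X_k × S_k × Δ^k sending (x, A₀ ⊂ ... ⊂ A_k, t) to (u*x, |A₀| < |A₁| < ... < |A_k|, t), where u : [k] → [n] is j ↦ max(A_j), is compatible with face maps: if y = d_i*x ∈ X_{n-1} and B₀ ⊂ ... ⊂ B_k are subsets of [n-1] mapped bijectively by the coface d_i onto A₀ ⊂ ... ⊂ A_k ⊂ [n]∖{i}, then the images of (x, A₀⊂...⊂A_k) and (y, B₀⊂...⊂B_k) agree in ||X × S||; hence τ induces a well-defined continuous map τ : ||X|| → ||X × S||. -/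
open Set

/-- A simplicial space: spaces `X n` of `n`-simplices and a continuous, functorial
action of the monotone maps `[m] → [n]`. -/
structure SimpSpace where
  X : ℕ → Type
  [top : ∀ n, TopologicalSpace (X n)]
  map : ∀ {m n : ℕ}, (Fin (m + 1) →o Fin (n + 1)) → X n → X m
  continuous_map : ∀ {m n : ℕ} (φ : Fin (m + 1) →o Fin (n + 1)), Continuous (map φ)
  map_id : ∀ (n : ℕ) (x : X n), map (OrderHom.id (α := Fin (n + 1))) x = x
  map_comp : ∀ {m n p : ℕ} (φ : Fin (m + 1) →o Fin (n + 1))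
    (ψ : Fin (n + 1) →o Fin (p + 1)) (x : X p), map φ (map ψ x) = map (ψ.comp φ) x

attribute [instance] SimpSpace.top

/-- Strictly increasing sequences `[k] → ℕ`: the `k`-simplices of the semi-simplicial
set `S`. -/
def SIdx (k : ℕ) : Type := {g : Fin (k + 1) → ℕ // StrictMono g}

instance (k : ℕ) : TopologicalSpace (SIdx k) := ⊥

/-- Total space of the fat realization `||X||`. -/
def FatTotal (X : SimpSpace) : Type :=
  Σ n : ℕ, X.X n × ↥(stdSimplex ℝ (Fin (n + 1)))

instance (X : SimpSpace) : TopologicalSpace (FatTotal X) :=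
  inferInstanceAs (TopologicalSpace (Σ n : ℕ, X.X n × ↥(stdSimplex ℝ (Fin (n + 1)))))

/-- Face identifications: identifications along strictly increasing maps only. -/
def fatRel (X : SimpSpace) : FatTotal X → FatTotal X → Prop :=
  fun a b => ∃ (m n : ℕ) (φ : Fin (m + 1) → Fin (n + 1)) (hφ : StrictMono φ)
    (x : X.X n) (t : stdSimplex ℝ (Fin (m + 1))) (t' : stdSimplex ℝ (Fin (n + 1))),
    (∀ i, (t' : Fin (n + 1) → ℝ) i =
        ∑ j, if φ j = i then (t : Fin (m + 1) → ℝ) j else 0) ∧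
    a = ⟨m, X.map ⟨φ, hφ.monotone⟩ x, t⟩ ∧ b = ⟨n, x, t'⟩

/-- The fat realization `||X||`. -/
def FatReal (X : SimpSpace) : Type := Quot (fatRel X)

instance (X : SimpSpace) : TopologicalSpace (FatReal X) :=
  inferInstanceAs (TopologicalSpace (Quot (fatRel X)))

/-- Total space of the fat realization `||X × S||`. -/
def FatSTotal (X : SimpSpace) : Type :=
  Σ n : ℕ, (X.X n × SIdx n) × ↥(stdSimplex ℝ (Fin (n + 1)))

instance (X : SimpSpace) : TopologicalSpace (FatSTotal X) :=
  inferInstanceAs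
    (TopologicalSpace (Σ n : ℕ, (X.X n × SIdx n) × ↥(stdSimplex ℝ (Fin (n + 1)))))

/-- Face identifications for `X × S`. -/
def fatSRel (X : SimpSpace) : FatSTotal X → FatSTotal X → Prop :=
  fun a b => ∃ (m n : ℕ) (φ : Fin (m + 1) → Fin (n + 1)) (hφ : StrictMono φ)
    (x : X.X n) (g : SIdx n)
    (t : stdSimplex ℝ (Fin (m + 1))) (t' : stdSimplex ℝ (Fin (n + 1))),
    (∀ i, (t' : Fin (n + 1) → ℝ) i =
        ∑ j, if φ j = i then (t : Fin (m + 1) → ℝ) j else 0) ∧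
    a = ⟨m, (X.map ⟨φ, hφ.monotone⟩ x, ⟨g.1 ∘ φ, g.2.comp hφ⟩), t⟩ ∧ b = ⟨n, (x, g), t'⟩

/-- The fat realization `||X × S||`. -/
def FatSReal (X : SimpSpace) : Type := Quot (fatSRel X)

instance (X : SimpSpace) : TopologicalSpace (FatSReal X) :=
  inferInstanceAs (TopologicalSpace (Quot (fatSRel X)))

/-- A `k`-simplex of the barycentric subdivision `Sd Δ^n`: a strictly increasing
chain `A₀ ⊊ A₁ ⊊ ... ⊊ A_k` of nonempty subsets of `[n]`. -/
def SdChain (n k : ℕ) : Type :=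
  {A : Fin (k + 1) → Finset (Fin (n + 1)) //
    (∀ j, (A j).Nonempty) ∧ ∀ i j, i < j → A i ⊂ A j}

/-- The monotone map `u : [k] → [n]`, `j ↦ max A_j`, of a chain. -/
def maxMap {n k : ℕ} (A : SdChain n k) : Fin (k + 1) →o Fin (n + 1) where
  toFun j := (A.1 j).max' (A.2.1 j)
  monotone' i j hij := by
    rcases eq_or_lt_of_le hij with rfl | h
    · exact le_refl _
    · exact Finset.max'_subset _ (A.2.2 i j h).subset

/-- The strictly increasing sequence `|A₀| < |A₁| < ... < |A_k|` of a chain. -/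
def cardSeq {n k : ℕ} (A : SdChain n k) : SIdx k :=
  ⟨fun j => (A.1 j).card, fun i j hij => Finset.card_lt_card (A.2.2 i j hij)⟩

/-- The point of `Δ^n` corresponding to a point `t` of the subdivision simplex of the
chain `A`, i.e. `∑ⱼ tⱼ · (barycenter of A_j)`. -/
noncomputable def sdPoint {n k : ℕ} (A : SdChain n k)
    (t : stdSimplex ℝ (Fin (k + 1))) : ↥(stdSimplex ℝ (Fin (n + 1))) :=
  ⟨fun v => ∑ j, (t : Fin (k + 1) → ℝ) j *
      (if v ∈ A.1 j then ((A.1 j).card : ℝ)⁻¹ else 0), by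
    constructor
    · intro v
      refine Finset.sum_nonneg fun j _ => mul_nonneg (t.2.1 j) ?_
      split
      · positivity
      · exact le_refl 0
    · rw [Finset.sum_comm]
      have h : ∀ j : Fin (k + 1),
          (∑ v, (t : Fin (k + 1) → ℝ) j *
            (if v ∈ A.1 j then ((A.1 j).card : ℝ)⁻¹ else 0)) = (t : Fin (k + 1) → ℝ) j := by
        intro j
        rw [← Finset.mul_sum, Finset.sum_ite_mem, Finset.univ_inter, Finset.sum_const,
          nsmul_eq_mul, mul_inv_cancel₀, mul_one]
        exact_mod_cast Finset.card_ne_zero.2 (A.2.1 j)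
      rw [Finset.sum_congr rfl fun j _ => h j]
      exact t.2.2⟩

namespace SdTau

open Finset

variable {n k m N : ℕ}

lemma max'_congr {α : Type*} [LinearOrder α] {s t : Finset α} (h : s = t) (hs : s.Nonempty) :
    s.max' hs = t.max' (h ▸ hs) := by subst h; rfl

lemma chain_mono (A : SdChain n k) {i j : Fin (k + 1)} (h : i ≤ j) : A.1 i ⊆ A.1 j := by
  rcases eq_or_lt_of_le h with rfl | h
  · exact subset_rfl
  · exact (A.2.2 i j h).subset

lemma card_pos (A : SdChain n k) (j : Fin (k + 1)) : 0 < (A.1 j).card :=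
  Finset.card_pos.2 (A.2.1 j)

lemma card_strictMono (A : SdChain n k) {i j : Fin (k + 1)} (h : i < j) :
    (A.1 i).card < (A.1 j).card := Finset.card_lt_card (A.2.2 i j h)

lemma card_mono (A : SdChain n k) {i j : Fin (k + 1)} (h : i ≤ j) :
    (A.1 i).card ≤ (A.1 j).card := Finset.card_le_card (chain_mono A h)

/-- The maximal chain associated to a permutation `σ` of `[n]`:
`A_j = {σ 0, …, σ j}`. -/
def permChain (n : ℕ) (σ : Equiv.Perm (Fin (n + 1))) : SdChain n n :=
  ⟨fun j => (Finset.Iic j).image σ,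
   fun j => (Finset.nonempty_Iic).image σ,
   fun i j hij => (Finset.image_ssubset_image σ.injective).2 <| by
     rw [Finset.ssubset_iff_of_subset (Finset.Iic_subset_Iic.2 hij.le)]
     exact ⟨j, Finset.mem_Iic.2 le_rfl, fun hj => absurd (Finset.mem_Iic.1 hj) (not_le.2 hij)⟩⟩

lemma mem_permChain {σ : Equiv.Perm (Fin (n + 1))} {v : Fin (n + 1)} {j : Fin (n + 1)} :
    v ∈ (permChain n σ).1 j ↔ σ.symm v ≤ j := by
  simp only [permChain, Finset.mem_image, Finset.mem_Iic]
  constructor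
  · rintro ⟨i, hi, rfl⟩; simpa using hi
  · intro h; exact ⟨σ.symm v, h, by simp⟩

lemma card_permChain (σ : Equiv.Perm (Fin (n + 1))) (j : Fin (n + 1)) :
    ((permChain n σ).1 j).card = (j : ℕ) + 1 := by
  simp only [permChain]
  rw [Finset.card_image_of_injective _ σ.injective, Fin.card_Iic]

/-- Sorted coordinate sequence, extended by `0`. -/
noncomputable def Wseq (n : ℕ) (σ : Equiv.Perm (Fin (n + 1))) (s : Fin (n + 1) → ℝ) : ℕ → ℝ :=
  fun i => if h : i < n + 1 then s (σ ⟨i, h⟩) else 0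

/-- The barycentric weights of a point `s` sorted by `σ`. -/
noncomputable def tW (n : ℕ) (σ : Equiv.Perm (Fin (n + 1))) (s : Fin (n + 1) → ℝ) :
    Fin (n + 1) → ℝ :=
  fun j => ((j : ℕ) + 1 : ℝ) * (Wseq n σ s j - Wseq n σ s ((j : ℕ) + 1))

lemma telescope1 (f : ℕ → ℝ) (M : ℕ) (hf : f M = 0) :
    ∑ j ∈ Finset.range M, ((j : ℝ) + 1) * (f j - f (j + 1)) = ∑ j ∈ Finset.range M, f j := by
  have h1 : ∀ j : ℕ, ((j : ℝ) + 1) * (f j - f (j + 1)) =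
      (((j : ℝ) + 1) * f j - ((j : ℝ) + 1) * f (j + 1)) := fun j => by ring
  simp only [h1]
  rw [Finset.sum_sub_distrib]
  have h2 : ∑ j ∈ Finset.range M, ((j : ℝ) + 1) * f (j + 1) =
      ∑ j ∈ Finset.range M, (j : ℝ) * f j := by
    have h3 := Finset.sum_range_succ' (fun j => (j : ℝ) * f j) M
    have h4 : ∑ j ∈ Finset.range (M + 1), (j : ℝ) * f j =
        ∑ j ∈ Finset.range M, (j : ℝ) * f j + (M : ℝ) * f M := Finset.sum_range_succ _ M
    push_cast at h3
    rw [h4, hf, mul_zero, add_zero] at h3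
    rw [h3]; simp
  rw [h2]
  rw [← Finset.sum_sub_distrib]
  congr 1; funext j; ring

lemma telescope2 (f : ℕ → ℝ) (a b : ℕ) (hab : a ≤ b) :
    ∑ j ∈ Finset.Ico a b, (f j - f (j + 1)) = f a - f b := by
  rw [Finset.sum_Ico_eq_sum_range]
  have : ∀ i, f (a + i) - f (a + i + 1) = (fun i => f (a + i)) i - (fun i => f (a + i)) (i + 1) := by
    intro i; simp [Nat.add_assoc]
  simp only [this]
  rw [Finset.sum_range_sub' (fun i => f (a + i))]
  congr 2
  · omega

lemma tW_nonneg {σ : Equiv.Perm (Fin (n + 1))} {s : Fin (n + 1) → ℝ}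
    (hs : ∀ v, 0 ≤ s v) (hσ : Antitone (s ∘ σ)) (j : Fin (n + 1)) : 0 ≤ tW n σ s j := by
  unfold tW
  have h : Wseq n σ s ((j : ℕ) + 1) ≤ Wseq n σ s j := by
    unfold Wseq
    rw [dif_pos j.isLt]
    by_cases h2 : (j : ℕ) + 1 < n + 1
    · rw [dif_pos h2]
      exact hσ (show (⟨(j : ℕ), j.isLt⟩ : Fin (n + 1)) ≤ ⟨(j : ℕ) + 1, h2⟩ by
        simp [Fin.le_def])
    · rw [dif_neg h2]; exact hs _
  have : (0 : ℝ) ≤ ((j : ℕ) + 1 : ℝ) := by positivity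
  nlinarith

lemma tW_sum {σ : Equiv.Perm (Fin (n + 1))} {s : Fin (n + 1) → ℝ} :
    ∑ j, tW n σ s j = ∑ v, s v := by
  unfold tW
  rw [Fin.sum_univ_eq_sum_range (fun j => ((j : ℝ) + 1) * (Wseq n σ s j - Wseq n σ s (j + 1)))]
  rw [telescope1 _ _ (by simp [Wseq])]
  rw [← Fin.sum_univ_eq_sum_range (fun j => Wseq n σ s j)]
  have : ∀ j : Fin (n + 1), Wseq n σ s (j : ℕ) = s (σ j) := by
    intro j; unfold Wseq; rw [dif_pos j.isLt]
  simp only [this]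
  exact Equiv.sum_comp σ s

lemma tW_mem {σ : Equiv.Perm (Fin (n + 1))} {s : Fin (n + 1) → ℝ}
    (hs : s ∈ stdSimplex ℝ (Fin (n + 1))) (hσ : Antitone (s ∘ σ)) :
    tW n σ s ∈ stdSimplex ℝ (Fin (n + 1)) :=
  ⟨tW_nonneg hs.1 hσ, by rw [tW_sum]; exact hs.2⟩

/-- Identity 4: the subdivision point of the permutation chain with weights `tW`
recovers `s`. -/
lemma sdPoint_permChain {σ : Equiv.Perm (Fin (n + 1))} (s : ↥(stdSimplex ℝ (Fin (n + 1))))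
    (hσ : Antitone ((s : Fin (n + 1) → ℝ) ∘ σ)) :
    sdPoint (permChain n σ) ⟨tW n σ s, tW_mem s.2 hσ⟩ = s := by
  apply Subtype.ext
  funext v
  show ∑ j, tW n σ (s : Fin (n + 1) → ℝ) j *
      (if v ∈ (permChain n σ).1 j then (((permChain n σ).1 j).card : ℝ)⁻¹ else 0)
      = (s : Fin (n + 1) → ℝ) v
  set a : ℕ := (σ.symm v : ℕ) with ha
  have hterm : ∀ j : Fin (n + 1), tW n σ (s : Fin (n + 1) → ℝ) j *
      (if v ∈ (permChain n σ).1 j then (((permChain n σ).1 j).card : ℝ)⁻¹ else 0) =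
      if a ≤ (j : ℕ) then
        (Wseq n σ (s : Fin (n + 1) → ℝ) (j : ℕ) - Wseq n σ (s : Fin (n + 1) → ℝ) ((j : ℕ) + 1))
      else 0 := by
    intro j
    rw [card_permChain]
    by_cases h : σ.symm v ≤ j
    · rw [if_pos (mem_permChain.2 h), if_pos (by exact_mod_cast h)]
      unfold tW
      have hne : ((j : ℕ) + 1 : ℝ) ≠ 0 := by positivity
      field_simp
      push_cast; ring
    · rw [if_neg (fun hm => h (mem_permChain.1 hm)), if_neg (by exact_mod_cast h), mul_zero]
  rw [Finset.sum_congr rfl (fun j _ => hterm j)]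
  rw [Fin.sum_univ_eq_sum_range (fun j => if a ≤ j then
    (Wseq n σ (s : Fin (n + 1) → ℝ) j - Wseq n σ (s : Fin (n + 1) → ℝ) (j + 1)) else 0)]
  rw [← Finset.sum_filter]
  have hfil : (Finset.range (n + 1)).filter (fun j => a ≤ j) = Finset.Ico a (n + 1) := by
    ext j; simp [Finset.mem_Ico, Finset.mem_filter, Finset.mem_range]; omega
  rw [hfil, telescope2 _ _ _ (by have := (σ.symm v).isLt; omega)]
  have h1 : Wseq n σ (s : Fin (n + 1) → ℝ) (n + 1) = 0 := by simp [Wseq]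
  have h2 : Wseq n σ (s : Fin (n + 1) → ℝ) a = (s : Fin (n + 1) → ℝ) v := by
    unfold Wseq
    rw [dif_pos (σ.symm v).isLt]
    have : (⟨a, (σ.symm v).isLt⟩ : Fin (n + 1)) = σ.symm v := Fin.ext rfl
    rw [this]; simp
  rw [h1, h2, sub_zero]

/-- Restriction of a chain along a strictly monotone map of index sets. -/
def chainComp (A : SdChain n k) (δ : Fin (m + 1) → Fin (k + 1)) (hδ : StrictMono δ) :
    SdChain n m :=
  ⟨fun j => A.1 (δ j), fun j => A.2.1 _, fun i j hij => A.2.2 _ _ (hδ hij)⟩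

/-- Image of a chain under an injective, strictly monotone map `[n'] → [n]`. -/
def chainImage (A : SdChain n k) (φ : Fin (n + 1) → Fin (N + 1)) (hφ : StrictMono φ) :
    SdChain N k :=
  ⟨fun j => (A.1 j).image φ, fun j => (A.2.1 j).image φ,
   fun i j hij => (Finset.image_ssubset_image hφ.injective).2 (A.2.2 i j hij)⟩

lemma maxMap_chainComp (A : SdChain n k) (δ : Fin (m + 1) → Fin (k + 1)) (hδ : StrictMono δ) :
    maxMap (chainComp A δ hδ) = (maxMap A).comp ⟨δ, hδ.monotone⟩ := rfl

lemma cardSeq_chainComp (A : SdChain n k) (δ : Fin (m + 1) → Fin (k + 1)) (hδ : StrictMono δ) :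
    (cardSeq (chainComp A δ hδ)).1 = (cardSeq A).1 ∘ δ := rfl

lemma maxMap_chainImage (A : SdChain n k) (φ : Fin (n + 1) → Fin (N + 1)) (hφ : StrictMono φ) :
    maxMap (chainImage A φ hφ) = (⟨φ, hφ.monotone⟩ : Fin (n + 1) →o Fin (N + 1)).comp (maxMap A) := by
  apply OrderHom.ext
  funext j
  show ((chainImage A φ hφ).1 j).max' ((chainImage A φ hφ).2.1 j)
      = φ ((A.1 j).max' (A.2.1 j))
  apply le_antisymm
  · apply Finset.max'_le
    intro y hy
    obtain ⟨a, ha, rfl⟩ := Finset.mem_image.1 hy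
    exact hφ.monotone (Finset.le_max' _ a ha)
  · exact Finset.le_max' _ _ (Finset.mem_image_of_mem φ ((A.1 j).max'_mem (A.2.1 j)))

lemma cardSeq_chainImage (A : SdChain n k) (φ : Fin (n + 1) → Fin (N + 1)) (hφ : StrictMono φ) :
    cardSeq (chainImage A φ hφ) = cardSeq A := by
  apply Subtype.ext
  funext j
  exact Finset.card_image_of_injective _ hφ.injective

/-- The canonical representative of `(x, A, t)` in the total space of `‖X × S‖`. -/
def TPt (X : SimpSpace) {n k : ℕ} (x : X.X n) (A : SdChain n k)
    (t : ↥(stdSimplex ℝ (Fin (k + 1)))) : FatSTotal X :=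
  ⟨k, (X.map (maxMap A) x, cardSeq A), t⟩

/-- Restriction lemma: restricting a chain to a set of indices containing the support
of `t` does not change the class in `‖X × S‖`. -/
lemma restrict_eq (X : SimpSpace) (x : X.X n) (A : SdChain n k)
    (t : ↥(stdSimplex ℝ (Fin (k + 1)))) (δ : Fin (m + 1) → Fin (k + 1)) (hδ : StrictMono δ)
    (hsupp : ∀ i, (t : Fin (k + 1) → ℝ) i ≠ 0 → ∃ j, δ j = i)
    (r : ↥(stdSimplex ℝ (Fin (m + 1)))) (hr : (r : Fin (m + 1) → ℝ) = (t : Fin (k + 1) → ℝ) ∘ δ) :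
    Quot.mk (fatSRel X) (TPt X x (chainComp A δ hδ) r) = Quot.mk (fatSRel X) (TPt X x A t) := by
  apply Quot.sound
  refine ⟨m, k, δ, hδ, X.map (maxMap A) x, cardSeq A, r, t, ?_, ?_, rfl⟩
  · intro i
    by_cases hi : ∃ j, δ j = i
    · obtain ⟨j0, hj0⟩ := hi
      rw [Finset.sum_eq_single j0]
      · rw [if_pos hj0, hr]; simp [hj0]
      · intro j _ hj
        rw [if_neg (fun h => hj (hδ.injective (h.trans hj0.symm)))]
      · intro h; exact absurd (Finset.mem_univ j0) h
    · rw [Finset.sum_eq_zero (fun j _ => if_neg (fun h => hi ⟨j, h⟩))]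
      by_contra h
      exact hi (hsupp i h)
  · rw [show X.map ⟨δ, hδ.monotone⟩ (X.map (maxMap A) x)
          = X.map (maxMap (chainComp A δ hδ)) x from by rw [X.map_comp, maxMap_chainComp],
        show (⟨(cardSeq A).1 ∘ δ, (cardSeq A).2.comp hδ⟩ : SIdx m)
          = cardSeq (chainComp A δ hδ) from Subtype.ext rfl]
    rfl

lemma sdPoint_chainComp (A : SdChain n k) (t : ↥(stdSimplex ℝ (Fin (k + 1))))
    (δ : Fin (m + 1) → Fin (k + 1)) (hδ : StrictMono δ)
    (hsupp : ∀ i, (t : Fin (k + 1) → ℝ) i ≠ 0 → ∃ j, δ j = i)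
    (r : ↥(stdSimplex ℝ (Fin (m + 1)))) (hr : (r : Fin (m + 1) → ℝ) = (t : Fin (k + 1) → ℝ) ∘ δ) :
    sdPoint (chainComp A δ hδ) r = sdPoint A t := by
  apply Subtype.ext
  funext v
  show ∑ j, (r : Fin (m + 1) → ℝ) j *
      (if v ∈ (chainComp A δ hδ).1 j then (((chainComp A δ hδ).1 j).card : ℝ)⁻¹ else 0)
      = ∑ i, (t : Fin (k + 1) → ℝ) i * (if v ∈ A.1 i then ((A.1 i).card : ℝ)⁻¹ else 0)
  symm
  rw [← Finset.sum_subset (Finset.subset_univ (Finset.univ.image δ))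
      (fun i _ hi => by
        have ht : (t : Fin (k + 1) → ℝ) i = 0 := by
          by_contra h
          obtain ⟨j, hj⟩ := hsupp i h
          exact hi (Finset.mem_image.2 ⟨j, Finset.mem_univ j, hj⟩)
        rw [ht, zero_mul])]
  rw [Finset.sum_image (fun a _ b _ h => hδ.injective h)]
  apply Finset.sum_congr rfl
  intro j _
  rw [hr]
  rfl

/-- The level values `c_p = ∑_{l ≥ p} t_l / |A_l|`. -/
noncomputable def cFun (A : SdChain n k) (t : ↥(stdSimplex ℝ (Fin (k + 1)))) : ℕ → ℝ :=
  fun p => ∑ l : Fin (k + 1),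
    if p ≤ (l : ℕ) then (t : Fin (k + 1) → ℝ) l * ((A.1 l).card : ℝ)⁻¹ else 0

lemma term_pos (A : SdChain n k) {t : ↥(stdSimplex ℝ (Fin (k + 1)))}
    (ht : ∀ j, (t : Fin (k + 1) → ℝ) j ≠ 0) (l : Fin (k + 1)) :
    0 < (t : Fin (k + 1) → ℝ) l * ((A.1 l).card : ℝ)⁻¹ :=
  mul_pos (lt_of_le_of_ne (t.2.1 l) (Ne.symm (ht l)))
    (inv_pos.2 (by exact_mod_cast card_pos A l))

lemma term_nonneg (A : SdChain n k) (t : ↥(stdSimplex ℝ (Fin (k + 1)))) (l : Fin (k + 1)) :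
    0 ≤ (t : Fin (k + 1) → ℝ) l * ((A.1 l).card : ℝ)⁻¹ :=
  mul_nonneg (t.2.1 l) (inv_nonneg.2 (by positivity))

lemma cFun_rec (A : SdChain n k) (t : ↥(stdSimplex ℝ (Fin (k + 1)))) (j : Fin (k + 1)) :
    cFun A t (j : ℕ) =
      (t : Fin (k + 1) → ℝ) j * ((A.1 j).card : ℝ)⁻¹ + cFun A t ((j : ℕ) + 1) := by
  unfold cFun
  have hsingle : (t : Fin (k + 1) → ℝ) j * ((A.1 j).card : ℝ)⁻¹
      = ∑ l : Fin (k + 1), if l = j then (t : Fin (k + 1) → ℝ) l * ((A.1 l).card : ℝ)⁻¹ else 0 := by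
    rw [Finset.sum_ite_eq' Finset.univ j]
    simp
  rw [hsingle, ← Finset.sum_add_distrib]
  apply Finset.sum_congr rfl
  intro l _
  by_cases h1 : l = j
  · subst h1; simp
  · have hne : (l : ℕ) ≠ (j : ℕ) := fun h => h1 (Fin.ext h)
    rw [if_neg h1, zero_add]
    by_cases h2 : (j : ℕ) ≤ (l : ℕ)
    · rw [if_pos h2, if_pos (by omega)]
    · rw [if_neg h2, if_neg (by omega)]

lemma cFun_anti (A : SdChain n k) (t : ↥(stdSimplex ℝ (Fin (k + 1)))) :
    Antitone (cFun A t) := by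
  intro p q hpq
  apply Finset.sum_le_sum
  intro l _
  by_cases h : q ≤ (l : ℕ)
  · rw [if_pos h, if_pos (le_trans hpq h)]
  · rw [if_neg h]
    by_cases h2 : p ≤ (l : ℕ)
    · rw [if_pos h2]; exact term_nonneg A t l
    · rw [if_neg h2]

lemma cFun_top (A : SdChain n k) (t : ↥(stdSimplex ℝ (Fin (k + 1)))) {p : ℕ} (hp : k < p) :
    cFun A t p = 0 := by
  unfold cFun
  apply Finset.sum_eq_zero
  intro l _
  rw [if_neg (by have := l.isLt; omega)]

lemma cFun_pos (A : SdChain n k) {t : ↥(stdSimplex ℝ (Fin (k + 1)))}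
    (ht : ∀ j, (t : Fin (k + 1) → ℝ) j ≠ 0) {p : ℕ} (hp : p ≤ k) : 0 < cFun A t p := by
  have h1 : cFun A t k = (t : Fin (k + 1) → ℝ) (Fin.last k) * ((A.1 (Fin.last k)).card : ℝ)⁻¹ := by
    have := cFun_rec A t (Fin.last k)
    rw [show ((Fin.last k : Fin (k + 1)) : ℕ) = k from rfl] at this
    rw [this, cFun_top A t (by omega), add_zero]
  calc (0 : ℝ) < cFun A t k := by rw [h1]; exact term_pos A ht _
    _ ≤ cFun A t p := cFun_anti A t hp

lemma sdPoint_apply (A : SdChain n k) (t : ↥(stdSimplex ℝ (Fin (k + 1)))) (v : Fin (n + 1)) :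
    ((sdPoint A t : ↥(stdSimplex ℝ (Fin (n + 1)))) : Fin (n + 1) → ℝ) v =
      ∑ l, (t : Fin (k + 1) → ℝ) l * (if v ∈ A.1 l then ((A.1 l).card : ℝ)⁻¹ else 0) := rfl

/-- F3: the superlevel set of `s = sdPoint A t` at `c_j` is exactly `A_j`. -/
lemma superlevel_eq (A : SdChain n k) {t : ↥(stdSimplex ℝ (Fin (k + 1)))}
    (ht : ∀ j, (t : Fin (k + 1) → ℝ) j ≠ 0) (j : Fin (k + 1)) (v : Fin (n + 1)) :
    cFun A t (j : ℕ) ≤ ((sdPoint A t : ↥(stdSimplex ℝ (Fin (n + 1)))) : Fin (n + 1) → ℝ) v ↔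
      v ∈ A.1 j := by
  rw [sdPoint_apply]
  constructor
  · intro h
    by_contra hv
    have h1 : ∑ l, (t : Fin (k + 1) → ℝ) l * (if v ∈ A.1 l then ((A.1 l).card : ℝ)⁻¹ else 0)
        ≤ cFun A t ((j : ℕ) + 1) := by
      apply Finset.sum_le_sum
      intro l _
      by_cases hl : (j : ℕ) + 1 ≤ (l : ℕ)
      · rw [if_pos hl]
        by_cases hm : v ∈ A.1 l
        · rw [if_pos hm]
        · rw [if_neg hm, mul_zero]; exact term_nonneg A t l
      · have hlj : l ≤ j := by rw [Fin.le_def]; omega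
        rw [if_neg (fun hm => hv (chain_mono A hlj hm)), mul_zero, if_neg hl]
    have h2 := cFun_rec A t j
    have h3 := term_pos A ht j
    linarith
  · intro hv
    apply Finset.sum_le_sum
    intro l _
    by_cases hl : (j : ℕ) ≤ (l : ℕ)
    · rw [if_pos hl, if_pos (chain_mono A (Fin.le_def.mpr hl) hv)]
    · rw [if_neg hl]
      exact mul_nonneg (t.2.1 l) (by positivity)

/-- The value of `sdPoint A t` at any vertex is `0` or one of the level values. -/
lemma sdPoint_value (A : SdChain n k) (t : ↥(stdSimplex ℝ (Fin (k + 1)))) (v : Fin (n + 1)) :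
    ((sdPoint A t : ↥(stdSimplex ℝ (Fin (n + 1)))) : Fin (n + 1) → ℝ) v = 0 ∨
      ∃ l : Fin (k + 1),
        ((sdPoint A t : ↥(stdSimplex ℝ (Fin (n + 1)))) : Fin (n + 1) → ℝ) v = cFun A t (l : ℕ) := by
  by_cases hv : v ∈ A.1 (Fin.last k)
  · right
    have hne : (Finset.univ.filter (fun l => v ∈ A.1 l)).Nonempty :=
      ⟨Fin.last k, by simp [hv]⟩
    set l0 := (Finset.univ.filter (fun l => v ∈ A.1 l)).min' hne with hl0
    have hl0mem : v ∈ A.1 l0 := by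
      have := Finset.min'_mem _ hne
      rw [Finset.mem_filter] at this
      exact this.2
    refine ⟨l0, ?_⟩
    rw [sdPoint_apply]
    unfold cFun
    apply Finset.sum_congr rfl
    intro l _
    by_cases hl : (l0 : ℕ) ≤ (l : ℕ)
    · rw [if_pos hl, if_pos (chain_mono A (Fin.le_def.mpr hl) hl0mem)]
    · have hlt : l < l0 := by rw [Fin.lt_def]; omega
      have hnm : v ∉ A.1 l := fun hm =>
        absurd (Finset.min'_le _ l (by simp [hm])) (not_le.2 hlt)
      rw [if_neg hl, if_neg hnm, mul_zero]
  · left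
    rw [sdPoint_apply]
    apply Finset.sum_eq_zero
    intro l _
    rw [if_neg (fun hm => hv (chain_mono A (Fin.le_last l) hm)), mul_zero]

/-- Counting lemma for antitone sequences. -/
lemma antitone_count {M : ℕ} (W : Fin (M + 1) → ℝ) (hW : Antitone W) (x : ℝ) (i : Fin (M + 1)) :
    x ≤ W i ↔ (i : ℕ) < (Finset.univ.filter (fun i' => x ≤ W i')).card := by
  constructor
  · intro h
    have hsub : Finset.Iic i ⊆ Finset.univ.filter (fun i' => x ≤ W i') := by
      intro i' hi'
      rw [Finset.mem_filter]
      exact ⟨Finset.mem_univ _, le_trans h (hW (Finset.mem_Iic.1 hi'))⟩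
    have hc := Finset.card_le_card hsub
    rw [Fin.card_Iic] at hc
    omega
  · intro h
    by_contra hx
    have hsub : Finset.univ.filter (fun i' => x ≤ W i') ⊆ Finset.Iio i := by
      intro i' hi'
      rw [Finset.mem_filter] at hi'
      rw [Finset.mem_Iio]
      by_contra hle
      exact hx (le_trans hi'.2 (hW (not_lt.1 hle)))
    have hc := Finset.card_le_card hsub
    rw [Fin.card_Iio] at hc
    omega

lemma count_perm {M : ℕ} (σ : Equiv.Perm (Fin (M + 1))) (s : Fin (M + 1) → ℝ) (x : ℝ) :
    (Finset.univ.filter (fun i => x ≤ s (σ i))).card =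
      (Finset.univ.filter (fun v => x ≤ s v)).card := by
  apply Finset.card_bij (fun i _ => σ i)
  · intro a ha
    exact Finset.mem_filter.2 ⟨Finset.mem_univ _, (Finset.mem_filter.1 ha).2⟩
  · intro a _ b _ h
    exact σ.injective h
  · intro b hb
    rw [Finset.mem_filter] at hb
    exact ⟨σ.symm b, Finset.mem_filter.2 ⟨Finset.mem_univ _, by simpa using hb.2⟩, by simp⟩

/-- The key lemma: for a chain with full support and any sorting permutation of its
subdivision point, the permutation-chain representative agrees with the chain
representative in `‖X × S‖`. -/
lemma keyFull (X : SimpSpace) (x : X.X n) (A : SdChain n k)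
    (t : ↥(stdSimplex ℝ (Fin (k + 1))))
    (ht : ∀ j, (t : Fin (k + 1) → ℝ) j ≠ 0) (σ : Equiv.Perm (Fin (n + 1)))
    (hσ : Antitone ((sdPoint A t).1 ∘ σ))
    (hmem : tW n σ (sdPoint A t).1 ∈ stdSimplex ℝ (Fin (n + 1))) :
    Quot.mk (fatSRel X) ⟨n, (X.map (maxMap (permChain n σ)) x, cardSeq (permChain n σ)),
        ⟨tW n σ (sdPoint A t).1, hmem⟩⟩
      = Quot.mk (fatSRel X) (TPt X x A t) := by
  set s : Fin (n + 1) → ℝ := (sdPoint A t).1 with hs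
  have hcard_le : ∀ j : Fin (k + 1), (A.1 j).card ≤ n + 1 := fun j => by
    simpa using Finset.card_le_univ (A.1 j)
  have hφlt : ∀ j : Fin (k + 1), (A.1 j).card - 1 < n + 1 := fun j => by
    have := hcard_le j; omega
  set φ : Fin (k + 1) → Fin (n + 1) := fun j => ⟨(A.1 j).card - 1, hφlt j⟩ with hφdef
  have hφval : ∀ j, (φ j : ℕ) = (A.1 j).card - 1 := fun j => by rw [hφdef]
  have hφ : StrictMono φ := by
    intro i j hij
    have h1 := card_strictMono A hij
    have h2 := card_pos A i
    rw [Fin.lt_def, hφval, hφval]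
    omega
  have hstar : ∀ (j : Fin (k + 1)) (i : Fin (n + 1)),
      (i : ℕ) < (A.1 j).card ↔ cFun A t (j : ℕ) ≤ s (σ i) := by
    intro j i
    have h1 := antitone_count (fun i => s (σ i)) hσ (cFun A t (j : ℕ)) i
    rw [count_perm σ s] at h1
    have h2 : Finset.univ.filter (fun v => cFun A t (j : ℕ) ≤ s v) = A.1 j := by
      ext v
      simp only [Finset.mem_filter, Finset.mem_univ, true_and]
      rw [hs]
      exact superlevel_eq A ht j v
    rw [h2] at h1
    exact h1.symm
  have hWval : ∀ (p : ℕ) (hp : p < n + 1) (j : Fin (k + 1)), p < (A.1 j).card →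
      (∀ j' : Fin (k + 1), j' < j → (A.1 j').card ≤ p) →
      s (σ ⟨p, hp⟩) = cFun A t (j : ℕ) := by
    intro p hp j h1 h2
    have hle1 : cFun A t (j : ℕ) ≤ s (σ ⟨p, hp⟩) := (hstar j ⟨p, hp⟩).1 h1
    rcases sdPoint_value A t (σ ⟨p, hp⟩) with h0 | ⟨l, hl⟩
    · replace h0 : s (σ ⟨p, hp⟩) = 0 := h0
      exfalso
      have hpos := cFun_pos A ht (p := (j : ℕ)) (by have := j.isLt; omega)
      rw [h0] at hle1
      linarith
    · replace hl : s (σ ⟨p, hp⟩) = cFun A t (l : ℕ) := hl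
      rw [hl]
      rcases lt_or_ge l j with hlj | hlj
      · exfalso
        have h3 := h2 l hlj
        have h4 := (hstar l ⟨p, hp⟩).2 (le_of_eq hl.symm)
        simp only [Fin.val_mk] at h4
        omega
      · have h4 : cFun A t (l : ℕ) ≤ cFun A t (j : ℕ) :=
          cFun_anti A t (by exact_mod_cast hlj)
        rw [hl] at hle1
        linarith
  have hW_eq : ∀ (p : ℕ) (hp : p < n + 1), Wseq n σ s p = s (σ ⟨p, hp⟩) := by
    intro p hp; unfold Wseq; rw [dif_pos hp]
  have hW_zero_big : ∀ p : ℕ, (A.1 (Fin.last k)).card ≤ p → Wseq n σ s p = 0 := by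
    intro p hple
    by_cases hp : p < n + 1
    · rw [hW_eq p hp]
      rcases sdPoint_value A t (σ ⟨p, hp⟩) with h0 | ⟨l, hl⟩
      · replace h0 : s (σ ⟨p, hp⟩) = 0 := h0; exact h0
      · exfalso
        replace hl : s (σ ⟨p, hp⟩) = cFun A t (l : ℕ) := hl
        have h4 : cFun A t ((Fin.last k : Fin (k + 1)) : ℕ) ≤ s (σ ⟨p, hp⟩) := by
          rw [hl]
          exact cFun_anti A t (by have := l.isLt; simp; omega)
        have h5 := (hstar (Fin.last k) ⟨p, hp⟩).2 h4
        simp only [Fin.val_mk] at h5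
        omega
    · unfold Wseq; rw [dif_neg hp]
  have hb : ∀ i : Fin (n + 1),
      tW n σ s i = ∑ j, if φ j = i then (t : Fin (k + 1) → ℝ) j else 0 := by
    intro i
    by_cases hex : ∃ j, φ j = i
    · obtain ⟨j, hj⟩ := hex
      have hcardj : (i : ℕ) + 1 = (A.1 j).card := by
        have hval := congrArg Fin.val hj
        rw [hφval] at hval
        have := card_pos A j
        omega
      have hRHS : (∑ j', if φ j' = i then (t : Fin (k + 1) → ℝ) j' else 0)
          = (t : Fin (k + 1) → ℝ) j := by
        rw [Finset.sum_eq_single j]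
        · rw [if_pos hj]
        · intro j' _ hj'
          rw [if_neg (fun h => hj' (hφ.injective (h.trans hj.symm)))]
        · intro h; exact absurd (Finset.mem_univ j) h
      rw [hRHS]
      have hWi : Wseq n σ s (i : ℕ) = cFun A t (j : ℕ) := by
        rw [hW_eq _ i.isLt]
        exact hWval (i : ℕ) i.isLt j (by omega)
          (fun j' hj' => by have := card_strictMono A hj'; omega)
      have hcne : ((A.1 j).card : ℝ) ≠ 0 := by
        have := card_pos A j; positivity
      by_cases hjlast : (j : ℕ) < k
      · set j1 : Fin (k + 1) := ⟨(j : ℕ) + 1, by omega⟩ with hj1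
        have hcard1 : (A.1 j).card < (A.1 j1).card :=
          card_strictMono A (by rw [Fin.lt_def, hj1]; simp)
        have hp1 : (i : ℕ) + 1 < n + 1 := by have := hcard_le j1; omega
        have hWi1 : Wseq n σ s ((i : ℕ) + 1) = cFun A t ((j : ℕ) + 1) := by
          rw [hW_eq _ hp1]
          have hres := hWval ((i : ℕ) + 1) hp1 j1 (by omega)
            (fun j' hj' => by
              have hj'le : j' ≤ j := by
                rw [Fin.le_def]
                rw [Fin.lt_def, hj1] at hj'
                simp at hj'
                omega
              have := card_mono A hj'le; omega)
          rw [hres, hj1]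
        unfold tW
        rw [hWi, hWi1, cFun_rec A t j, add_sub_cancel_right]
        have hic : ((i : ℕ) : ℝ) + 1 = ((A.1 j).card : ℝ) := by exact_mod_cast hcardj
        rw [hic]
        field_simp
      · have hjl : j = Fin.last k := Fin.ext (by have := j.isLt; simp; omega)
        have hWi1 : Wseq n σ s ((i : ℕ) + 1) = 0 := by
          apply hW_zero_big
          rw [← hjl]
          omega
        unfold tW
        rw [hWi, hWi1, sub_zero, cFun_rec A t j,
          cFun_top A t (p := (j : ℕ) + 1) (by rw [hjl]; simp), add_zero]
        have hic : ((i : ℕ) : ℝ) + 1 = ((A.1 j).card : ℝ) := by exact_mod_cast hcardj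
        rw [hic]
        field_simp
    · have hRHS : (∑ j', if φ j' = i then (t : Fin (k + 1) → ℝ) j' else 0) = 0 :=
        Finset.sum_eq_zero (fun j' _ => if_neg (fun h => hex ⟨j', h⟩))
      rw [hRHS]
      unfold tW
      by_cases hbig : (A.1 (Fin.last k)).card ≤ (i : ℕ)
      · rw [hW_zero_big _ hbig, hW_zero_big _ (by omega)]
        simp
      · have hlast : (i : ℕ) < (A.1 (Fin.last k)).card := not_le.1 hbig
        have hne : (Finset.univ.filter (fun j => (i : ℕ) < (A.1 j).card)).Nonempty :=
          ⟨Fin.last k, Finset.mem_filter.2 ⟨Finset.mem_univ _, hlast⟩⟩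
        set j0 := Finset.min' _ hne with hj0
        have hj0mem : (i : ℕ) < (A.1 j0).card :=
          (Finset.mem_filter.1 (Finset.min'_mem _ hne)).2
        have hj0min : ∀ j' : Fin (k + 1), j' < j0 → (A.1 j').card ≤ (i : ℕ) := by
          intro j' hj'
          by_contra hcon
          exact absurd
            (Finset.min'_le _ j' (Finset.mem_filter.2 ⟨Finset.mem_univ _, by omega⟩))
            (not_le.2 hj')
        have hne2 : (i : ℕ) + 1 ≠ (A.1 j0).card := by
          intro hcon
          exact hex ⟨j0, Fin.ext (by rw [hφval]; omega)⟩
        have hp1 : (i : ℕ) + 1 < n + 1 := by have := hcard_le j0; omega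
        have hWi : Wseq n σ s (i : ℕ) = cFun A t (j0 : ℕ) := by
          rw [hW_eq _ i.isLt]
          exact hWval _ _ j0 hj0mem hj0min
        have hWi1 : Wseq n σ s ((i : ℕ) + 1) = cFun A t (j0 : ℕ) := by
          rw [hW_eq _ hp1]
          exact hWval _ _ j0 (by omega)
            (fun j' hj' => le_trans (hj0min j' hj') (Nat.le_succ _))
        rw [hWi, hWi1]
        ring
  symm
  apply Quot.sound
  refine ⟨k, n, φ, hφ, X.map (maxMap (permChain n σ)) x, cardSeq (permChain n σ), t,
    ⟨tW n σ s, hmem⟩, hb, ?_, rfl⟩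
  have hchain : ∀ j : Fin (k + 1), (permChain n σ).1 (φ j) = A.1 j := by
    intro j
    ext v
    rw [mem_permChain]
    have h1 : (σ.symm v ≤ φ j) ↔ ((σ.symm v : ℕ) < (A.1 j).card) := by
      rw [Fin.le_def, hφval]
      have := card_pos A j
      omega
    rw [h1, hstar j (σ.symm v), Equiv.apply_symm_apply, hs]
    exact superlevel_eq A ht j v
  have hmax : X.map ⟨φ, hφ.monotone⟩ (X.map (maxMap (permChain n σ)) x)
      = X.map (maxMap A) x := by
    rw [X.map_comp]
    congr 1
    apply OrderHom.ext
    funext j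
    show ((permChain n σ).1 (φ j)).max' ((permChain n σ).2.1 (φ j)) = (A.1 j).max' (A.2.1 j)
    exact max'_congr (hchain j) _
  have hcs : (⟨(cardSeq (permChain n σ)).1 ∘ φ, (cardSeq (permChain n σ)).2.comp hφ⟩ : SIdx k)
      = cardSeq A := by
    apply Subtype.ext
    funext j
    show ((permChain n σ).1 (φ j)).card = (A.1 j).card
    rw [hchain j]
  rw [hmax, hcs]
  rfl

/-- Master lemma: for any chain and any sorting permutation of its subdivision point,
the two representatives agree in `‖X × S‖`. -/
lemma master (X : SimpSpace) (x : X.X n) (A : SdChain n k)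
    (t : ↥(stdSimplex ℝ (Fin (k + 1))))
    (σ : Equiv.Perm (Fin (n + 1))) (hσ : Antitone ((sdPoint A t).1 ∘ σ))
    (hmem : tW n σ (sdPoint A t).1 ∈ stdSimplex ℝ (Fin (n + 1))) :
    Quot.mk (fatSRel X) ⟨n, (X.map (maxMap (permChain n σ)) x, cardSeq (permChain n σ)),
        ⟨tW n σ (sdPoint A t).1, hmem⟩⟩
      = Quot.mk (fatSRel X) (TPt X x A t) := by
  classical
  set J : Finset (Fin (k + 1)) :=
    Finset.univ.filter (fun j => (t : Fin (k + 1) → ℝ) j ≠ 0) with hJ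
  have hJne : J.Nonempty := by
    by_contra h
    have hall : ∀ j, (t : Fin (k + 1) → ℝ) j = 0 := by
      intro j
      by_contra hj
      exact h ⟨j, Finset.mem_filter.2 ⟨Finset.mem_univ _, hj⟩⟩
    have hsum := t.2.2
    rw [Finset.sum_eq_zero (fun j _ => show t.1 j = 0 from hall j)] at hsum
    norm_num at hsum
  set m := J.card - 1 with hm
  have hJcard : J.card = m + 1 := by have := Finset.card_pos.2 hJne; omega
  set δe := Finset.orderEmbOfFin J hJcard with hδe
  have hδ : StrictMono (δe : Fin (m + 1) → Fin (k + 1)) := δe.strictMono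
  have hmemJ : ∀ i, i ∈ J ↔ ∃ j, δe j = i := by
    intro i
    have h1 := Finset.range_orderEmbOfFin J hJcard
    constructor
    · intro hi
      have h2 : i ∈ Set.range (δe : Fin (m + 1) → Fin (k + 1)) := by
        rw [hδe, h1]; exact hi
      exact h2
    · rintro ⟨j, rfl⟩
      exact Finset.orderEmbOfFin_mem J hJcard j
  have hsupp : ∀ i, (t : Fin (k + 1) → ℝ) i ≠ 0 → ∃ j, δe j = i := fun i hi =>
    (hmemJ i).1 (Finset.mem_filter.2 ⟨Finset.mem_univ _, hi⟩)
  have hrmem : ((t : Fin (k + 1) → ℝ) ∘ δe) ∈ stdSimplex ℝ (Fin (m + 1)) := by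
    constructor
    · intro j; exact t.2.1 _
    · have h1 : ∑ j, ((t : Fin (k + 1) → ℝ) ∘ δe) j
          = ∑ i ∈ Finset.univ.image (δe : Fin (m + 1) → Fin (k + 1)),
              (t : Fin (k + 1) → ℝ) i :=
        (Finset.sum_image (fun a _ b _ h => hδ.injective h)).symm
      have h2 : Finset.univ.image (δe : Fin (m + 1) → Fin (k + 1)) = J := by
        ext i
        rw [Finset.mem_image, hmemJ i]
        constructor
        · rintro ⟨j, _, rfl⟩; exact ⟨j, rfl⟩
        · rintro ⟨j, rfl⟩; exact ⟨j, Finset.mem_univ _, rfl⟩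
      have h3 : ∑ i ∈ J, (t : Fin (k + 1) → ℝ) i = ∑ i, (t : Fin (k + 1) → ℝ) i :=
        Finset.sum_subset (Finset.subset_univ J) (fun i _ hi => by
          by_contra hne
          exact hi (Finset.mem_filter.2 ⟨Finset.mem_univ _, hne⟩))
      rw [h1, h2, h3]
      exact t.2.2
  set r : ↥(stdSimplex ℝ (Fin (m + 1))) := ⟨(t : Fin (k + 1) → ℝ) ∘ δe, hrmem⟩ with hr
  have ht' : ∀ j, (r : Fin (m + 1) → ℝ) j ≠ 0 := fun j =>
    (Finset.mem_filter.1 (Finset.orderEmbOfFin_mem J hJcard j)).2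
  have hsd : sdPoint (chainComp A δe hδ) r = sdPoint A t :=
    sdPoint_chainComp A t δe hδ hsupp r rfl
  have hres := restrict_eq X x A t δe hδ hsupp r rfl
  rw [← hres]
  have hσ' : Antitone ((sdPoint (chainComp A δe hδ) r).1 ∘ σ) := by rw [hsd]; exact hσ
  have hkey := keyFull X x (chainComp A δe hδ) r ht' σ hσ'
    (by rw [hsd]; exact hmem)
  refine Eq.trans ?_ hkey
  exact congrArg (fun w => Quot.mk (fatSRel X)
    (⟨n, ((X.map (maxMap (permChain n σ)) x, cardSeq (permChain n σ)), w)⟩ : FatSTotal X))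
    (Subtype.ext (congrArg (fun z : ↥(stdSimplex ℝ (Fin (n + 1))) => tW n σ z.1) hsd.symm))

/-- A permutation sorting `s` into (weakly) decreasing order. -/
noncomputable def sortPerm {N : ℕ} (s : Fin (N + 1) → ℝ) : Equiv.Perm (Fin (N + 1)) :=
  Tuple.sort (fun i => -s i)

lemma antitone_sortPerm {N : ℕ} (s : Fin (N + 1) → ℝ) : Antitone (s ∘ sortPerm s) := by
  intro i j hij
  have h := Tuple.monotone_sort (fun i => -s i) hij
  simp only [Function.comp_apply] at h ⊢
  unfold sortPerm
  linarith [h]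

/-- The subdivision map on the total space. -/
noncomputable def Vmap (X : SimpSpace) : FatTotal X → FatSReal X := fun p =>
  Quot.mk (fatSRel X)
    ⟨p.1, (X.map (maxMap (permChain p.1 (sortPerm (p.2.2 : ↥(stdSimplex ℝ (Fin (p.1 + 1)))).1))) p.2.1,
        cardSeq (permChain p.1 (sortPerm (p.2.2 : ↥(stdSimplex ℝ (Fin (p.1 + 1)))).1))),
      ⟨tW p.1 (sortPerm (p.2.2 : ↥(stdSimplex ℝ (Fin (p.1 + 1)))).1)
          (p.2.2 : ↥(stdSimplex ℝ (Fin (p.1 + 1)))).1,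
        tW_mem (p.2.2 : ↥(stdSimplex ℝ (Fin (p.1 + 1)))).2 (antitone_sortPerm _)⟩⟩

lemma Vmaster (X : SimpSpace) (x : X.X n) (A : SdChain n k)
    (t : ↥(stdSimplex ℝ (Fin (k + 1)))) :
    Vmap X ⟨n, x, sdPoint A t⟩ = Quot.mk (fatSRel X) (TPt X x A t) :=
  master X x A t (sortPerm (sdPoint A t).1) (antitone_sortPerm _)
    (tW_mem (sdPoint A t).2 (antitone_sortPerm _))

lemma Vsigma (X : SimpSpace) (x : X.X N) (sp : ↥(stdSimplex ℝ (Fin (N + 1))))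
    (σ : Equiv.Perm (Fin (N + 1))) (hσ : Antitone (sp.1 ∘ σ)) :
    Vmap X ⟨N, x, sp⟩ = Quot.mk (fatSRel X)
      ⟨N, (X.map (maxMap (permChain N σ)) x, cardSeq (permChain N σ)),
        ⟨tW N σ sp.1, tW_mem sp.2 hσ⟩⟩ := by
  have h4 := sdPoint_permChain sp hσ
  conv_lhs => rw [← h4]
  exact Vmaster X x (permChain N σ) ⟨tW N σ sp, tW_mem sp.2 hσ⟩

lemma Vdescend (X : SimpSpace) : ∀ a b, fatRel X a b → Vmap X a = Vmap X b := by
  rintro a b ⟨m, n, φ, hφ, x, t, t', hpush, rfl, rfl⟩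
  have hσ := antitone_sortPerm (t : Fin (m + 1) → ℝ)
  set σ := sortPerm ((t : ↥(stdSimplex ℝ (Fin (m + 1)))) : Fin (m + 1) → ℝ) with hσdef
  set B := permChain m σ with hB
  set r : ↥(stdSimplex ℝ (Fin (m + 1))) := ⟨tW m σ t.1, tW_mem t.2 hσ⟩ with hrdef
  have hBt : sdPoint B r = t := sdPoint_permChain t hσ
  have hb' : t' = sdPoint (chainImage B φ hφ) r := by
    apply Subtype.ext
    funext v
    rw [show t'.1 v = _ from hpush v]
    show (∑ j, if φ j = v then (t : Fin (m + 1) → ℝ) j else 0)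
      = ∑ j, (r : Fin (m + 1) → ℝ) j *
          (if v ∈ ((chainImage B φ hφ).1 j) then (((chainImage B φ hφ).1 j).card : ℝ)⁻¹ else 0)
    by_cases hv : ∃ i0, φ i0 = v
    · obtain ⟨i0, hi0⟩ := hv
      have hmem : ∀ j : Fin (m + 1), v ∈ (chainImage B φ hφ).1 j ↔ i0 ∈ B.1 j := by
        intro j
        constructor
        · intro hm
          obtain ⟨a, ha, hav⟩ := Finset.mem_image.1 hm
          rwa [hφ.injective (hav.trans hi0.symm)] at ha
        · intro hm
          exact Finset.mem_image.2 ⟨i0, hm, hi0⟩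
      have hLHS : (∑ j, if φ j = v then (t : Fin (m + 1) → ℝ) j else 0)
          = (t : Fin (m + 1) → ℝ) i0 := by
        rw [Finset.sum_eq_single i0]
        · rw [if_pos hi0]
        · intro j _ hj
          rw [if_neg (fun h => hj (hφ.injective (h.trans hi0.symm)))]
        · intro h; exact absurd (Finset.mem_univ i0) h
      have hRHS : (∑ j, (r : Fin (m + 1) → ℝ) j *
          (if v ∈ ((chainImage B φ hφ).1 j) then (((chainImage B φ hφ).1 j).card : ℝ)⁻¹ else 0))
          = (sdPoint B r).1 i0 := by
        apply Finset.sum_congr rfl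
        intro j _
        congr 1
        rw [show ((chainImage B φ hφ).1 j).card = (B.1 j).card from
          Finset.card_image_of_injective _ hφ.injective]
        by_cases hm : i0 ∈ B.1 j
        · rw [if_pos ((hmem j).2 hm), if_pos hm]
        · rw [if_neg (fun hc => hm ((hmem j).1 hc)), if_neg hm]
      rw [hLHS, hRHS, hBt]; rfl
    · have hLHS : (∑ j, if φ j = v then (t : Fin (m + 1) → ℝ) j else 0) = 0 :=
        Finset.sum_eq_zero (fun j _ => if_neg (fun h => hv ⟨j, h⟩))
      have hRHS : (∑ j, (r : Fin (m + 1) → ℝ) j *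
          (if v ∈ ((chainImage B φ hφ).1 j) then (((chainImage B φ hφ).1 j).card : ℝ)⁻¹ else 0))
          = 0 := by
        apply Finset.sum_eq_zero
        intro j _
        rw [if_neg (fun hm => by
          obtain ⟨a, _, hav⟩ := Finset.mem_image.1 hm
          exact hv ⟨a, hav⟩), mul_zero]
      rw [hLHS, hRHS]
  calc Vmap X ⟨m, X.map ⟨φ, hφ.monotone⟩ x, t⟩
      = Vmap X ⟨m, X.map ⟨φ, hφ.monotone⟩ x, sdPoint B r⟩ := by rw [hBt]
    _ = @id (FatSReal X) (Quot.mk (fatSRel X) (TPt X (X.map ⟨φ, hφ.monotone⟩ x) B r)) := Vmaster X _ B r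
    _ = @id (FatSReal X) (Quot.mk (fatSRel X) (TPt X x (chainImage B φ hφ) r)) := by
        unfold TPt
        rw [X.map_comp, maxMap_chainImage B φ hφ, cardSeq_chainImage B φ hφ]
    _ = Vmap X ⟨n, x, sdPoint (chainImage B φ hφ) r⟩ := (Vmaster X x (chainImage B φ hφ) r).symm
    _ = Vmap X ⟨n, x, t'⟩ := by rw [← hb']

lemma isClosed_antitoneSet (N : ℕ) (σ : Equiv.Perm (Fin (N + 1))) (Y : Type)
    [TopologicalSpace Y] :
    IsClosed {p : Y × ↥(stdSimplex ℝ (Fin (N + 1))) | Antitone (p.2.1 ∘ σ)} := by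
  have heval : ∀ w : Fin (N + 1),
      Continuous (fun p : Y × ↥(stdSimplex ℝ (Fin (N + 1))) => p.2.1 w) := fun w =>
    ((continuous_apply w).comp continuous_subtype_val).comp continuous_snd
  have hset : {p : Y × ↥(stdSimplex ℝ (Fin (N + 1))) | Antitone (p.2.1 ∘ σ)}
      = ⋂ (i : Fin (N + 1)) (j : Fin (N + 1)),
          {p : Y × ↥(stdSimplex ℝ (Fin (N + 1))) | i ≤ j → p.2.1 (σ j) ≤ p.2.1 (σ i)} := by
    ext p
    simp only [Set.mem_iInter, Set.mem_setOf_eq]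
    exact ⟨fun h i j hij => h hij, fun h i j hij => h i j hij⟩
  rw [hset]
  refine isClosed_iInter (fun i => isClosed_iInter (fun j => ?_))
  by_cases hij : i ≤ j
  · have heq : {p : Y × ↥(stdSimplex ℝ (Fin (N + 1))) | i ≤ j → p.2.1 (σ j) ≤ p.2.1 (σ i)}
        = {p : Y × ↥(stdSimplex ℝ (Fin (N + 1))) | p.2.1 (σ j) ≤ p.2.1 (σ i)} := by
      ext p; simp [hij]
    rw [heq]
    exact isClosed_le (heval (σ j)) (heval (σ i))
  · have heq : {p : Y × ↥(stdSimplex ℝ (Fin (N + 1))) | i ≤ j → p.2.1 (σ j) ≤ p.2.1 (σ i)}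
        = Set.univ := by
      ext p; simp [hij]
    rw [heq]
    exact isClosed_univ

lemma continuous_tW (N : ℕ) (σ : Equiv.Perm (Fin (N + 1))) :
    Continuous (fun s : Fin (N + 1) → ℝ => tW N σ s) := by
  apply continuous_pi
  intro j
  have hW : ∀ p : ℕ, Continuous (fun s : Fin (N + 1) → ℝ => Wseq N σ s p) := by
    intro p
    unfold Wseq
    by_cases h : p < N + 1
    · simp only [dif_pos h]; exact continuous_apply _
    · simp only [dif_neg h]; exact continuous_const
  exact continuous_const.mul ((hW j).sub (hW ((j : ℕ) + 1)))

lemma continuous_Vmap (X : SimpSpace) : Continuous (Vmap X) := by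
  apply continuous_sigma
  intro N
  apply LocallyFinite.continuous
    (f := fun σ : Equiv.Perm (Fin (N + 1)) =>
      {p : X.X N × ↥(stdSimplex ℝ (Fin (N + 1))) | Antitone (p.2.1 ∘ σ)})
  · exact locallyFinite_of_finite _
  · rw [Set.eq_univ_iff_forall]
    intro p
    exact Set.mem_iUnion.2 ⟨sortPerm p.2.1, antitone_sortPerm _⟩
  · intro σ
    exact isClosed_antitoneSet N σ _
  · intro σ
    rw [continuousOn_iff_continuous_restrict]
    have hrw : Set.domRestrict {p : X.X N × ↥(stdSimplex ℝ (Fin (N + 1))) | Antitone (p.2.1 ∘ σ)}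
        (fun a => Vmap X ⟨N, a⟩)
        = fun q : ↥{p : X.X N × ↥(stdSimplex ℝ (Fin (N + 1))) | Antitone (p.2.1 ∘ σ)} =>
          Quot.mk (fatSRel X)
            ⟨N, (X.map (maxMap (permChain N σ)) q.1.1, cardSeq (permChain N σ)),
              ⟨tW N σ q.1.2.1, tW_mem q.1.2.2 q.2⟩⟩ := by
      funext q
      exact Vsigma X q.1.1 q.1.2 σ q.2
    rw [hrw]
    have hc1 : Continuous (fun q : ↥{p : X.X N × ↥(stdSimplex ℝ (Fin (N + 1))) |
        Antitone (p.2.1 ∘ σ)} => q.1.1) := continuous_fst.comp continuous_subtype_val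
    have hc2 : Continuous (fun q : ↥{p : X.X N × ↥(stdSimplex ℝ (Fin (N + 1))) |
        Antitone (p.2.1 ∘ σ)} => q.1.2) := continuous_snd.comp continuous_subtype_val
    have hc3 : Continuous (fun q : ↥{p : X.X N × ↥(stdSimplex ℝ (Fin (N + 1))) |
        Antitone (p.2.1 ∘ σ)} => q.1.2.1) := continuous_subtype_val.comp hc2
    exact continuous_quot_mk.comp (continuous_sigmaMk.comp
      ((((X.continuous_map _).comp hc1).prodMk continuous_const).prodMk
        (Continuous.subtype_mk ((continuous_tW N σ).comp hc3) _)))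

end SdTau
/-- the subdivision assignment
`τ_{n,k} : (x, A₀ ⊂ ... ⊂ A_k, t) ↦ (u*x, |A₀| < ... < |A_k|, t)`, `u(j) = max A_j`,
is compatible with face maps — if `y = dᵢ* x` and the coface `dᵢ` maps the chain `B`
bijectively onto the chain `A` (which avoids `i`), then the images agree in
`||X × S||` — and hence induces a well-defined continuous map
`τ : ||X|| → ||X × S||`. -/
theorem tau_compatible_and_welldefined (X : SimpSpace) :
    (∀ (n k : ℕ) (x : X.X (n + 1)) (i : Fin (n + 2)) (A : SdChain (n + 1) k)
      (B : SdChain n k) (y : X.X n) (t : stdSimplex ℝ (Fin (k + 1))),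
      y = X.map ⟨i.succAbove, (Fin.strictMono_succAbove i).monotone⟩ x →
      (∀ j, Finset.image i.succAbove (B.1 j) = A.1 j) →
      (Quot.mk (fatSRel X) ⟨k, (X.map (maxMap A) x, cardSeq A), t⟩ =
        Quot.mk (fatSRel X) ⟨k, (X.map (maxMap B) y, cardSeq B), t⟩)) ∧
    ∃ τ : C(FatReal X, FatSReal X),
      ∀ (n k : ℕ) (x : X.X n) (A : SdChain n k) (t : stdSimplex ℝ (Fin (k + 1))),
        τ (Quot.mk (fatRel X) ⟨n, x, sdPoint A t⟩) =
          Quot.mk (fatSRel X) ⟨k, (X.map (maxMap A) x, cardSeq A), t⟩ := by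
  constructor
  · intro n k x i A B y t hy himg
    subst hy
    have hstrict : StrictMono i.succAbove := Fin.strictMono_succAbove i
    have hAeq : A = SdTau.chainImage B i.succAbove hstrict := by
      apply Subtype.ext
      funext j
      exact (himg j).symm
    rw [hAeq, SdTau.maxMap_chainImage B _ hstrict, SdTau.cardSeq_chainImage B _ hstrict,
      ← X.map_comp]
  · refine ⟨⟨Quot.lift (SdTau.Vmap X) (SdTau.Vdescend X),
      continuous_quot_lift _ (SdTau.continuous_Vmap X)⟩, ?_⟩
    intro n k x A t
    exact SdTau.Vmaster X x A t
end

section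
/- With τ : ||X|| → ||X × S|| the map induced by barycentric subdivision (sending (x, A₀⊂...⊂A_k, t) ↦ (u*x, |A₀|<...<|A_k|, t) with u(j) = max(A_j)) and π : ||X × S|| → ||X|| the canonical projection, the composition π ∘ τ is homotopic to the identity of ||X||, via the linear homotopy from the identity of each subdivided simplex to the last-vertex map Sd(Δ^n) → Δ^n. -/
open Set

/-- The canonical projection `π : ||X × S|| → ||X||`. -/
def piFat (X : SimpSpace) : C(FatSReal X, FatReal X) :=
  ⟨Quot.lift (fun a => Quot.mk (fatRel X) ⟨a.1, a.2.1.1, a.2.2⟩)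
    (by
      rintro a b ⟨m, n, φ, hφ, x, g, t, t', ht, rfl, rfl⟩
      exact Quot.sound ⟨m, n, φ, hφ, x, t, t', ht, rfl, rfl⟩),
   by
    refine continuous_quot_lift _ (continuous_quot_mk.comp ?_)
    refine continuous_sigma fun n => ?_
    exact (continuous_sigmaMk (ι := ℕ)
        (σ := fun n => X.X n × ↥(stdSimplex ℝ (Fin (n + 1))))).comp
      ((continuous_fst.comp continuous_fst).prodMk continuous_snd)⟩

namespace PT

variable (X : SimpSpace)

abbrev Dl (n : ℕ) := ↥(stdSimplex ℝ (Fin (n+1)))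

def mkpt {n : ℕ} (x : X.X n) (t : Dl n) : FatReal X := Quot.mk (fatRel X) ⟨n, x, t⟩

lemma sum_push {r k : ℕ} (ι : Fin (r+1) → Fin (k+1)) (hι : Function.Injective ι)
    (v : Fin (k+1) → ℝ) (hv : ∀ i, (∀ j, ι j ≠ i) → v i = 0) :
    ∑ j, v (ι j) = ∑ i, v i := by
  have h1 : ∑ i ∈ Finset.univ.image ι, v i = ∑ j, v (ι j) :=
    Finset.sum_image (by intro a _ b _ h; exact hι h)
  rw [← h1]
  refine Finset.sum_subset (Finset.subset_univ _) ?_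
  intro i _ hi
  refine hv i fun j hj => hi ?_
  rw [← hj]; exact Finset.mem_image_of_mem ι (Finset.mem_univ j)

/-- compressed vector along an injection covering the support -/
def cvec {r k : ℕ} (vec : Dl k) (ι : Fin (r+1) → Fin (k+1)) (hι : StrictMono ι)
    (hsupp : ∀ i, (vec : Fin (k+1) → ℝ) i ≠ 0 → ∃ j, ι j = i) : Dl r :=
  ⟨fun j => (vec : Fin (k+1) → ℝ) (ι j), by
    constructor
    · intro j; exact vec.2.1 _
    · rw [sum_push ι hι.injective _ (fun i hi => by
        by_contra h
        obtain ⟨j, hj⟩ := hsupp i h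
        exact hi j hj)]
      exact vec.2.2⟩

lemma reduce {n k r : ℕ} (W : Fin (k+1) →o Fin (n+1)) (x : X.X n)
    (vec : Dl k) (ι : Fin (r+1) → Fin (k+1)) (hι : StrictMono ι)
    (hsupp : ∀ i, (vec : Fin (k+1) → ℝ) i ≠ 0 → ∃ j, ι j = i) :
    mkpt X (X.map W x) vec =
      mkpt X (X.map (W.comp ⟨ι, hι.monotone⟩) x) (cvec vec ι hι hsupp) := by
  have hmc : X.map (W.comp ⟨ι, hι.monotone⟩) x
      = X.map ⟨ι, hι.monotone⟩ (X.map W x) := (X.map_comp _ _ _).symm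
  refine (Quot.sound ?_).symm
  refine ⟨r, k, ι, hι, X.map W x, cvec vec ι hι hsupp, vec, ?_, ?_, rfl⟩
  · intro i
    by_cases h : ∃ j, ι j = i
    · obtain ⟨j0, rfl⟩ := h
      rw [Finset.sum_eq_single j0]
      · simp [cvec]; rfl
      · intro j _ hj
        exact if_neg (fun hh => hj (hι.injective hh))
      · intro hj; exact absurd (Finset.mem_univ j0) hj
    · push_neg at h
      have h0 : (vec : Fin (k+1) → ℝ) i = 0 := by
        by_contra hc
        obtain ⟨j, hj⟩ := hsupp i hc
        exact h j hj
      rw [h0, Finset.sum_eq_zero]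
      intro j _
      exact if_neg (h j)
  · rw [hmc]

lemma supp_nonempty {k : ℕ} (vec : Dl k) : ∃ i, (vec : Fin (k+1) → ℝ) i ≠ 0 := by
  by_contra h
  push_neg at h
  have : (1:ℝ) = 0 := by
    rw [← vec.2.2]; exact Finset.sum_eq_zero (fun i _ => h i)
  norm_num at this

/-- Central lemma: two representative points whose data match along an order isomorphism
of supports are equal in the fat realization. -/
lemma matched_eq {n k k' : ℕ} (W : Fin (k+1) →o Fin (n+1)) (W' : Fin (k'+1) →o Fin (n+1))
    (x : X.X n) (vec : Dl k) (vec' : Dl k')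
    (S : Finset (Fin (k+1))) (S' : Finset (Fin (k'+1)))
    (hS : ∀ i, (vec : Fin (k+1) → ℝ) i ≠ 0 → i ∈ S)
    (hS' : ∀ i, (vec' : Fin (k'+1) → ℝ) i ≠ 0 → i ∈ S')
    (e : ↥S ≃o ↥S')
    (hWe : ∀ i : ↥S, W i.1 = W' (e i).1)
    (hve : ∀ i : ↥S, (vec : Fin (k+1) → ℝ) i.1 = (vec' : Fin (k'+1) → ℝ) (e i).1) :
    mkpt X (X.map W x) vec = mkpt X (X.map W' x) vec' := by
  have hSne : S.Nonempty := by
    obtain ⟨i, hi⟩ := supp_nonempty vec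
    exact ⟨i, hS i hi⟩
  obtain ⟨rp, hrp⟩ : ∃ rp, S.card = rp + 1 :=
    ⟨S.card - 1, by have := Finset.card_pos.mpr hSne; omega⟩
  have hcard : S'.card = rp + 1 := by
    rw [← hrp, ← Fintype.card_coe, ← Fintype.card_coe]
    exact Fintype.card_congr e.symm.toEquiv
  set ι := S.orderEmbOfFin hrp with hιdef
  set ι' := S'.orderEmbOfFin hcard with hι'def
  have hmemι : ∀ j, ι j ∈ S := fun j => Finset.orderEmbOfFin_mem S hrp j
  have hsupp : ∀ i, (vec : Fin (k+1) → ℝ) i ≠ 0 → ∃ j, ι j = i := by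
    intro i hi
    have : i ∈ Set.range ι := by rw [Finset.range_orderEmbOfFin]; exact_mod_cast hS i hi
    exact this
  have hsupp' : ∀ i, (vec' : Fin (k'+1) → ℝ) i ≠ 0 → ∃ j, ι' j = i := by
    intro i hi
    have : i ∈ Set.range ι' := by rw [Finset.range_orderEmbOfFin]; exact_mod_cast hS' i hi
    exact this
  have key : ∀ j, ((e ⟨ι j, hmemι j⟩ : ↥S') : Fin (k'+1)) = ι' j := by
    have hsm : StrictMono (fun j : Fin (rp+1) => ((e ⟨ι j, hmemι j⟩ : ↥S') : Fin (k'+1))) := by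
      intro a b hab
      have h1 : (⟨ι a, hmemι a⟩ : ↥S) < ⟨ι b, hmemι b⟩ :=
        Subtype.mk_lt_mk.mpr (ι.strictMono hab)
      exact Subtype.coe_lt_coe.mpr (e.strictMono h1)
    have := Finset.orderEmbOfFin_unique hcard
      (f := fun j => ((e ⟨ι j, hmemι j⟩ : ↥S') : Fin (k'+1)))
      (fun j => (e ⟨ι j, hmemι j⟩).2) hsm
    intro j; exact congrFun this j
  rw [reduce X W x vec ι ι.strictMono hsupp, reduce X W' x vec' ι' ι'.strictMono hsupp']
  have hw : W.comp ⟨⇑ι, ι.strictMono.monotone⟩ = W'.comp ⟨⇑ι', ι'.strictMono.monotone⟩ := by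
    apply OrderHom.ext; funext j
    show W (ι j) = W' (ι' j)
    rw [← key j]
    exact hWe _
  have hv : cvec vec ι ι.strictMono hsupp = cvec vec' ι' ι'.strictMono hsupp' := by
    apply Subtype.ext; funext j
    show (vec : Fin (k+1) → ℝ) (ι j) = (vec' : Fin (k'+1) → ℝ) (ι' j)
    rw [← key j]
    exact hve _
  rw [hw, hv]

end PT
namespace PT
section Charts

variable {n : ℕ}

/-- `ρ` lists the coordinates of `s` in (weakly) decreasing order. -/
def IsChart (s : Fin (n+1) → ℝ) (ρ : Equiv.Perm (Fin (n+1))) : Prop :=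
  ∀ i j : Fin (n+1), i ≤ j → s (ρ j) ≤ s (ρ i)

noncomputable def chartOf (s : Fin (n+1) → ℝ) : Equiv.Perm (Fin (n+1)) :=
  Tuple.sort (fun i => -s i)

lemma isChart_chartOf (s : Fin (n+1) → ℝ) : IsChart s (chartOf s) := by
  intro i j hij
  have h := Tuple.monotone_sort (fun i => -s i) hij
  simp at h; exact h

lemma chart_apply_eq {s : Fin (n+1) → ℝ} {ρ ρ' : Equiv.Perm (Fin (n+1))}
    (hc : IsChart s ρ) (hc' : IsChart s ρ') : ∀ j, s (ρ j) = s (ρ' j) := by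
  have key : ∀ σ : Equiv.Perm (Fin (n+1)), IsChart s σ →
      (fun i => -s i) ∘ ⇑σ = (fun i => -s i) ∘ ⇑(Tuple.sort (fun i => -s i)) := by
    intro σ hσ
    refine Tuple.comp_sort_eq_comp_iff_monotone.mpr ?_
    intro i j hij
    simpa using hσ i j hij
  intro j
  have h1 := congrFun (key ρ hc) j
  have h2 := congrFun (key ρ' hc') j
  simp only [Function.comp_apply, neg_inj] at h1 h2
  rw [h1, h2]

/-- The `j`-th largest value of `s` (as a function on `ℕ`, with value `0` beyond the end). -/
noncomputable def wseq (s : Fin (n+1) → ℝ) (ρ : Equiv.Perm (Fin (n+1))) : ℕ → ℝ :=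
  fun j => if h : j < n+1 then s (ρ ⟨j, h⟩) else 0

lemma wseq_fin (s : Fin (n+1) → ℝ) (ρ) (j : Fin (n+1)) : wseq s ρ (j : ℕ) = s (ρ j) := by
  simp [wseq]
  intro h; exact absurd h (by have := j.isLt; omega)

lemma wseq_top (s : Fin (n+1) → ℝ) (ρ) {j : ℕ} (hj : n+1 ≤ j) : wseq s ρ j = 0 := by
  simp [wseq]; omega

lemma wseq_nonneg {s : Fin (n+1) → ℝ} (hs : ∀ i, 0 ≤ s i) (ρ) (j : ℕ) : 0 ≤ wseq s ρ j := by
  unfold wseq; split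
  · exact hs _
  · exact le_refl 0

lemma wseq_anti {s : Fin (n+1) → ℝ} (hs : ∀ i, 0 ≤ s i) {ρ} (hc : IsChart s ρ)
    {a b : ℕ} (hab : a ≤ b) : wseq s ρ b ≤ wseq s ρ a := by
  unfold wseq
  by_cases hb : b < n+1
  · have ha : a < n+1 := lt_of_le_of_lt hab hb
    rw [dif_pos hb, dif_pos ha]
    exact hc ⟨a, ha⟩ ⟨b, hb⟩ hab
  · rw [dif_neg hb]
    split
    · exact hs _
    · exact le_refl 0

lemma wseq_chart_eq {s : Fin (n+1) → ℝ} {ρ ρ'} (hc : IsChart s ρ) (hc' : IsChart s ρ') :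
    wseq s ρ = wseq s ρ' := by
  funext j
  unfold wseq
  split
  · exact chart_apply_eq hc hc' _
  · rfl

/-- The barycentric coordinates of `s` with respect to the flag of `ρ`. -/
noncomputable def Tvec (s : Fin (n+1) → ℝ) (ρ : Equiv.Perm (Fin (n+1))) : Fin (n+1) → ℝ :=
  fun j => ((j:ℝ)+1) * (wseq s ρ j - wseq s ρ (j+1))

lemma Tvec_nonneg {s : Fin (n+1) → ℝ} (hs : ∀ i, 0 ≤ s i) {ρ} (hc : IsChart s ρ) (j) :
    0 ≤ Tvec s ρ j := by
  have h := wseq_anti hs hc (Nat.le_succ (j:ℕ))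
  have : (0:ℝ) ≤ (j:ℝ)+1 := by positivity
  unfold Tvec; nlinarith

lemma Tvec_chart_eq {s : Fin (n+1) → ℝ} {ρ ρ'} (hc : IsChart s ρ) (hc' : IsChart s ρ') :
    Tvec s ρ = Tvec s ρ' := by
  unfold Tvec; rw [wseq_chart_eq hc hc']

lemma abel_sum (w : ℕ → ℝ) (N : ℕ) :
    ∑ j ∈ Finset.range N, ((j:ℝ)+1) * (w j - w (j+1))
      = (∑ j ∈ Finset.range N, w j) - N * w N := by
  induction N with
  | zero => simp
  | succ N ih =>
    rw [Finset.sum_range_succ, Finset.sum_range_succ, ih]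
    push_cast; ring

lemma tele_sum (w : ℕ → ℝ) (a N : ℕ) (ha : a < N) :
    ∑ j ∈ Finset.range N, (if a ≤ j then w j - w (j+1) else 0) = w a - w N := by
  induction N with
  | zero => omega
  | succ N ih =>
    rw [Finset.sum_range_succ]
    rcases Nat.lt_or_ge a N with h | h
    · rw [ih h, if_pos (by omega)]; ring
    · have haN : a = N := by omega
      subst haN
      rw [if_pos (le_refl a), Finset.sum_eq_zero, zero_add]
      intro j hj
      rw [if_neg (by simp at hj; omega)]

lemma Tvec_sum (s : Dl n) (ρ) : ∑ j, Tvec s.1 ρ j = 1 := by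
  have h1 : ∑ j, Tvec s.1 ρ j
      = ∑ j ∈ Finset.range (n+1), ((j:ℝ)+1) * (wseq s.1 ρ j - wseq s.1 ρ (j+1)) :=
    Fin.sum_univ_eq_sum_range (fun j => ((j:ℝ)+1) * (wseq s.1 ρ j - wseq s.1 ρ (j+1))) (n+1)
  have h2 : ∑ j ∈ Finset.range (n+1), wseq s.1 ρ j = ∑ j, s.1 (ρ j) := by
    rw [← Fin.sum_univ_eq_sum_range (fun j => wseq s.1 ρ j) (n+1)]
    exact Finset.sum_congr rfl (fun j _ => wseq_fin s.1 ρ j)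
  rw [h1, abel_sum, wseq_top s.1 ρ (le_refl (n+1)), h2, Equiv.sum_comp ρ s.1]
  rw [s.2.2]; ring

end Charts
end PT
namespace PT
section Chain

variable {n : ℕ}

/-- The full flag chain associated with an ordering of the coordinates. -/
def chainOf (ρ : Equiv.Perm (Fin (n+1))) : SdChain n n :=
  ⟨fun j => (Finset.Iic j).image ρ, by
    constructor
    · intro j
      exact ⟨ρ j, Finset.mem_image_of_mem ρ (Finset.mem_Iic.mpr (le_refl j))⟩
    · intro i j hij
      constructor
      · exact Finset.image_subset_image (Finset.Iic_subset_Iic.mpr hij.le)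
      · intro hsub
        have hj : ρ j ∈ (Finset.Iic i).image ρ :=
          hsub (Finset.mem_image_of_mem ρ (Finset.mem_Iic.mpr (le_refl j)))
        obtain ⟨a, ha, hav⟩ := Finset.mem_image.mp hj
        have : a = j := ρ.injective hav
        subst this
        exact absurd (Finset.mem_Iic.mp ha) (not_le.mpr hij)⟩

lemma mem_chainOf {ρ : Equiv.Perm (Fin (n+1))} {j : Fin (n+1)} {v : Fin (n+1)} :
    v ∈ (chainOf ρ).1 j ↔ ρ.symm v ≤ j := by
  constructor
  · rintro h
    obtain ⟨a, ha, rfl⟩ := Finset.mem_image.mp h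
    rw [Equiv.symm_apply_apply]
    exact Finset.mem_Iic.mp ha
  · intro h
    have : v = ρ (ρ.symm v) := (Equiv.apply_symm_apply ρ v).symm
    rw [this]
    exact Finset.mem_image_of_mem ρ (Finset.mem_Iic.mpr h)

lemma card_chainOf (ρ : Equiv.Perm (Fin (n+1))) (j : Fin (n+1)) :
    ((chainOf ρ).1 j).card = (j:ℕ) + 1 := by
  show ((Finset.Iic j).image ρ).card = (j:ℕ) + 1
  rw [Finset.card_image_of_injective _ ρ.injective, Fin.card_Iic]

/-- `Tvec` packaged as a point of the standard simplex. -/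
noncomputable def TvecS (s : Dl n) (ρ : Equiv.Perm (Fin (n+1))) (hc : IsChart s.1 ρ) : Dl n :=
  ⟨Tvec s.1 ρ, ⟨fun j => Tvec_nonneg s.2.1 hc j, Tvec_sum s ρ⟩⟩

/-- Reconstruction: the point of the simplex with flag coordinates `Tvec` is `s` itself. -/
lemma sdPoint_chainOf (s : Dl n) (ρ : Equiv.Perm (Fin (n+1))) (hc : IsChart s.1 ρ) :
    sdPoint (chainOf ρ) (TvecS s ρ hc) = s := by
  apply Subtype.ext
  funext v
  show ∑ j, Tvec s.1 ρ j * (if v ∈ (chainOf ρ).1 j then (((chainOf ρ).1 j).card : ℝ)⁻¹ else 0)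
      = s.1 v
  have hterm : ∀ j : Fin (n+1),
      Tvec s.1 ρ j * (if v ∈ (chainOf ρ).1 j then (((chainOf ρ).1 j).card : ℝ)⁻¹ else 0)
        = if ((ρ.symm v : ℕ)) ≤ (j:ℕ) then wseq s.1 ρ j - wseq s.1 ρ (j+1) else 0 := by
    intro j
    rw [card_chainOf]
    by_cases h : v ∈ (chainOf ρ).1 j
    · rw [if_pos h, if_pos]
      · unfold Tvec
        have : ((j:ℕ):ℝ) + 1 ≠ 0 := by positivity
        field_simp
        push_cast; ring
      · exact_mod_cast (mem_chainOf.mp h)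
    · rw [if_neg h, if_neg, mul_zero]
      intro hle
      exact h (mem_chainOf.mpr (by exact_mod_cast hle))
  rw [Finset.sum_congr rfl (fun j _ => hterm j)]
  have hconv : ∑ j : Fin (n+1), (if ((ρ.symm v : ℕ)) ≤ (j:ℕ) then wseq s.1 ρ (j:ℕ) - wseq s.1 ρ ((j:ℕ)+1) else 0)
      = ∑ j ∈ Finset.range (n+1), (if ((ρ.symm v : ℕ)) ≤ j then wseq s.1 ρ j - wseq s.1 ρ (j+1) else 0) :=
    Fin.sum_univ_eq_sum_range (fun j => if ((ρ.symm v : ℕ)) ≤ j then wseq s.1 ρ j - wseq s.1 ρ (j+1) else 0) (n+1)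
  rw [hconv, tele_sum _ _ _ (ρ.symm v).isLt, wseq_top s.1 ρ (le_refl (n+1)), wseq_fin, sub_zero,
    Equiv.apply_symm_apply]

/-- Superlevel description of the flag sets, on the support of `Tvec`. -/
lemma chainOf_superlevel {s : Dl n} {ρ : Equiv.Perm (Fin (n+1))} (hc : IsChart s.1 ρ)
    {j : Fin (n+1)} (hj : wseq s.1 ρ (j+1) < wseq s.1 ρ (j:ℕ)) :
    (chainOf ρ).1 j = Finset.univ.filter (fun v => wseq s.1 ρ (j:ℕ) ≤ s.1 v) := by
  apply Finset.ext
  intro v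
  rw [mem_chainOf, Finset.mem_filter]
  constructor
  · intro h
    refine ⟨Finset.mem_univ v, ?_⟩
    have h2 : wseq s.1 ρ ((ρ.symm v : ℕ)) = s.1 v := by
      rw [wseq_fin, Equiv.apply_symm_apply]
    rw [← h2]
    exact wseq_anti s.2.1 hc (by exact_mod_cast h)
  · rintro ⟨-, h⟩
    by_contra hgt
    push_neg at hgt
    have h3 : ((j:ℕ)+1) ≤ ((ρ.symm v : ℕ)) := by exact_mod_cast hgt
    have h4 : wseq s.1 ρ ((ρ.symm v : ℕ)) ≤ wseq s.1 ρ ((j:ℕ)+1) := wseq_anti s.2.1 hc h3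
    have h5 : wseq s.1 ρ ((ρ.symm v : ℕ)) = s.1 v := by
      rw [wseq_fin, Equiv.apply_symm_apply]
    linarith

lemma max'_congr {α : Type*} [LinearOrder α] {A B : Finset α} (h : A = B)
    (hA : A.Nonempty) (hB : B.Nonempty) : A.max' hA = B.max' hB := by
  subst h; rfl

lemma max'_image_mono {α β : Type*} [LinearOrder α] [LinearOrder β] [DecidableEq β] {φ : α → β}
    (hφ : Monotone φ) (A : Finset α) (hA : A.Nonempty) (hB : (A.image φ).Nonempty) :
    (A.image φ).max' hB = φ (A.max' hA) := by
  apply le_antisymm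
  · apply Finset.max'_le
    intro y hy
    obtain ⟨a, ha, rfl⟩ := Finset.mem_image.mp hy
    exact hφ (Finset.le_max' _ _ ha)
  · exact Finset.le_max' _ _ (Finset.mem_image_of_mem φ (Finset.max'_mem _ hA))

/-- The running-maximum map is chart independent on the support of `Tvec`. -/
lemma maxMap_chart_eq {s : Dl n} {ρ ρ' : Equiv.Perm (Fin (n+1))}
    (hc : IsChart s.1 ρ) (hc' : IsChart s.1 ρ') {j : Fin (n+1)}
    (hj : Tvec s.1 ρ j ≠ 0) :
    maxMap (chainOf ρ) j = maxMap (chainOf ρ') j := by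
  have hw : wseq s.1 ρ (j+1) < wseq s.1 ρ (j:ℕ) := by
    rcases lt_or_eq_of_le (wseq_anti s.2.1 hc (Nat.le_succ (j:ℕ))) with h | h
    · exact h
    · exfalso; apply hj; unfold Tvec; rw [h]; ring
  have hw' : wseq s.1 ρ' (j+1) < wseq s.1 ρ' (j:ℕ) := by
    rw [← wseq_chart_eq hc hc']; exact hw
  have hset : (chainOf ρ).1 j = (chainOf ρ').1 j := by
    rw [chainOf_superlevel hc hw, chainOf_superlevel hc' hw', wseq_chart_eq hc hc']
  show ((chainOf ρ).1 j).max' ((chainOf ρ).2.1 j) = ((chainOf ρ').1 j).max' ((chainOf ρ').2.1 j)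
  exact max'_congr hset ((chainOf ρ).2.1 j) ((chainOf ρ').2.1 j)

end Chain
end PT
namespace PT
section Slots

variable {n : ℕ}

/-- running maximum map of the flag of `ρ`. -/
noncomputable def urm (ρ : Equiv.Perm (Fin (n+1))) : Fin (n+1) →o Fin (n+1) :=
  maxMap (chainOf ρ)

lemma keyhelp {B v v' r r' : ℕ} (hr : r < B) (hr' : r' < B) :
    v*B + r < v'*B + r' ↔ (v < v' ∨ (v = v' ∧ r < r')) := by
  constructor
  · intro h
    rcases lt_trichotomy v v' with hv | hv | hv
    · exact Or.inl hv
    · exact Or.inr ⟨hv, by subst hv; omega⟩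
    · exfalso
      have h2 : v' * B + B ≤ v * B := by
        calc v' * B + B = (v'+1) * B := by ring
        _ ≤ v * B := Nat.mul_le_mul_right B hv
      omega
  · rintro (hv | ⟨rfl, hr2⟩)
    · have h2 : v * B + B ≤ v' * B := by
        calc v * B + B = (v+1) * B := by ring
        _ ≤ v' * B := Nat.mul_le_mul_right B hv
      omega
    · omega

lemma keydiv {B v r : ℕ} (hr : r < B) : (v*B + r) / B = v := by
  rw [mul_comm, Nat.mul_add_div (by omega), Nat.div_eq_of_lt hr, add_zero]

lemma keymod {B v r : ℕ} (hr : r < B) : (v*B + r) % B = r := by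
  rw [mul_comm, Nat.mul_add_mod, Nat.mod_eq_of_lt hr]

noncomputable def keyL (ρ : Equiv.Perm (Fin (n+1))) (j : Fin (n+1)) : ℕ :=
  (urm ρ j : ℕ) * (2*n+2) + (j : ℕ)

def keyR (n : ℕ) (i : Fin (n+1)) : ℕ := (i:ℕ) * (2*n+2) + ((n+1) + (i:ℕ))

lemma keyL_mod (ρ) (j : Fin (n+1)) : keyL ρ j % (2*n+2) = (j:ℕ) :=
  keymod (by omega)

lemma keyL_div (ρ) (j : Fin (n+1)) : keyL ρ j / (2*n+2) = (urm ρ j : ℕ) :=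
  keydiv (by omega)

lemma keyR_mod (i : Fin (n+1)) : keyR n i % (2*n+2) = (n+1) + (i:ℕ) :=
  keymod (by omega)

lemma keyR_div (i : Fin (n+1)) : keyR n i / (2*n+2) = (i:ℕ) :=
  keydiv (by omega)

lemma keyL_injective (ρ) : Function.Injective (keyL (n := n) ρ) := by
  intro a b h
  have := congrArg (· % (2*n+2)) h
  simp only [keyL_mod] at this
  exact Fin.ext this

lemma keyR_injective : Function.Injective (keyR n) := by
  intro a b h
  have := congrArg (· % (2*n+2)) h
  simp only [keyR_mod] at this
  exact Fin.ext (by omega)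

lemma keyL_ne_keyR (ρ) (j i : Fin (n+1)) : keyL ρ j ≠ keyR n i := by
  intro h
  have := congrArg (· % (2*n+2)) h
  simp only [keyL_mod, keyR_mod] at this
  omega

noncomputable def Sm (ρ : Equiv.Perm (Fin (n+1))) : Finset ℕ :=
  (Finset.univ.image (keyL ρ)) ∪ (Finset.univ.image (keyR n))

lemma keyL_mem_Sm (ρ) (j : Fin (n+1)) : keyL ρ j ∈ Sm ρ :=
  Finset.mem_union_left _ (Finset.mem_image_of_mem _ (Finset.mem_univ j))

lemma keyR_mem_Sm (ρ : Equiv.Perm (Fin (n+1))) (i : Fin (n+1)) : keyR n i ∈ Sm ρ :=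
  Finset.mem_union_right _ (Finset.mem_image_of_mem _ (Finset.mem_univ i))

lemma mem_Sm_iff {ρ} {m : ℕ} : m ∈ Sm (n := n) ρ ↔ (∃ j, m = keyL ρ j) ∨ (∃ i, m = keyR n i) := by
  unfold Sm
  rw [Finset.mem_union, Finset.mem_image, Finset.mem_image]
  constructor
  · rintro (⟨j, -, rfl⟩ | ⟨i, -, rfl⟩)
    · exact Or.inl ⟨j, rfl⟩
    · exact Or.inr ⟨i, rfl⟩
  · rintro (⟨j, rfl⟩ | ⟨i, rfl⟩)
    · exact Or.inl ⟨j, Finset.mem_univ j, rfl⟩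
    · exact Or.inr ⟨i, Finset.mem_univ i, rfl⟩

lemma card_Sm (ρ : Equiv.Perm (Fin (n+1))) : (Sm ρ).card = 2*n+1+1 := by
  unfold Sm
  rw [Finset.card_union_of_disjoint, Finset.card_image_of_injective _ (keyL_injective ρ),
    Finset.card_image_of_injective _ keyR_injective]
  · simp only [Finset.card_univ, Fintype.card_fin]; omega
  · rw [Finset.disjoint_left]
    rintro m hm hm'
    obtain ⟨j, -, rfl⟩ := Finset.mem_image.mp hm
    obtain ⟨i, -, hh⟩ := Finset.mem_image.mp hm'
    exact keyL_ne_keyR ρ j i hh.symm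

noncomputable def eM (ρ : Equiv.Perm (Fin (n+1))) : Fin (2*n+1+1) ≃o ↥(Sm ρ) :=
  (Sm ρ).orderIsoOfFin (card_Sm ρ)

noncomputable def aSlot (ρ : Equiv.Perm (Fin (n+1))) (j : Fin (n+1)) : Fin (2*n+1+1) :=
  (eM ρ).symm ⟨keyL ρ j, keyL_mem_Sm ρ j⟩

noncomputable def bSlot (ρ : Equiv.Perm (Fin (n+1))) (i : Fin (n+1)) : Fin (2*n+1+1) :=
  (eM ρ).symm ⟨keyR n i, keyR_mem_Sm ρ i⟩

lemma eM_aSlot (ρ) (j : Fin (n+1)) : ((eM ρ (aSlot ρ j)) : ℕ) = keyL ρ j := by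
  unfold aSlot
  rw [OrderIso.apply_symm_apply]

lemma eM_bSlot (ρ) (i : Fin (n+1)) : ((eM ρ (bSlot ρ i)) : ℕ) = keyR n i := by
  unfold bSlot
  rw [OrderIso.apply_symm_apply]

lemma slot_cases (ρ) (k : Fin (2*n+1+1)) : (∃ j, k = aSlot ρ j) ∨ (∃ i, k = bSlot ρ i) := by
  have hm := (eM ρ k).2
  rw [mem_Sm_iff] at hm
  rcases hm with ⟨j, hj⟩ | ⟨i, hi⟩
  · refine Or.inl ⟨j, ?_⟩
    unfold aSlot
    rw [← (eM ρ).symm_apply_apply k]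
    congr 1
    exact Subtype.ext hj
  · refine Or.inr ⟨i, ?_⟩
    unfold bSlot
    rw [← (eM ρ).symm_apply_apply k]
    congr 1
    exact Subtype.ext hi

lemma slot_lt_iff (ρ) {k k' : Fin (2*n+1+1)} :
    k < k' ↔ ((eM ρ k : ℕ) < (eM ρ k' : ℕ)) := by
  constructor
  · intro h
    exact Subtype.coe_lt_coe.mpr ((eM ρ).strictMono h)
  · intro h
    exact (eM ρ).lt_iff_lt.mp (Subtype.coe_lt_coe.mp h)

lemma aSlot_lt_aSlot_iff (ρ) {j j' : Fin (n+1)} : aSlot ρ j < aSlot ρ j' ↔ j < j' := by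
  rw [slot_lt_iff ρ, eM_aSlot, eM_aSlot]
  unfold keyL
  rw [keyhelp (by omega) (by omega)]
  constructor
  · rintro (h | ⟨-, h⟩)
    · by_contra hc
      push_neg at hc
      have := (urm ρ).monotone hc
      have : (urm ρ j' : ℕ) ≤ (urm ρ j : ℕ) := this
      omega
    · exact_mod_cast h
  · intro h
    rcases lt_or_eq_of_le ((urm ρ).monotone h.le) with hu | hu
    · exact Or.inl (by exact_mod_cast hu)
    · exact Or.inr ⟨congrArg Fin.val hu, by exact_mod_cast h⟩

lemma bSlot_lt_bSlot_iff (ρ) {i i' : Fin (n+1)} : bSlot ρ i < bSlot ρ i' ↔ i < i' := by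
  rw [slot_lt_iff ρ, eM_bSlot, eM_bSlot]
  unfold keyR
  rw [keyhelp (by omega) (by omega)]
  constructor
  · rintro (h | ⟨-, h⟩)
    · exact_mod_cast h
    · exact_mod_cast (by omega : (i:ℕ) < (i':ℕ))
  · intro h
    exact Or.inl (by exact_mod_cast h)

lemma aSlot_lt_bSlot_iff (ρ) {j i : Fin (n+1)} : aSlot ρ j < bSlot ρ i ↔ urm ρ j ≤ i := by
  rw [slot_lt_iff ρ, eM_aSlot, eM_bSlot]
  unfold keyL keyR
  rw [keyhelp (by omega) (by omega)]
  constructor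
  · rintro (h | ⟨h, -⟩)
    · exact le_of_lt (by exact_mod_cast h)
    · exact le_of_eq (Fin.ext h)
  · intro h
    rcases lt_or_eq_of_le h with hu | hu
    · exact Or.inl (by exact_mod_cast hu)
    · exact Or.inr ⟨congrArg Fin.val hu, by have := j.isLt; omega⟩

lemma bSlot_lt_aSlot_iff (ρ) {j i : Fin (n+1)} : bSlot ρ i < aSlot ρ j ↔ i < urm ρ j := by
  rw [slot_lt_iff ρ, eM_aSlot, eM_bSlot]
  unfold keyL keyR
  rw [keyhelp (by omega) (by omega)]
  constructor
  · rintro (h | ⟨h, hh⟩)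
    · exact (by exact_mod_cast h)
    · omega
  · intro h
    exact Or.inl (by exact_mod_cast h)

lemma aSlot_injective (ρ) : Function.Injective (aSlot (n := n) ρ) := by
  intro a b h
  have := congrArg (fun k => ((eM ρ k : ℕ))) h
  simp only [eM_aSlot] at this
  exact keyL_injective ρ this

lemma bSlot_injective (ρ) : Function.Injective (bSlot (n := n) ρ) := by
  intro a b h
  have := congrArg (fun k => ((eM ρ k : ℕ))) h
  simp only [eM_bSlot] at this
  exact keyR_injective this

lemma aSlot_ne_bSlot (ρ) (j i : Fin (n+1)) : aSlot ρ j ≠ bSlot ρ i := by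
  intro h
  have := congrArg (fun k => ((eM ρ k : ℕ))) h
  simp only [eM_aSlot, eM_bSlot] at this
  exact keyL_ne_keyR ρ j i this

/-- The merged monotone map `W`. -/
noncomputable def Wmap (ρ : Equiv.Perm (Fin (n+1))) : Fin (2*n+1+1) →o Fin (n+1) where
  toFun k := ⟨(eM ρ k : ℕ) / (2*n+2), by
    have hm := (eM ρ k).2
    rw [mem_Sm_iff] at hm
    rcases hm with ⟨j, hj⟩ | ⟨i, hi⟩
    · rw [hj, keyL_div]
      exact (urm ρ j).isLt
    · rw [hi, keyR_div]
      exact i.isLt⟩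
  monotone' k k' hk := by
    simp only [Fin.mk_le_mk]
    exact Nat.div_le_div_right (by
      have : (eM ρ k : ℕ) ≤ (eM ρ k' : ℕ) := Subtype.coe_le_coe.mpr ((eM ρ).monotone hk)
      exact this)

lemma Wmap_aSlot (ρ) (j : Fin (n+1)) : Wmap ρ (aSlot ρ j) = urm ρ j := by
  apply Fin.ext
  show ((eM ρ (aSlot ρ j)) : ℕ) / (2*n+2) = _
  rw [eM_aSlot, keyL_div]

lemma Wmap_bSlot (ρ) (i : Fin (n+1)) : Wmap ρ (bSlot ρ i) = i := by
  apply Fin.ext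
  show ((eM ρ (bSlot ρ i)) : ℕ) / (2*n+2) = _
  rw [eM_bSlot, keyR_div]

end Slots
end PT
namespace PT
section Vec

variable {n : ℕ}

lemma mod_bound {ρ : Equiv.Perm (Fin (n+1))} (k : Fin (2*n+1+1))
    (h : ¬ ((eM ρ k : ℕ) % (2*n+2)) < n+1) : (eM ρ k : ℕ) % (2*n+2) - (n+1) < n+1 := by
  have h2 : ((eM ρ k : ℕ)) % (2*n+2) < 2*n+2 := Nat.mod_lt _ (by omega)
  omega

/-- The interpolation vector on the merged simplex. -/
noncomputable def vecm (ρ : Equiv.Perm (Fin (n+1))) (s : Fin (n+1) → ℝ) (θ : ℝ) :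
    Fin (2*n+1+1) → ℝ :=
  fun k =>
    if h : ((eM ρ k : ℕ) % (2*n+2)) < n+1
    then (1-θ) * Tvec s ρ ⟨(eM ρ k : ℕ) % (2*n+2), h⟩
    else θ * s ⟨(eM ρ k : ℕ) % (2*n+2) - (n+1), mod_bound k h⟩

lemma vecm_aSlot (ρ) (s : Fin (n+1) → ℝ) (θ : ℝ) (j : Fin (n+1)) :
    vecm ρ s θ (aSlot ρ j) = (1-θ) * Tvec s ρ j := by
  unfold vecm
  have h1 : ((eM ρ (aSlot ρ j) : ℕ)) % (2*n+2) = (j:ℕ) := by rw [eM_aSlot, keyL_mod]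
  simp only [h1]
  rw [dif_pos j.isLt]

lemma vecm_bSlot (ρ) (s : Fin (n+1) → ℝ) (θ : ℝ) (i : Fin (n+1)) :
    vecm ρ s θ (bSlot ρ i) = θ * s i := by
  unfold vecm
  have h1 : ((eM ρ (bSlot ρ i) : ℕ)) % (2*n+2) = (n+1) + (i:ℕ) := by rw [eM_bSlot, keyR_mod]
  simp only [h1]
  rw [dif_neg (by omega)]
  congr 1
  exact congrArg s (Fin.ext (show (n+1) + (i:ℕ) - (n+1) = (i:ℕ) by omega))

/-- slots as a sum type -/
noncomputable def slotEquiv (ρ : Equiv.Perm (Fin (n+1))) :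
    (Fin (n+1) ⊕ Fin (n+1)) ≃ Fin (2*n+1+1) :=
  Equiv.ofBijective (Sum.elim (aSlot ρ) (bSlot ρ)) (by
    constructor
    · rintro (a | a) (b | b) h
      · exact congrArg Sum.inl (aSlot_injective ρ h)
      · exact absurd h (aSlot_ne_bSlot ρ a b)
      · exact absurd h.symm (aSlot_ne_bSlot ρ b a)
      · exact congrArg Sum.inr (bSlot_injective ρ h)
    · intro k
      rcases slot_cases ρ k with ⟨j, rfl⟩ | ⟨i, rfl⟩
      · exact ⟨Sum.inl j, rfl⟩
      · exact ⟨Sum.inr i, rfl⟩)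

lemma vecm_sum (ρ) (s : Dl n) (θ : ℝ) : ∑ k, vecm ρ s.1 θ k = 1 := by
  rw [← Equiv.sum_comp (slotEquiv ρ) (vecm ρ s.1 θ), Fintype.sum_sum_type]
  have h1 : ∀ j, vecm ρ s.1 θ ((slotEquiv ρ) (Sum.inl j)) = (1-θ) * Tvec s.1 ρ j :=
    fun j => vecm_aSlot ρ s.1 θ j
  have h2 : ∀ i, vecm ρ s.1 θ ((slotEquiv ρ) (Sum.inr i)) = θ * s.1 i :=
    fun i => vecm_bSlot ρ s.1 θ i
  rw [Finset.sum_congr rfl (fun j _ => h1 j), Finset.sum_congr rfl (fun i _ => h2 i),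
    ← Finset.mul_sum, ← Finset.mul_sum, Tvec_sum s ρ, s.2.2]
  ring

lemma vecm_nonneg {ρ} {s : Dl n} (hc : IsChart s.1 ρ) {θ : ℝ} (h0 : 0 ≤ θ) (h1 : θ ≤ 1)
    (k : Fin (2*n+1+1)) : 0 ≤ vecm ρ s.1 θ k := by
  unfold vecm
  split
  · exact mul_nonneg (by linarith) (Tvec_nonneg s.2.1 hc _)
  · exact mul_nonneg h0 (s.2.1 _)

/-- The interpolation vector as a point of the standard simplex. -/
noncomputable def vecmS (ρ) (s : Dl n) (hc : IsChart s.1 ρ) (θ : ℝ) (h0 : 0 ≤ θ) (h1 : θ ≤ 1) :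
    Dl (2*n+1) :=
  ⟨vecm ρ s.1 θ, ⟨fun k => vecm_nonneg hc h0 h1 k, vecm_sum ρ s θ⟩⟩

variable (X : SimpSpace)

/-- The main interpolation point in the fat realization. -/
noncomputable def Phi (ρ) (x : X.X n) (s : Dl n) (hc : IsChart s.1 ρ) (θ : ℝ)
    (h0 : 0 ≤ θ) (h1 : θ ≤ 1) : FatReal X :=
  mkpt X (X.map (Wmap ρ) x) (vecmS ρ s hc θ h0 h1)

lemma Phi_zero (ρ) (x : X.X n) (s : Dl n) (hc : IsChart s.1 ρ) :
    Phi X ρ x s hc 0 (le_refl 0) zero_le_one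
      = mkpt X (X.map (urm ρ) x) (TvecS s ρ hc) := by
  unfold Phi
  have hsm : StrictMono (aSlot ρ) := fun a b hab => (aSlot_lt_aSlot_iff ρ).mpr hab
  have hsupp : ∀ k, (vecmS ρ s hc 0 (le_refl 0) zero_le_one).1 k ≠ 0 → ∃ j, aSlot ρ j = k := by
    intro k hk
    rcases slot_cases ρ k with ⟨j, rfl⟩ | ⟨i, rfl⟩
    · exact ⟨j, rfl⟩
    · exfalso
      apply hk
      show vecm ρ s.1 0 _ = 0
      rw [vecm_bSlot]; ring
  rw [reduce X (Wmap ρ) x _ (aSlot ρ) hsm hsupp]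
  have hW : (Wmap ρ).comp ⟨aSlot ρ, hsm.monotone⟩ = urm ρ := by
    apply OrderHom.ext; funext j
    exact Wmap_aSlot ρ j
  have hv : cvec (vecmS ρ s hc 0 (le_refl 0) zero_le_one) (aSlot ρ) hsm hsupp = TvecS s ρ hc := by
    apply Subtype.ext; funext j
    show vecm ρ s.1 0 (aSlot ρ j) = Tvec s.1 ρ j
    rw [vecm_aSlot]; ring
  rw [hW, hv]

lemma Phi_one (ρ) (x : X.X n) (s : Dl n) (hc : IsChart s.1 ρ) :
    Phi X ρ x s hc 1 zero_le_one (le_refl 1) = mkpt X x s := by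
  unfold Phi
  have hsm : StrictMono (bSlot ρ) := fun a b hab => (bSlot_lt_bSlot_iff ρ).mpr hab
  have hsupp : ∀ k, (vecmS ρ s hc 1 zero_le_one (le_refl 1)).1 k ≠ 0 → ∃ i, bSlot ρ i = k := by
    intro k hk
    rcases slot_cases ρ k with ⟨j, rfl⟩ | ⟨i, rfl⟩
    · exfalso
      apply hk
      show vecm ρ s.1 1 _ = 0
      rw [vecm_aSlot]; ring
    · exact ⟨i, rfl⟩
  rw [reduce X (Wmap ρ) x _ (bSlot ρ) hsm hsupp]
  have hW : (Wmap ρ).comp ⟨bSlot ρ, hsm.monotone⟩ = OrderHom.id := by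
    apply OrderHom.ext; funext i
    exact Wmap_bSlot ρ i
  have hv : cvec (vecmS ρ s hc 1 zero_le_one (le_refl 1)) (bSlot ρ) hsm hsupp = s := by
    apply Subtype.ext; funext i
    show vecm ρ s.1 1 (bSlot ρ i) = s.1 i
    rw [vecm_bSlot]; ring
  rw [hW, hv, X.map_id]

end Vec
end PT
namespace PT
section Wall

variable {n : ℕ}

noncomputable def wallF (ρ ρ' : Equiv.Perm (Fin (n+1))) : Fin (2*n+1+1) → Fin (2*n+1+1) :=
  fun k =>
    if h : ((eM ρ k : ℕ) % (2*n+2)) < n+1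
    then aSlot ρ' ⟨(eM ρ k : ℕ) % (2*n+2), h⟩
    else bSlot ρ' ⟨(eM ρ k : ℕ) % (2*n+2) - (n+1), mod_bound k h⟩

lemma wallF_aSlot (ρ ρ') (j : Fin (n+1)) : wallF ρ ρ' (aSlot ρ j) = aSlot ρ' j := by
  unfold wallF
  have h1 : ((eM ρ (aSlot ρ j) : ℕ)) % (2*n+2) = (j:ℕ) := by rw [eM_aSlot, keyL_mod]
  simp only [h1]
  rw [dif_pos j.isLt]

lemma wallF_bSlot (ρ ρ') (i : Fin (n+1)) : wallF ρ ρ' (bSlot ρ i) = bSlot ρ' i := by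
  unfold wallF
  have h1 : ((eM ρ (bSlot ρ i) : ℕ)) % (2*n+2) = (n+1) + (i:ℕ) := by rw [eM_bSlot, keyR_mod]
  simp only [h1]
  rw [dif_neg (by omega)]
  congr 1
  exact Fin.ext (show (n+1) + (i:ℕ) - (n+1) = (i:ℕ) by omega)

lemma urm_chart_eq {s : Dl n} {ρ ρ' : Equiv.Perm (Fin (n+1))}
    (hc : IsChart s.1 ρ) (hc' : IsChart s.1 ρ') {j : Fin (n+1)}
    (hj : Tvec s.1 ρ j ≠ 0) : urm ρ j = urm ρ' j :=
  maxMap_chart_eq hc hc' hj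

lemma vecm_wall_eq {s : Dl n} {ρ ρ'} (hc : IsChart s.1 ρ) (hc' : IsChart s.1 ρ') (θ : ℝ) :
    ∀ k, vecm ρ' s.1 θ (wallF ρ ρ' k) = vecm ρ s.1 θ k := by
  intro k
  rcases slot_cases ρ k with ⟨j, rfl⟩ | ⟨i, rfl⟩
  · rw [wallF_aSlot, vecm_aSlot, vecm_aSlot, Tvec_chart_eq hc' hc]
  · rw [wallF_bSlot, vecm_bSlot, vecm_bSlot]

noncomputable def suppF (ρ : Equiv.Perm (Fin (n+1))) (s : Fin (n+1) → ℝ) (θ : ℝ) :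
    Finset (Fin (2*n+1+1)) :=
  Finset.univ.filter (fun k => vecm ρ s θ k ≠ 0)

lemma mem_suppF {ρ} {s : Fin (n+1) → ℝ} {θ : ℝ} {k} :
    k ∈ suppF ρ s θ ↔ vecm ρ s θ k ≠ 0 := by
  unfold suppF
  rw [Finset.mem_filter]
  exact ⟨fun h => h.2, fun h => ⟨Finset.mem_univ k, h⟩⟩

lemma Tvec_ne_of_aSlot_mem {ρ} {s : Fin (n+1) → ℝ} {θ : ℝ} {j}
    (hk : aSlot ρ j ∈ suppF ρ s θ) : Tvec s ρ j ≠ 0 := by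
  have := mem_suppF.mp hk
  rw [vecm_aSlot] at this
  exact right_ne_zero_of_mul this

variable (X : SimpSpace)

lemma Phi_wall (ρ ρ') (x : X.X n) (s : Dl n) (hc : IsChart s.1 ρ) (hc' : IsChart s.1 ρ')
    (θ : ℝ) (h0 : 0 ≤ θ) (h1 : θ ≤ 1) :
    Phi X ρ x s hc θ h0 h1 = Phi X ρ' x s hc' θ h0 h1 := by
  unfold Phi
  have hmemg : ∀ k : ↥(suppF ρ s.1 θ), wallF ρ ρ' k.1 ∈ suppF ρ' s.1 θ := by
    intro k
    rw [mem_suppF, vecm_wall_eq hc hc' θ]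
    exact mem_suppF.mp k.2
  set g : ↥(suppF ρ s.1 θ) → ↥(suppF ρ' s.1 θ) := fun k => ⟨wallF ρ ρ' k.1, hmemg k⟩ with hgdef
  have hgsm : StrictMono g := by
    rintro ⟨k, hk⟩ ⟨k', hk'⟩ hlt
    have hlt2 : k < k' := Subtype.mk_lt_mk.mp hlt
    rw [hgdef]
    apply Subtype.mk_lt_mk.mpr
    rcases slot_cases ρ k with ⟨j, rfl⟩ | ⟨i, rfl⟩ <;>
      rcases slot_cases ρ k' with ⟨j', rfl⟩ | ⟨i', rfl⟩
    · rw [wallF_aSlot, wallF_aSlot, aSlot_lt_aSlot_iff]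
      exact (aSlot_lt_aSlot_iff ρ).mp hlt2
    · rw [wallF_aSlot, wallF_bSlot, aSlot_lt_bSlot_iff]
      rw [← urm_chart_eq hc hc' (Tvec_ne_of_aSlot_mem hk)]
      exact (aSlot_lt_bSlot_iff ρ).mp hlt2
    · rw [wallF_bSlot, wallF_aSlot, bSlot_lt_aSlot_iff]
      rw [← urm_chart_eq hc hc' (Tvec_ne_of_aSlot_mem hk')]
      exact (bSlot_lt_aSlot_iff ρ).mp hlt2
    · rw [wallF_bSlot, wallF_bSlot, bSlot_lt_bSlot_iff]
      exact (bSlot_lt_bSlot_iff ρ).mp hlt2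
  have hgsurj : Function.Surjective g := by
    rintro ⟨k', hk'⟩
    rcases slot_cases ρ' k' with ⟨j, rfl⟩ | ⟨i, rfl⟩
    · have hT' : Tvec s.1 ρ' j ≠ 0 := Tvec_ne_of_aSlot_mem hk'
      have hT : Tvec s.1 ρ j ≠ 0 := by rw [Tvec_chart_eq hc hc']; exact hT'
      refine ⟨⟨aSlot ρ j, ?_⟩, ?_⟩
      · rw [mem_suppF, vecm_aSlot, Tvec_chart_eq hc hc']
        have := mem_suppF.mp hk'
        rwa [vecm_aSlot] at this
      · exact Subtype.ext (wallF_aSlot ρ ρ' j)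
    · refine ⟨⟨bSlot ρ i, ?_⟩, ?_⟩
      · rw [mem_suppF, vecm_bSlot]
        have := mem_suppF.mp hk'
        rwa [vecm_bSlot] at this
      · exact Subtype.ext (wallF_bSlot ρ ρ' i)
  refine matched_eq X (Wmap ρ) (Wmap ρ') x _ _ (suppF ρ s.1 θ) (suppF ρ' s.1 θ)
    (fun k hk => mem_suppF.mpr hk) (fun k hk => mem_suppF.mpr hk)
    (StrictMono.orderIsoOfSurjective g hgsm hgsurj) ?_ ?_
  · rintro ⟨k, hk⟩
    show Wmap ρ k = Wmap ρ' (wallF ρ ρ' k)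
    rcases slot_cases ρ k with ⟨j, rfl⟩ | ⟨i, rfl⟩
    · rw [wallF_aSlot, Wmap_aSlot, Wmap_aSlot]
      exact urm_chart_eq hc hc' (Tvec_ne_of_aSlot_mem hk)
    · rw [wallF_bSlot, Wmap_bSlot, Wmap_bSlot]
  · rintro ⟨k, hk⟩
    show vecm ρ s.1 θ k = vecm ρ' s.1 θ (wallF ρ ρ' k)
    exact (vecm_wall_eq hc hc' θ k).symm

end Wall
end PT
namespace PT
section Push

variable {m n : ℕ}

lemma push_apply {φ : Fin (m+1) → Fin (n+1)} (hφ : StrictMono φ) {s₀ : Dl m} {s : Dl n}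
    (hpush : ∀ i, s.1 i = ∑ j, if φ j = i then s₀.1 j else 0) (i : Fin (m+1)) :
    s.1 (φ i) = s₀.1 i := by
  rw [hpush]
  rw [Finset.sum_eq_single i]
  · rw [if_pos rfl]
  · intro j _ hj
    exact if_neg (fun hh => hj (hφ.injective hh))
  · intro h; exact absurd (Finset.mem_univ i) h

lemma push_zero {φ : Fin (m+1) → Fin (n+1)} {s₀ : Dl m} {s : Dl n}
    (hpush : ∀ i, s.1 i = ∑ j, if φ j = i then s₀.1 j else 0)
    {v : Fin (n+1)} (hv : ∀ j, φ j ≠ v) : s.1 v = 0 := by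
  rw [hpush, Finset.sum_eq_zero]
  intro j _
  exact if_neg (hv j)

lemma le_of_strictMono {φ : Fin (m+1) → Fin (n+1)} (hφ : StrictMono φ) : m ≤ n := by
  have := Fintype.card_le_of_injective φ hφ.injective
  simpa using this

/-- complement of the image of `φ`. -/
def complC (φ : Fin (m+1) → Fin (n+1)) : Finset (Fin (n+1)) :=
  Finset.univ \ Finset.univ.image φ

lemma card_complC {φ : Fin (m+1) → Fin (n+1)} (hφ : StrictMono φ) : (complC φ).card = n - m := by
  unfold complC
  rw [Finset.card_sdiff_of_subset (Finset.subset_univ _),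
    Finset.card_image_of_injective _ hφ.injective]
  simp

lemma complC_not_image {φ : Fin (m+1) → Fin (n+1)} {v : Fin (n+1)} (hv : v ∈ complC φ) :
    ∀ j, φ j ≠ v := by
  intro j hj
  unfold complC at hv
  rw [Finset.mem_sdiff] at hv
  exact hv.2 (hj ▸ Finset.mem_image_of_mem φ (Finset.mem_univ j))

/-- Extension of a chart of `s₀` to (the index set of) the pushforward along `φ`. -/
noncomputable def extFun {φ : Fin (m+1) → Fin (n+1)} (hφ : StrictMono φ)
    (ρm : Equiv.Perm (Fin (m+1))) : Fin (n+1) → Fin (n+1) := fun j =>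
  if h : (j:ℕ) < m+1 then φ (ρm ⟨(j:ℕ), h⟩)
  else (complC φ).orderEmbOfFin (card_complC hφ)
    ⟨(j:ℕ) - (m+1), by have h2 := j.isLt; omega⟩

lemma extFun_lo {φ : Fin (m+1) → Fin (n+1)} (hφ : StrictMono φ) (ρm) {j : Fin (n+1)}
    (h : (j:ℕ) < m+1) : extFun hφ ρm j = φ (ρm ⟨(j:ℕ), h⟩) := by
  unfold extFun
  rw [dif_pos h]

lemma extFun_hi {φ : Fin (m+1) → Fin (n+1)} (hφ : StrictMono φ) (ρm) {j : Fin (n+1)}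
    (h : ¬ (j:ℕ) < m+1) : ∀ i, φ i ≠ extFun hφ ρm j := by
  have hmem : extFun hφ ρm j ∈ complC φ := by
    unfold extFun
    rw [dif_neg h]
    exact Finset.orderEmbOfFin_mem _ _ _
  exact complC_not_image hmem

lemma extFun_injective {φ : Fin (m+1) → Fin (n+1)} (hφ : StrictMono φ) (ρm) :
    Function.Injective (extFun hφ ρm) := by
  intro a b hab
  by_cases ha : (a:ℕ) < m+1 <;> by_cases hb : (b:ℕ) < m+1
  · rw [extFun_lo hφ ρm ha, extFun_lo hφ ρm hb] at hab
    have h4 := ρm.injective (hφ.injective hab)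
    exact Fin.ext (Fin.mk.inj h4)
  · rw [extFun_lo hφ ρm ha] at hab
    exact absurd hab (extFun_hi hφ ρm hb _)
  · rw [extFun_lo hφ ρm hb] at hab
    exact absurd hab.symm (extFun_hi hφ ρm ha _)
  · unfold extFun at hab
    rw [dif_neg ha, dif_neg hb] at hab
    have h2 := (Finset.orderEmbOfFin (complC φ) (card_complC hφ)).injective hab
    have h3 : (a:ℕ) - (m+1) = (b:ℕ) - (m+1) := congrArg Fin.val h2
    exact Fin.ext (by omega)

noncomputable def extendPerm {φ : Fin (m+1) → Fin (n+1)} (hφ : StrictMono φ)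
    (ρm : Equiv.Perm (Fin (m+1))) : Equiv.Perm (Fin (n+1)) :=
  Equiv.ofBijective (extFun hφ ρm)
    ((Finite.injective_iff_bijective).mp (extFun_injective hφ ρm))

lemma extendPerm_apply {φ : Fin (m+1) → Fin (n+1)} (hφ : StrictMono φ) (ρm) (j : Fin (n+1)) :
    extendPerm hφ ρm j = extFun hφ ρm j := rfl

lemma isChart_extendPerm {φ : Fin (m+1) → Fin (n+1)} (hφ : StrictMono φ) {s₀ : Dl m} {s : Dl n}
    (hpush : ∀ i, s.1 i = ∑ j, if φ j = i then s₀.1 j else 0)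
    {ρm : Equiv.Perm (Fin (m+1))} (hcm : IsChart s₀.1 ρm) :
    IsChart s.1 (extendPerm hφ ρm) := by
  intro i j hij
  rw [extendPerm_apply, extendPerm_apply]
  by_cases hj : (j:ℕ) < m+1
  · have hi : (i:ℕ) < m+1 := by
      have h2 : (i:ℕ) ≤ (j:ℕ) := hij
      omega
    rw [extFun_lo hφ ρm hj, extFun_lo hφ ρm hi,
      push_apply hφ hpush, push_apply hφ hpush]
    exact hcm _ _ (by exact_mod_cast (hij : (i:ℕ) ≤ (j:ℕ)))
  · rw [push_zero hpush (extFun_hi hφ ρm hj)]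
    by_cases hi : (i:ℕ) < m+1
    · rw [extFun_lo hφ ρm hi, push_apply hφ hpush]
      exact s₀.2.1 _
    · rw [push_zero hpush (extFun_hi hφ ρm hi)]

lemma wseq_extendPerm {φ : Fin (m+1) → Fin (n+1)} (hφ : StrictMono φ) {s₀ : Dl m} {s : Dl n}
    (hpush : ∀ i, s.1 i = ∑ j, if φ j = i then s₀.1 j else 0)
    (ρm : Equiv.Perm (Fin (m+1))) :
    wseq s.1 (extendPerm hφ ρm) = wseq s₀.1 ρm := by
  funext j
  unfold wseq
  by_cases hj : j < n+1
  · rw [dif_pos hj]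
    rw [extendPerm_apply]
    by_cases hjm : j < m+1
    · rw [dif_pos hjm, extFun_lo hφ ρm (by exact_mod_cast hjm)]
      exact push_apply hφ hpush _
    · rw [dif_neg hjm]
      exact push_zero hpush (extFun_hi hφ ρm (by exact_mod_cast hjm))
  · rw [dif_neg hj, dif_neg (by have := le_of_strictMono hφ; omega : ¬ j < m+1)]

/-- Key padding fact: sorted values of a pushforward agree with those of the original. -/
lemma wseq_push {φ : Fin (m+1) → Fin (n+1)} (hφ : StrictMono φ) {s₀ : Dl m} {s : Dl n}
    (hpush : ∀ i, s.1 i = ∑ j, if φ j = i then s₀.1 j else 0)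
    {ρm : Equiv.Perm (Fin (m+1))} {ρn : Equiv.Perm (Fin (n+1))}
    (hcm : IsChart s₀.1 ρm) (hcn : IsChart s.1 ρn) :
    wseq s.1 ρn = wseq s₀.1 ρm := by
  rw [wseq_chart_eq hcn (isChart_extendPerm hφ hpush hcm), wseq_extendPerm hφ hpush]

lemma Tvec_push_lo {φ : Fin (m+1) → Fin (n+1)} (hφ : StrictMono φ) {s₀ : Dl m} {s : Dl n}
    (hpush : ∀ i, s.1 i = ∑ j, if φ j = i then s₀.1 j else 0)
    {ρm} {ρn} (hcm : IsChart s₀.1 ρm) (hcn : IsChart s.1 ρn) (j : Fin (m+1)) :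
    Tvec s.1 ρn (Fin.castLE (by have := le_of_strictMono hφ; omega : m+1 ≤ n+1) j)
      = Tvec s₀.1 ρm j := by
  unfold Tvec
  rw [wseq_push hφ hpush hcm hcn]
  norm_num [Fin.coe_castLE]

lemma Tvec_push_hi {φ : Fin (m+1) → Fin (n+1)} (hφ : StrictMono φ) {s₀ : Dl m} {s : Dl n}
    (hpush : ∀ i, s.1 i = ∑ j, if φ j = i then s₀.1 j else 0)
    {ρm} {ρn} (hcm : IsChart s₀.1 ρm) (hcn : IsChart s.1 ρn) (j : Fin (n+1))
    (hj : m < (j:ℕ)) : Tvec s.1 ρn j = 0 := by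
  unfold Tvec
  rw [wseq_push hφ hpush hcm hcn, wseq_top s₀.1 ρm (by omega),
    wseq_top s₀.1 ρm (by omega)]
  ring

lemma Tvec_ne_wlt {k : ℕ} {t : Dl k} {ρ : Equiv.Perm (Fin (k+1))} (hc : IsChart t.1 ρ)
    {j : Fin (k+1)} (hT : Tvec t.1 ρ j ≠ 0) :
    wseq t.1 ρ ((j:ℕ)+1) < wseq t.1 ρ (j:ℕ) := by
  rcases lt_or_eq_of_le (wseq_anti t.2.1 hc (Nat.le_succ (j:ℕ))) with h | h
  · exact h
  · exfalso; apply hT; unfold Tvec; rw [h]; ring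

/-- Key compatibility: the running maxima intertwine along `φ` on the support. -/
lemma urm_push {φ : Fin (m+1) → Fin (n+1)} (hφ : StrictMono φ) {s₀ : Dl m} {s : Dl n}
    (hpush : ∀ i, s.1 i = ∑ j, if φ j = i then s₀.1 j else 0)
    {ρm} {ρn} (hcm : IsChart s₀.1 ρm) (hcn : IsChart s.1 ρn) (j : Fin (m+1))
    (hT : Tvec s₀.1 ρm j ≠ 0) :
    urm ρn (Fin.castLE (by have := le_of_strictMono hφ; omega : m+1 ≤ n+1) j)
      = φ (urm ρm j) := by
  set cj : Fin (n+1) := Fin.castLE (by have := le_of_strictMono hφ; omega : m+1 ≤ n+1) j with hcj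
  have hcoe : (cj:ℕ) = (j:ℕ) := rfl
  have hw := wseq_push hφ hpush hcm hcn
  have hwm : wseq s₀.1 ρm ((j:ℕ)+1) < wseq s₀.1 ρm (j:ℕ) := Tvec_ne_wlt hcm hT
  have hwn : wseq s.1 ρn ((cj:ℕ)+1) < wseq s.1 ρn (cj:ℕ) := by
    rw [hcoe, hw]; exact hwm
  have hwpos : 0 < wseq s₀.1 ρm (j:ℕ) :=
    lt_of_le_of_lt (wseq_nonneg s₀.2.1 ρm _) hwm
  have h1 : (chainOf ρn).1 cj
      = Finset.univ.filter (fun v => wseq s.1 ρn (cj:ℕ) ≤ s.1 v) :=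
    chainOf_superlevel hcn hwn
  have h3 : (chainOf ρm).1 j
      = Finset.univ.filter (fun v => wseq s₀.1 ρm (j:ℕ) ≤ s₀.1 v) :=
    chainOf_superlevel hcm hwm
  have h2 : Finset.univ.filter (fun v => wseq s.1 ρn (cj:ℕ) ≤ s.1 v)
      = (Finset.univ.filter (fun v => wseq s₀.1 ρm (j:ℕ) ≤ s₀.1 v)).image φ := by
    apply Finset.ext
    intro v
    rw [Finset.mem_filter, Finset.mem_image]
    constructor
    · rintro ⟨-, hv⟩
      have hv' : wseq s₀.1 ρm (j:ℕ) ≤ s.1 v := by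
        rwa [hcoe, hw] at hv
      have hvpos : 0 < s.1 v := lt_of_lt_of_le hwpos hv'
      have hex : ∃ i, φ i = v := by
        by_contra hcon
        push_neg at hcon
        rw [push_zero hpush hcon] at hvpos
        exact lt_irrefl 0 hvpos
      obtain ⟨i, rfl⟩ := hex
      refine ⟨i, Finset.mem_filter.mpr ⟨Finset.mem_univ i, ?_⟩, rfl⟩
      rwa [push_apply hφ hpush] at hv'
    · rintro ⟨i, hi, rfl⟩
      obtain ⟨-, hi2⟩ := Finset.mem_filter.mp hi
      refine ⟨Finset.mem_univ _, ?_⟩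
      rw [hcoe, hw, push_apply hφ hpush]
      exact hi2
  have hne3 : (Finset.univ.filter (fun v => wseq s₀.1 ρm (j:ℕ) ≤ s₀.1 v)).Nonempty :=
    h3 ▸ (chainOf ρm).2.1 j
  have hne2 : ((Finset.univ.filter (fun v => wseq s₀.1 ρm (j:ℕ) ≤ s₀.1 v)).image φ).Nonempty :=
    hne3.image φ
  show ((chainOf ρn).1 cj).max' ((chainOf ρn).2.1 cj) = φ (((chainOf ρm).1 j).max' ((chainOf ρm).2.1 j))
  rw [max'_congr (h1.trans h2) ((chainOf ρn).2.1 cj) hne2,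
    max'_image_mono hφ.monotone _ hne3 hne2]
  congr 1
  exact (max'_congr h3 ((chainOf ρm).2.1 j) hne3).symm

end Push
end PT
namespace PT
section Sound

variable {m n : ℕ}

noncomputable def soundF {φ : Fin (m+1) → Fin (n+1)} (hφ : StrictMono φ)
    (ρm : Equiv.Perm (Fin (m+1))) (ρn : Equiv.Perm (Fin (n+1))) :
    Fin (2*m+1+1) → Fin (2*n+1+1) := fun k =>
  if h : ((eM ρm k : ℕ) % (2*m+2)) < m+1
  then aSlot ρn (Fin.castLE (by have := le_of_strictMono hφ; omega : m+1 ≤ n+1)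
    ⟨(eM ρm k : ℕ) % (2*m+2), h⟩)
  else bSlot ρn (φ ⟨(eM ρm k : ℕ) % (2*m+2) - (m+1), mod_bound k h⟩)

lemma soundF_aSlot {φ : Fin (m+1) → Fin (n+1)} (hφ : StrictMono φ) (ρm) (ρn) (j : Fin (m+1)) :
    soundF hφ ρm ρn (aSlot ρm j)
      = aSlot ρn (Fin.castLE (by have := le_of_strictMono hφ; omega : m+1 ≤ n+1) j) := by
  unfold soundF
  have h1 : ((eM ρm (aSlot ρm j) : ℕ)) % (2*m+2) = (j:ℕ) := by rw [eM_aSlot, keyL_mod]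
  simp only [h1]
  rw [dif_pos j.isLt]

lemma soundF_bSlot {φ : Fin (m+1) → Fin (n+1)} (hφ : StrictMono φ) (ρm) (ρn) (i : Fin (m+1)) :
    soundF hφ ρm ρn (bSlot ρm i) = bSlot ρn (φ i) := by
  unfold soundF
  have h1 : ((eM ρm (bSlot ρm i) : ℕ)) % (2*m+2) = (m+1) + (i:ℕ) := by rw [eM_bSlot, keyR_mod]
  simp only [h1]
  rw [dif_neg (by omega)]
  congr 1
  exact congrArg φ (Fin.ext (show (m+1) + (i:ℕ) - (m+1) = (i:ℕ) by omega))

lemma vecm_sound_eq {φ : Fin (m+1) → Fin (n+1)} (hφ : StrictMono φ) {s₀ : Dl m} {s : Dl n}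
    (hpush : ∀ i, s.1 i = ∑ j, if φ j = i then s₀.1 j else 0)
    {ρm} {ρn} (hcm : IsChart s₀.1 ρm) (hcn : IsChart s.1 ρn) (θ : ℝ) :
    ∀ k, vecm ρn s.1 θ (soundF hφ ρm ρn k) = vecm ρm s₀.1 θ k := by
  intro k
  rcases slot_cases ρm k with ⟨j, rfl⟩ | ⟨i, rfl⟩
  · rw [soundF_aSlot, vecm_aSlot, vecm_aSlot, Tvec_push_lo hφ hpush hcm hcn]
  · rw [soundF_bSlot, vecm_bSlot, vecm_bSlot, push_apply hφ hpush]

lemma Phi_sound (X : SimpSpace) (φ : Fin (m+1) → Fin (n+1)) (hφ : StrictMono φ) (x : X.X n)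
    (s₀ : Dl m) (s : Dl n)
    (hpush : ∀ i, s.1 i = ∑ j, if φ j = i then s₀.1 j else 0)
    (θ : ℝ) (h0 : 0 ≤ θ) (h1 : θ ≤ 1)
    {ρm} {ρn} (hcm : IsChart s₀.1 ρm) (hcn : IsChart s.1 ρn) :
    Phi X ρm (X.map ⟨φ, hφ.monotone⟩ x) s₀ hcm θ h0 h1 = Phi X ρn x s hcn θ h0 h1 := by
  unfold Phi
  have hmap : X.map (Wmap ρm) (X.map ⟨φ, hφ.monotone⟩ x)
      = X.map ((⟨φ, hφ.monotone⟩ : Fin (m+1) →o Fin (n+1)).comp (Wmap ρm)) x :=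
    X.map_comp _ _ _
  rw [hmap]
  have hmemg : ∀ k : ↥(suppF ρm s₀.1 θ), soundF hφ ρm ρn k.1 ∈ suppF ρn s.1 θ := by
    intro k
    rw [mem_suppF, vecm_sound_eq hφ hpush hcm hcn θ]
    exact mem_suppF.mp k.2
  set g : ↥(suppF ρm s₀.1 θ) → ↥(suppF ρn s.1 θ) :=
    fun k => ⟨soundF hφ ρm ρn k.1, hmemg k⟩ with hgdef
  have hcast : ∀ {a b : Fin (m+1)},
      (Fin.castLE (by have := le_of_strictMono hφ; omega : m+1 ≤ n+1) a <
        Fin.castLE (by have := le_of_strictMono hφ; omega : m+1 ≤ n+1) b) ↔ a < b := by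
    intro a b
    rw [Fin.lt_def, Fin.lt_def]
    simp [Fin.coe_castLE]
  have hgsm : StrictMono g := by
    rintro ⟨k, hk⟩ ⟨k', hk'⟩ hlt
    have hlt2 : k < k' := Subtype.mk_lt_mk.mp hlt
    rw [hgdef]
    apply Subtype.mk_lt_mk.mpr
    rcases slot_cases ρm k with ⟨j, rfl⟩ | ⟨i, rfl⟩ <;>
      rcases slot_cases ρm k' with ⟨j', rfl⟩ | ⟨i', rfl⟩
    · rw [soundF_aSlot, soundF_aSlot, aSlot_lt_aSlot_iff, hcast]
      exact (aSlot_lt_aSlot_iff ρm).mp hlt2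
    · rw [soundF_aSlot, soundF_bSlot, aSlot_lt_bSlot_iff,
        urm_push hφ hpush hcm hcn j (Tvec_ne_of_aSlot_mem hk), hφ.le_iff_le]
      exact (aSlot_lt_bSlot_iff ρm).mp hlt2
    · rw [soundF_bSlot, soundF_aSlot, bSlot_lt_aSlot_iff,
        urm_push hφ hpush hcm hcn j' (Tvec_ne_of_aSlot_mem hk'), hφ.lt_iff_lt]
      exact (bSlot_lt_aSlot_iff ρm).mp hlt2
    · rw [soundF_bSlot, soundF_bSlot, bSlot_lt_bSlot_iff, hφ.lt_iff_lt]
      exact (bSlot_lt_bSlot_iff ρm).mp hlt2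
  have hgsurj : Function.Surjective g := by
    rintro ⟨k', hk'⟩
    rcases slot_cases ρn k' with ⟨j', rfl⟩ | ⟨v, rfl⟩
    · have hT' : Tvec s.1 ρn j' ≠ 0 := Tvec_ne_of_aSlot_mem hk'
      have hj'm : (j':ℕ) < m+1 := by
        by_contra hcon
        exact hT' (Tvec_push_hi hφ hpush hcm hcn j' (by omega))
      set j : Fin (m+1) := ⟨(j':ℕ), hj'm⟩ with hjdef
      have hjc : Fin.castLE (by have := le_of_strictMono hφ; omega : m+1 ≤ n+1) j = j' :=
        Fin.ext rfl
      have hTm : Tvec s₀.1 ρm j ≠ 0 := by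
        rw [← Tvec_push_lo hφ hpush hcm hcn j, hjc]
        exact hT'
      refine ⟨⟨aSlot ρm j, ?_⟩, ?_⟩
      · rw [mem_suppF, vecm_aSlot]
        have h5 := mem_suppF.mp hk'
        rw [vecm_aSlot, ← hjc, Tvec_push_lo hφ hpush hcm hcn j] at h5
        exact h5
      · apply Subtype.ext
        show soundF hφ ρm ρn (aSlot ρm j) = aSlot ρn j'
        rw [soundF_aSlot, hjc]
    · have hs' := mem_suppF.mp hk'
      rw [vecm_bSlot] at hs'
      have hsv : s.1 v ≠ 0 := right_ne_zero_of_mul hs'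
      have hex : ∃ i, φ i = v := by
        by_contra hcon
        push_neg at hcon
        exact hsv (push_zero hpush hcon)
      obtain ⟨i, rfl⟩ := hex
      refine ⟨⟨bSlot ρm i, ?_⟩, ?_⟩
      · rw [mem_suppF, vecm_bSlot]
        rw [push_apply hφ hpush] at hs'
        exact hs'
      · apply Subtype.ext
        show soundF hφ ρm ρn (bSlot ρm i) = bSlot ρn (φ i)
        exact soundF_bSlot hφ ρm ρn i
  refine matched_eq X _ (Wmap ρn) x _ _ (suppF ρm s₀.1 θ) (suppF ρn s.1 θ)
    (fun k hk => mem_suppF.mpr hk) (fun k hk => mem_suppF.mpr hk)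
    (StrictMono.orderIsoOfSurjective g hgsm hgsurj) ?_ ?_
  · rintro ⟨k, hk⟩
    show ((⟨φ, hφ.monotone⟩ : Fin (m+1) →o Fin (n+1)).comp (Wmap ρm)) k
      = Wmap ρn (soundF hφ ρm ρn k)
    rcases slot_cases ρm k with ⟨j, rfl⟩ | ⟨i, rfl⟩
    · show φ (Wmap ρm (aSlot ρm j)) = _
      rw [Wmap_aSlot, soundF_aSlot, Wmap_aSlot,
        urm_push hφ hpush hcm hcn j (Tvec_ne_of_aSlot_mem hk)]
    · show φ (Wmap ρm (bSlot ρm i)) = _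
      rw [Wmap_bSlot, soundF_bSlot, Wmap_bSlot]
  · rintro ⟨k, hk⟩
    show vecm ρm s₀.1 θ k = vecm ρn s.1 θ (soundF hφ ρm ρn k)
    exact (vecm_sound_eq hφ hpush hcm hcn θ k).symm

end Sound
end PT
namespace PT
section Cont

variable (X : SimpSpace) (n : ℕ)

/-- The homotopy, upstairs, at level `n`. -/
noncomputable def Gfun : (X.X n × Dl n) × unitInterval → FatReal X :=
  fun p => Phi X (chartOf p.1.2.1) p.1.1 p.1.2 (isChart_chartOf p.1.2.1) p.2.1 p.2.2.1 p.2.2.2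

lemma Gfun_eq_Phi (x : X.X n) (s : Dl n) (ρ) (hc : IsChart s.1 ρ) (θ : unitInterval) :
    Gfun X n ((x, s), θ) = Phi X ρ x s hc θ.1 θ.2.1 θ.2.2 :=
  Phi_wall X (chartOf s.1) ρ x s (isChart_chartOf s.1) hc θ.1 θ.2.1 θ.2.2

def Cset (ρ : Equiv.Perm (Fin (n+1))) : Set ((X.X n × Dl n) × unitInterval) :=
  {p | IsChart p.1.2.1 ρ}

lemma isClosed_Cset (ρ) : IsClosed (Cset X n ρ) := by
  have hrepr : Cset X n ρ
      = ⋂ (i : Fin (n+1)) (j : Fin (n+1)) (_ : i ≤ j),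
        {p : (X.X n × Dl n) × unitInterval | p.1.2.1 (ρ j) ≤ p.1.2.1 (ρ i)} := by
    ext p
    simp only [Cset, Set.mem_setOf_eq, Set.mem_iInter, IsChart]
  rw [hrepr]
  refine isClosed_iInter fun i => isClosed_iInter fun j => isClosed_iInter fun _ => ?_
  have hev : ∀ v : Fin (n+1),
      Continuous (fun p : (X.X n × Dl n) × unitInterval => p.1.2.1 v) := by
    intro v
    exact (continuous_apply v).comp
      (continuous_subtype_val.comp (continuous_snd.comp continuous_fst))
  exact isClosed_le (hev (ρ j)) (hev (ρ i))

lemma cont_wseq (ρ) (j : ℕ) : Continuous (fun s : Dl n => wseq s.1 ρ j) := by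
  unfold wseq
  split
  · exact (continuous_apply _).comp continuous_subtype_val
  · exact continuous_const

lemma cont_Tvec (ρ) (j : Fin (n+1)) : Continuous (fun s : Dl n => Tvec s.1 ρ j) := by
  unfold Tvec
  exact continuous_const.mul ((cont_wseq n ρ _).sub (cont_wseq n ρ _))

/-- `Phi` restricted to the chart domain of `ρ`. -/
noncomputable def PhiRestr (ρ : Equiv.Perm (Fin (n+1))) : ↥(Cset X n ρ) → FatReal X :=
  fun q => Phi X ρ q.1.1.1 q.1.1.2 q.2 q.1.2.1 q.1.2.2.1 q.1.2.2.2

lemma cont_PhiRestr (ρ) : Continuous (PhiRestr X n ρ) := by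
  have conts : Continuous (fun q : ↥(Cset X n ρ) => q.1.1.2) :=
    continuous_snd.comp (continuous_fst.comp continuous_subtype_val)
  have contθ : Continuous (fun q : ↥(Cset X n ρ) => (q.1.2.1 : ℝ)) :=
    continuous_subtype_val.comp (continuous_snd.comp continuous_subtype_val)
  unfold PhiRestr Phi mkpt
  apply continuous_quot_mk.comp
  apply (continuous_sigmaMk (ι := ℕ)
    (σ := fun k => X.X k × ↥(stdSimplex ℝ (Fin (k + 1))))).comp
  apply Continuous.prodMk
  · exact (X.continuous_map (Wmap ρ)).comp
      (continuous_fst.comp (continuous_fst.comp continuous_subtype_val))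
  · apply Continuous.subtype_mk
    apply continuous_pi
    intro k
    show Continuous fun q : ↥(Cset X n ρ) => vecm ρ (q.1.1.2 : Fin (n+1) → ℝ) q.1.2.1 k
    by_cases hcnd : ((eM ρ k : ℕ) % (2*n+2)) < n+1
    · unfold vecm
      simp only [dif_pos hcnd]
      exact (continuous_const.sub contθ).mul ((cont_Tvec n ρ _).comp conts)
    · unfold vecm
      simp only [dif_neg hcnd]
      exact contθ.mul (((continuous_apply _).comp continuous_subtype_val).comp conts)

lemma cont_Gfun : Continuous (Gfun X n) := by
  rw [continuous_iff_isClosed]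
  intro F hF
  have hset : Gfun X n ⁻¹' F
      = ⋃ ρ : Equiv.Perm (Fin (n+1)), (Subtype.val '' (PhiRestr X n ρ ⁻¹' F)) := by
    ext p
    simp only [Set.mem_preimage, Set.mem_iUnion, Set.mem_image]
    constructor
    · intro hp
      refine ⟨chartOf p.1.2.1, ⟨p, isChart_chartOf _⟩, ?_, rfl⟩
      show Phi X (chartOf p.1.2.1) p.1.1 p.1.2 _ p.2.1 p.2.2.1 p.2.2.2 ∈ F
      exact hp
    · rintro ⟨ρ, q, hq, rfl⟩
      show Gfun X n ((q.1.1.1, q.1.1.2), q.1.2) ∈ F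
      rw [Gfun_eq_Phi X n q.1.1.1 q.1.1.2 ρ q.2]
      exact hq
  rw [hset]
  exact isClosed_iUnion_of_finite fun ρ =>
    ((isClosed_Cset X n ρ).isClosedEmbedding_subtypeVal.isClosedMap _
      (hF.preimage (cont_PhiRestr X n ρ)))

/-- The homotopy upstairs, curried. -/
noncomputable def Htot : FatTotal X → C(unitInterval, FatReal X) :=
  fun a => (ContinuousMap.curry ⟨Gfun X a.1, cont_Gfun X a.1⟩) a.2

lemma cont_Htot : Continuous (Htot X) := by
  apply continuous_sigma
  intro n
  show Continuous fun p : X.X n × Dl n =>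
    (ContinuousMap.curry ⟨Gfun X n, cont_Gfun X n⟩) p
  exact (ContinuousMap.curry ⟨Gfun X n, cont_Gfun X n⟩).continuous

lemma Htot_apply (n : ℕ) (x : X.X n) (s : Dl n) (θ : unitInterval) :
    Htot X ⟨n, x, s⟩ θ = Gfun X n ((x, s), θ) := rfl

lemma Htot_sound : ∀ a b, fatRel X a b → Htot X a = Htot X b := by
  rintro a b ⟨m, n, φ, hφ, x, t, t', ht, rfl, rfl⟩
  apply ContinuousMap.ext
  intro θ
  rw [Htot_apply, Htot_apply]
  show Phi X (chartOf t.1) (X.map ⟨φ, hφ.monotone⟩ x) t (isChart_chartOf t.1) θ.1 θ.2.1 θ.2.2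
    = Phi X (chartOf t'.1) x t' (isChart_chartOf t'.1) θ.1 θ.2.1 θ.2.2
  exact Phi_sound X φ hφ x t t' ht θ.1 θ.2.1 θ.2.2 (isChart_chartOf t.1) (isChart_chartOf t'.1)

/-- The homotopy as a map out of the fat realization. -/
noncomputable def Hlift : FatReal X → C(unitInterval, FatReal X) :=
  Quot.lift (Htot X) (Htot_sound X)

lemma cont_Hlift : Continuous (Hlift X) :=
  continuous_quot_lift _ (cont_Htot X)

noncomputable def Hmap : C(FatReal X × unitInterval, FatReal X) :=
  ContinuousMap.uncurry ⟨Hlift X, cont_Hlift X⟩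

lemma Hmap_mk (n : ℕ) (x : X.X n) (s : Dl n) (θ : unitInterval) :
    Hmap X (Quot.mk (fatRel X) ⟨n, x, s⟩, θ) = Gfun X n ((x, s), θ) := rfl

end Cont
end PT


/-- for the subdivision map
`τ : ||X|| → ||X × S||, (x, A₀ ⊂ ... ⊂ A_k, t) ↦ (u*x, |A₀| < ... < |A_k|, t)`
(`u(j) = max A_j`) and the canonical projection `π : ||X × S|| → ||X||`, the
composite `π ∘ τ` is homotopic to the identity of `||X||`. -/
theorem pi_comp_tau_homotopic_id (X : SimpSpace) (τ : C(FatReal X, FatSReal X))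
    (hτ : ∀ (n k : ℕ) (x : X.X n) (A : SdChain n k) (t : stdSimplex ℝ (Fin (k + 1))),
      τ (Quot.mk (fatRel X) ⟨n, x, sdPoint A t⟩) =
        Quot.mk (fatSRel X) ⟨k, (X.map (maxMap A) x, cardSeq A), t⟩) :
    Nonempty (ContinuousMap.Homotopy ((piFat X).comp τ) (ContinuousMap.id (FatReal X))) := by
  refine ⟨⟨(PT.Hmap X).comp ⟨Prod.swap, continuous_swap⟩, ?_, ?_⟩⟩
  · intro p
    induction p using Quot.ind with
    | _ a =>
      obtain ⟨n, x, s⟩ := a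
      have hc := PT.isChart_chartOf (n := n) s.1
      show PT.Phi X (PT.chartOf s.1) x s hc 0 (le_refl 0) zero_le_one = _
      rw [PT.Phi_zero]
      have hrw : Quot.mk (fatRel X) (⟨n, x, s⟩ : FatTotal X)
          = Quot.mk (fatRel X) ⟨n, x, sdPoint (PT.chainOf (PT.chartOf s.1))
              (PT.TvecS s (PT.chartOf s.1) hc)⟩ := by
        rw [PT.sdPoint_chainOf s (PT.chartOf s.1) hc]
      show _ = piFat X (τ (Quot.mk (fatRel X) (⟨n, x, s⟩ : FatTotal X)))
      rw [hrw, hτ n n x (PT.chainOf (PT.chartOf s.1))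
        (PT.TvecS s (PT.chartOf s.1) hc)]
      rfl
  · intro p
    induction p using Quot.ind with
    | _ a =>
      obtain ⟨n, x, s⟩ := a
      have hc := PT.isChart_chartOf (n := n) s.1
      show PT.Phi X (PT.chartOf s.1) x s hc 1 zero_le_one (le_refl 1) = _
      rw [PT.Phi_one]
      rfl
end
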